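/- arXiv:2405.10770 — 13 statements merged into one kernel-verified Lean document; each statement's English description precedes it below -/
import Mathlib

section
/- Let H be a complex Hilbert space and let T_1 ≥ T_2 ≥ ⋯ be a decreasing sequence of positive linear contractions on H such that T_n T_m = T_m T_n for all n, m ∈ ℕ. Let T be the strong operator limit of (T_n) and P the orthogonal projection onto {ξ ∈ H : Tξ = ξ}. Then S_n ξ → P ξ in norm for every ξ ∈ H, where S_n := T_n T_{n-1} ⋯ T_1. -/
open Filter Topology ContinuousLinearMap
open scoped InnerProductSpace ComplexOrder

/-- `prodSeq T σ n = T (σ n) ∘ ⋯ ∘ T (σ 0)`. -/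
noncomputable def prodSeq {H : Type*} [NormedAddCommGroup H] [InnerProductSpace ℂ H]
    (T : ℕ → H →L[ℂ] H) (σ : ℕ → ℕ) : ℕ → H →L[ℂ] H
  | 0 => T (σ 0)
  | (n + 1) => (T (σ (n + 1))).comp (prodSeq T σ n)

namespace PaszAux

variable {H : Type*} [NormedAddCommGroup H] [InnerProductSpace ℂ H] [CompleteSpace H]

noncomputable def iterSub (A : H →L[ℂ] H) : ℕ → H →L[ℂ] H
  | 0 => A
  | n + 1 => iterSub A n - iterSub A n * iterSub A n

lemma iterSub_selfAdjoint {A : H →L[ℂ] H} (hA : IsSelfAdjoint A) (n : ℕ) :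
    IsSelfAdjoint (iterSub A n) := by
  induction n with
  | zero => exact hA
  | succ n ih =>
    have h2 : IsSelfAdjoint (iterSub A n * iterSub A n) := by
      rw [isSelfAdjoint_iff, star_mul, ih.star_eq]
    exact ih.sub h2

lemma iterSub_commute {A B : H →L[ℂ] H} (h : Commute B A) (n : ℕ) :
    Commute B (iterSub A n) := by
  induction n with
  | zero => exact h
  | succ n ih => exact ih.sub_right (ih.mul_right ih)

lemma iterSub_bounds {A : H →L[ℂ] H} (hA : IsSelfAdjoint A)
    (hlb : ∀ x : H, 0 ≤ RCLike.re ⟪A x, x⟫_ℂ) (hub : ∀ x : H, RCLike.re ⟪A x, x⟫_ℂ ≤ ‖x‖ ^ 2)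
    (n : ℕ) :
    ∀ x : H, 0 ≤ RCLike.re ⟪iterSub A n x, x⟫_ℂ ∧ RCLike.re ⟪iterSub A n x, x⟫_ℂ ≤ ‖x‖ ^ 2 := by
  induction n with
  | zero => exact fun x => ⟨hlb x, hub x⟩
  | succ n ih =>
    intro x
    set X := iterSub A n with hX
    have hsym : ∀ u v : H, ⟪X u, v⟫_ℂ = ⟪u, X v⟫_ℂ :=
      fun u v => (isSelfAdjoint_iff_isSymmetric.mp (iterSub_selfAdjoint hA n)) u v
    set y := X x with hy
    set z := x - y with hz
    have happ : iterSub A (n+1) x = X x - X y := by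
      show (X - X * X) x = X x - X y
      simp [ContinuousLinearMap.sub_apply, ContinuousLinearMap.mul_apply, hy]
    -- key identity
    have e1 : ⟪X y, x⟫_ℂ = ⟪y, y⟫_ℂ := by rw [hsym y x]
    have e2 : ⟪X z, z⟫_ℂ = ⟪X x, x⟫_ℂ - ⟪y, y⟫_ℂ - ⟪y, y⟫_ℂ + ⟪X y, y⟫_ℂ := by
      have exy : ⟪X x, y⟫_ℂ = ⟪y, y⟫_ℂ := by rw [hy]
      rw [hz]
      simp only [map_sub, inner_sub_left, inner_sub_right, e1, exy]
      ring
    have key : RCLike.re ⟪iterSub A (n+1) x, x⟫_ℂ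
        = RCLike.re ⟪X z, z⟫_ℂ + (RCLike.re ⟪y, y⟫_ℂ - RCLike.re ⟪X y, y⟫_ℂ) := by
      rw [happ, inner_sub_left, e1, map_sub, e2]
      simp only [map_sub, map_add]
      ring
    constructor
    · rw [key]
      have h1 := (ih z).1
      have h2 := (ih y).2
      have h3 : RCLike.re ⟪y, y⟫_ℂ = ‖y‖ ^ 2 := inner_self_eq_norm_sq y
      linarith
    · have hyy : RCLike.re ⟪X y, x⟫_ℂ = ‖y‖ ^ 2 := by
        rw [e1]; exact inner_self_eq_norm_sq y
      have : RCLike.re ⟪iterSub A (n+1) x, x⟫_ℂ = RCLike.re ⟪X x, x⟫_ℂ - ‖y‖ ^ 2 := by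
        rw [happ, inner_sub_left, map_sub, hyy]
      rw [this]
      have h2 := (ih x).2
      have := sq_nonneg ‖y‖
      linarith

lemma iterSub_partial {A : H →L[ℂ] H} (n : ℕ) :
    A = (∑ k ∈ Finset.range n, iterSub A k * iterSub A k) + iterSub A n := by
  induction n with
  | zero => simp [iterSub]
  | succ n ih =>
    rw [Finset.sum_range_succ]
    show A = _ + (iterSub A n - iterSub A n * iterSub A n)
    conv_lhs => rw [ih]
    abel

lemma iterSub_tendsto_zero {A : H →L[ℂ] H} (hA : IsSelfAdjoint A)
    (hlb : ∀ x : H, 0 ≤ RCLike.re ⟪A x, x⟫_ℂ) (hub : ∀ x : H, RCLike.re ⟪A x, x⟫_ℂ ≤ ‖x‖ ^ 2)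
    (x : H) : Tendsto (fun n => iterSub A n x) atTop (𝓝 0) := by
  have hsq : ∀ k, RCLike.re ⟪(iterSub A k * iterSub A k) x, x⟫_ℂ = ‖iterSub A k x‖ ^ 2 := by
    intro k
    have hsym : ∀ u v : H, ⟪iterSub A k u, v⟫_ℂ = ⟪u, iterSub A k v⟫_ℂ :=
      fun u v => (isSelfAdjoint_iff_isSymmetric.mp (iterSub_selfAdjoint hA k)) u v
    rw [ContinuousLinearMap.mul_apply, hsym (iterSub A k x) x]
    exact inner_self_eq_norm_sq _
  have hsum : ∀ n, ∑ k ∈ Finset.range n, ‖iterSub A k x‖ ^ 2 ≤ RCLike.re ⟪A x, x⟫_ℂ := by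
    intro n
    have := congrArg (fun B : H →L[ℂ] H => RCLike.re ⟪B x, x⟫_ℂ) (iterSub_partial (A := A) n)
    simp only [ContinuousLinearMap.add_apply, ContinuousLinearMap.sum_apply, inner_add_left,
      sum_inner, map_add, map_sum] at this
    rw [show (∑ k ∈ Finset.range n, RCLike.re ⟪(iterSub A k * iterSub A k) x, x⟫_ℂ)
        = ∑ k ∈ Finset.range n, ‖iterSub A k x‖ ^ 2 from Finset.sum_congr rfl fun k _ => hsq k]
        at this
    have hnn := (iterSub_bounds hA hlb hub n x).1
    linarith [this]
  have hsummable : Summable (fun k => ‖iterSub A k x‖ ^ 2) :=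
    summable_of_sum_range_le (fun k => sq_nonneg _) hsum
  have h0 : Tendsto (fun k => ‖iterSub A k x‖ ^ 2) atTop (𝓝 0) := hsummable.tendsto_atTop_zero
  rw [tendsto_zero_iff_norm_tendsto_zero]
  have : Tendsto (fun k => Real.sqrt (‖iterSub A k x‖ ^ 2)) atTop (𝓝 (Real.sqrt 0)) :=
    (Real.continuous_sqrt.tendsto 0).comp h0
  simpa [Real.sqrt_sq (norm_nonneg _)] using this


lemma isPositive_mul_of_commute {A B : H →L[ℂ] H} (hA : A.IsPositive) (hB : B.IsPositive)
    (hub : ∀ x : H, RCLike.re ⟪A x, x⟫_ℂ ≤ ‖x‖ ^ 2) (hc : Commute A B) :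
    (A * B).IsPositive := by
  have hAsa : IsSelfAdjoint A := hA.isSelfAdjoint
  have hBsa : IsSelfAdjoint B := hB.isSelfAdjoint
  refine isPositive_def'.mpr ⟨?_, ?_⟩
  · rw [isSelfAdjoint_iff, star_mul, hAsa.star_eq, hBsa.star_eq]
    exact hc.symm
  · intro x
    show 0 ≤ RCLike.re ⟪(A * B) x, x⟫_ℂ
    have hlb : ∀ y : H, 0 ≤ RCLike.re ⟪A y, y⟫_ℂ := hA.re_inner_nonneg_left
    -- notation
    set X := fun n => iterSub A n with hXdef
    have hXsym : ∀ n, ∀ u v : H, ⟪X n u, v⟫_ℂ = ⟪u, X n v⟫_ℂ :=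
      fun n u v => (isSelfAdjoint_iff_isSymmetric.mp (iterSub_selfAdjoint hAsa n)) u v
    have hXcomm : ∀ n, Commute B (X n) := fun n => iterSub_commute hc.symm n
    have hterm : ∀ k, RCLike.re ⟪(X k * X k) (B x), x⟫_ℂ = RCLike.re ⟪B (X k x), X k x⟫_ℂ := by
      intro k
      have h1 : (X k) (B x) = B (X k x) := by
        have := congrArg (fun C : H →L[ℂ] H => C x) (hXcomm k).symm
        simpa [ContinuousLinearMap.mul_apply] using this
      rw [ContinuousLinearMap.mul_apply, hXsym k (X k (B x)) x, h1]
    have hident : ∀ n, RCLike.re ⟪(A * B) x, x⟫_ℂ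
        = (∑ k ∈ Finset.range n, RCLike.re ⟪B (X k x), X k x⟫_ℂ)
          + RCLike.re ⟪B x, X n x⟫_ℂ := by
      intro n
      have := congrArg (fun C : H →L[ℂ] H => RCLike.re ⟪C (B x), x⟫_ℂ) (iterSub_partial (A := A) n)
      simp only [ContinuousLinearMap.add_apply, ContinuousLinearMap.sum_apply, sum_inner,
        inner_add_left, map_add, map_sum] at this
      rw [show RCLike.re ⟪(A * B) x, x⟫_ℂ = RCLike.re ⟪A (B x), x⟫_ℂ from rfl, this,
        Finset.sum_congr rfl fun k _ => hterm k, hXsym n (B x) x]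
    have htail : Tendsto (fun n => RCLike.re ⟪B x, X n x⟫_ℂ) atTop (𝓝 0) := by
      have hx0 : Tendsto (fun n => X n x) atTop (𝓝 0) := iterSub_tendsto_zero hAsa hlb hub x
      have : Tendsto (fun n => ⟪B x, X n x⟫_ℂ) atTop (𝓝 (⟪B x, (0 : H)⟫_ℂ)) :=
        Filter.Tendsto.inner tendsto_const_nhds hx0
      simpa [Function.comp_def] using (RCLike.continuous_re.tendsto _).comp this
    have hseq : Tendsto (fun n => RCLike.re ⟪(A * B) x, x⟫_ℂ - RCLike.re ⟪B x, X n x⟫_ℂ)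
        atTop (𝓝 (RCLike.re ⟪(A * B) x, x⟫_ℂ)) := by
      simpa using (tendsto_const_nhds (x := RCLike.re ⟪(A * B) x, x⟫_ℂ)
        (f := atTop (α := ℕ))).sub htail
    refine ge_of_tendsto' hseq fun n => ?_
    rw [show RCLike.re ⟪(A * B) x, x⟫_ℂ - RCLike.re ⟪B x, X n x⟫_ℂ
        = ∑ k ∈ Finset.range n, RCLike.re ⟪B (X k x), X k x⟫_ℂ by rw [hident n]; ring]
    exact Finset.sum_nonneg fun k _ => hB.re_inner_nonneg_left _

lemma norm_sq_le_of_isPositive {D : H →L[ℂ] H} (hD : D.IsPositive) (x : H) :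
    ‖D x‖ ^ 2 ≤ ‖D‖ * RCLike.re ⟪D x, x⟫_ℂ := by
  rcases eq_or_ne D 0 with rfl | hD0
  · simp
  have hc : (0 : ℝ) < ‖D‖ := norm_pos_iff.mpr hD0
  set A : H →L[ℂ] H := ((‖D‖⁻¹ : ℝ) : ℂ) • D with hAdef
  have hAapp : ∀ y : H, A y = ((‖D‖⁻¹ : ℝ) : ℂ) • D y := fun y => rfl
  have hAre : ∀ y : H, RCLike.re ⟪A y, y⟫_ℂ = ‖D‖⁻¹ * RCLike.re ⟪D y, y⟫_ℂ := by
    intro y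
    rw [hAapp, inner_smul_left]
    simp [Complex.conj_ofReal]
  have hAsa : IsSelfAdjoint A := by
    rw [isSelfAdjoint_iff, star_smul, hD.isSelfAdjoint.star_eq]
    congr 1
    simp [Complex.conj_ofReal]
  have hAub : ∀ y : H, RCLike.re ⟪A y, y⟫_ℂ ≤ ‖y‖ ^ 2 := by
    intro y
    rw [hAre]
    have h1 : RCLike.re ⟪D y, y⟫_ℂ ≤ ‖D‖ * ‖y‖ ^ 2 := by
      calc RCLike.re ⟪D y, y⟫_ℂ ≤ ‖⟪D y, y⟫_ℂ‖ := RCLike.re_le_norm _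
        _ ≤ ‖D y‖ * ‖y‖ := norm_inner_le_norm _ _
        _ ≤ (‖D‖ * ‖y‖) * ‖y‖ := by
            exact mul_le_mul_of_nonneg_right (D.le_opNorm y) (norm_nonneg y)
        _ = ‖D‖ * ‖y‖ ^ 2 := by ring
    calc ‖D‖⁻¹ * RCLike.re ⟪D y, y⟫_ℂ ≤ ‖D‖⁻¹ * (‖D‖ * ‖y‖ ^ 2) := by
          exact mul_le_mul_of_nonneg_left h1 (by positivity)
      _ = ‖y‖ ^ 2 := by field_simp
  have hApos : A.IsPositive := by
    refine isPositive_def'.mpr ⟨hAsa, fun y => ?_⟩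
    show 0 ≤ RCLike.re ⟪A y, y⟫_ℂ
    rw [hAre]
    exact mul_nonneg (by positivity) (hD.re_inner_nonneg_left y)
  have hBpos : (1 - A).IsPositive := by
    refine isPositive_def'.mpr ⟨(IsSelfAdjoint.one _).sub hAsa, fun y => ?_⟩
    show 0 ≤ RCLike.re ⟪(1 - A) y, y⟫_ℂ
    rw [ContinuousLinearMap.sub_apply, inner_sub_left, map_sub, ContinuousLinearMap.one_apply,
      inner_self_eq_norm_sq]
    linarith [hAub y]
  have hcomm : Commute A (1 - A) := (Commute.one_right A).sub_right (Commute.refl A)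
  have hmul := (isPositive_mul_of_commute hApos hBpos hAub hcomm).re_inner_nonneg_left x
  have hexp : RCLike.re ⟪(A * (1 - A)) x, x⟫_ℂ = RCLike.re ⟪A x, x⟫_ℂ - ‖A x‖ ^ 2 := by
    have hAsym : ∀ u v : H, ⟪A u, v⟫_ℂ = ⟪u, A v⟫_ℂ :=
      fun u v => (isSelfAdjoint_iff_isSymmetric.mp hAsa) u v
    rw [ContinuousLinearMap.mul_apply, ContinuousLinearMap.sub_apply,
      ContinuousLinearMap.one_apply, map_sub, inner_sub_left, map_sub]
    rw [hAsym (A x) x]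
    rw [show RCLike.re ⟪A x, A x⟫_ℂ = ‖A x‖ ^ 2 from inner_self_eq_norm_sq (A x)]
  have hAx : ‖A x‖ = ‖D‖⁻¹ * ‖D x‖ := by
    rw [hAapp, norm_smul]
    simp [abs_of_pos (inv_pos.mpr hc)]
  have hkey : ‖A x‖ ^ 2 ≤ RCLike.re ⟪A x, x⟫_ℂ := by
    rw [hexp] at hmul; linarith
  rw [hAx, hAre] at hkey
  have h2 : (‖D‖⁻¹ * ‖D x‖) ^ 2 = ‖D‖⁻¹ * ‖D‖⁻¹ * ‖D x‖ ^ 2 := by ring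
  rw [h2] at hkey
  have := mul_le_mul_of_nonneg_left hkey (le_of_lt (mul_pos hc hc))
  calc ‖D x‖ ^ 2 = (‖D‖ * ‖D‖) * (‖D‖⁻¹ * ‖D‖⁻¹ * ‖D x‖ ^ 2) := by field_simp
    _ ≤ (‖D‖ * ‖D‖) * (‖D‖⁻¹ * RCLike.re ⟪D x, x⟫_ℂ) := this
    _ = ‖D‖ * RCLike.re ⟪D x, x⟫_ℂ := by field_simp

end PaszAux

open PaszAux in
/-- The Paszkiewicz conjecture for a mutually commuting decreasing sequence of positive
contractions: `S n ξ → P ξ` for every `ξ`. -/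
theorem paszkiewicz_commuting
    {H : Type*} [NormedAddCommGroup H] [InnerProductSpace ℂ H] [CompleteSpace H]
    (T : ℕ → H →L[ℂ] H)
    (hpos : ∀ n, ∀ ξ : H, 0 ≤ ⟪(T n) ξ, ξ⟫_ℂ)
    (hcontr : ∀ n, ‖T n‖ ≤ 1)
    (hdec : ∀ n, ∀ ξ : H, ⟪(T (n + 1)) ξ, ξ⟫_ℂ ≤ ⟪(T n) ξ, ξ⟫_ℂ)
    (hcomm : ∀ n m, (T n).comp (T m) = (T m).comp (T n))
    (Tlim : H →L[ℂ] H)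
    (hTlim : ∀ ξ : H, Tendsto (fun n => (T n) ξ) atTop (𝓝 (Tlim ξ)))
    (P : H →L[ℂ] H)
    (hPmem : ∀ ξ : H, Tlim (P ξ) = P ξ)
    (hPorth : ∀ ξ η : H, Tlim η = η → ⟪ξ - P ξ, η⟫_ℂ = 0) :
    ∀ ξ : H, Tendsto (fun n => prodSeq T id n ξ) atTop (𝓝 (P ξ)) := by
  classical
  -- basic facts about the `T n`
  have hTpos : ∀ n, (T n).IsPositive := by
    intro n
    rw [ContinuousLinearMap.isPositive_iff_complex]
    intro x
    have h := hpos n x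
    rw [Complex.le_def] at h
    simp only [Complex.zero_re, Complex.zero_im] at h
    constructor
    · apply Complex.ext <;> simp [← h.2]
    · simpa using h.1
  have hTsa : ∀ n, IsSelfAdjoint (T n) := fun n => (hTpos n).isSelfAdjoint
  have hTnormapp : ∀ n (x : H), ‖T n x‖ ≤ ‖x‖ := by
    intro n x
    calc ‖T n x‖ ≤ ‖T n‖ * ‖x‖ := (T n).le_opNorm x
      _ ≤ 1 * ‖x‖ := mul_le_mul_of_nonneg_right (hcontr n) (norm_nonneg x)
      _ = ‖x‖ := one_mul _
  have hTub : ∀ n (x : H), RCLike.re ⟪T n x, x⟫_ℂ ≤ ‖x‖ ^ 2 := by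
    intro n x
    calc RCLike.re ⟪T n x, x⟫_ℂ ≤ ‖⟪T n x, x⟫_ℂ‖ := RCLike.re_le_norm _
      _ ≤ ‖T n x‖ * ‖x‖ := norm_inner_le_norm _ _
      _ ≤ ‖x‖ * ‖x‖ := mul_le_mul_of_nonneg_right (hTnormapp n x) (norm_nonneg x)
      _ = ‖x‖ ^ 2 := (sq ‖x‖).symm
  have hTcomm : ∀ n m, Commute (T n) (T m) := fun n m => hcomm n m
  set S : ℕ → H →L[ℂ] H := prodSeq T id with hSdef
  have hSrec : ∀ n, S (n + 1) = T (n + 1) * S n := fun n => rfl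
  have hScomm : ∀ m n, Commute (T m) (S n) := by
    intro m n
    induction n with
    | zero => exact hTcomm m 0
    | succ n ih => rw [hSrec n]; exact (hTcomm m (n + 1)).mul_right ih
  have hSsa : ∀ n, IsSelfAdjoint (S n) := by
    intro n
    induction n with
    | zero => exact hTsa 0
    | succ n ih =>
      rw [hSrec n, isSelfAdjoint_iff, star_mul, ih.star_eq, (hTsa (n + 1)).star_eq]
      exact (hScomm (n + 1) n).symm
  have hSpos : ∀ n, (S n).IsPositive := by
    intro n
    induction n with
    | zero => exact hTpos 0
    | succ n ih =>
      rw [hSrec n]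
      exact isPositive_mul_of_commute (hTpos (n + 1)) ih (hTub (n + 1)) (hScomm (n + 1) n)
  have hSnormapp : ∀ n (x : H), ‖S n x‖ ≤ ‖x‖ := by
    intro n
    induction n with
    | zero => exact hTnormapp 0
    | succ n ih =>
      intro x
      rw [hSrec n]
      exact le_trans (hTnormapp (n + 1) (S n x)) (ih x)
  have hSnorm : ∀ n, ‖S n‖ ≤ 1 := fun n =>
    (S n).opNorm_le_bound zero_le_one fun x => by simpa using hSnormapp n x
  have hSdiff : ∀ n, (S n - S (n + 1)).IsPositive := by
    intro n
    have hexp : ∀ x : H, RCLike.re ⟪(1 - T (n + 1)) x, x⟫_ℂ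
        = ‖x‖ ^ 2 - RCLike.re ⟪T (n + 1) x, x⟫_ℂ := by
      intro x
      rw [ContinuousLinearMap.sub_apply, ContinuousLinearMap.one_apply, inner_sub_left, map_sub,
        inner_self_eq_norm_sq]
    have h1 : (1 - T (n + 1)).IsPositive := by
      refine isPositive_def'.mpr ⟨(IsSelfAdjoint.one _).sub (hTsa (n + 1)), fun x => ?_⟩
      show 0 ≤ RCLike.re ⟪(1 - T (n + 1)) x, x⟫_ℂ
      rw [hexp]
      linarith [hTub (n + 1) x]
    have hub1 : ∀ x : H, RCLike.re ⟪(1 - T (n + 1)) x, x⟫_ℂ ≤ ‖x‖ ^ 2 := by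
      intro x
      rw [hexp]
      linarith [(hTpos (n + 1)).re_inner_nonneg_left x]
    have hc1 : Commute (1 - T (n + 1)) (S n) :=
      (Commute.one_left (S n)).sub_left (hScomm (n + 1) n)
    have := isPositive_mul_of_commute h1 (hSpos n) hub1 hc1
    rwa [sub_mul, one_mul, ← hSrec n] at this
  have hSmono : ∀ m n, m ≤ n → (S m - S n).IsPositive := by
    intro m n h
    induction n, h using Nat.le_induction with
    | base => simpa using ContinuousLinearMap.isPositive_zero (E := H) (𝕜 := ℂ)
    | succ n hmn ih =>
      have := ih.add (hSdiff n)
      rwa [sub_add_sub_cancel] at this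
  -- fixed vectors of `Tlim` are fixed by every `T n` and every `S n`
  have hTfix : ∀ ζ : H, Tlim ζ = ζ → ∀ n, T n ζ = ζ := by
    intro ζ hζ n
    have hanti : Antitone fun k => RCLike.re ⟪T k ζ, ζ⟫_ℂ :=
      antitone_nat_of_succ_le fun k => (Complex.le_def.mp (hdec k ζ)).1
    have hlim : Tendsto (fun k => RCLike.re ⟪T k ζ, ζ⟫_ℂ) atTop
        (𝓝 (RCLike.re ⟪Tlim ζ, ζ⟫_ℂ)) :=
      (RCLike.continuous_re.tendsto _).comp (Filter.Tendsto.inner (hTlim ζ) tendsto_const_nhds)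
    have hge : RCLike.re ⟪Tlim ζ, ζ⟫_ℂ ≤ RCLike.re ⟪T n ζ, ζ⟫_ℂ :=
      le_of_tendsto hlim (Filter.eventually_atTop.2 ⟨n, fun k hk => hanti hk⟩)
    rw [hζ, inner_self_eq_norm_sq] at hge
    have h1 : ‖T n ζ‖ ^ 2 ≤ ‖ζ‖ ^ 2 := by
      have := hTnormapp n ζ
      nlinarith [norm_nonneg (T n ζ)]
    have h0 : ‖T n ζ - ζ‖ ^ 2 ≤ 0 := by
      rw [@norm_sub_sq ℂ]
      linarith
    have : ‖T n ζ - ζ‖ ^ 2 = 0 := le_antisymm h0 (sq_nonneg _)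
    have : ‖T n ζ - ζ‖ = 0 := by
      nlinarith [norm_nonneg (T n ζ - ζ)]
    rw [norm_eq_zero, sub_eq_zero] at this
    exact this
  have hSfix : ∀ ζ : H, Tlim ζ = ζ → ∀ n, S n ζ = ζ := by
    intro ζ hζ n
    induction n with
    | zero => exact hTfix ζ hζ 0
    | succ n ih =>
      rw [hSrec n]
      show T (n + 1) (S n ζ) = ζ
      rw [ih, hTfix ζ hζ (n + 1)]
  -- main argument
  intro ξ
  set η := ξ - P ξ with hη
  set a : ℕ → ℝ := fun n => RCLike.re ⟪S n η, η⟫_ℂ with ha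
  have ha_nonneg : ∀ n, 0 ≤ a n := fun n => (hSpos n).re_inner_nonneg_left η
  have hdiff_eq : ∀ m n : ℕ, RCLike.re ⟪(S m - S n) η, η⟫_ℂ = a m - a n := by
    intro m n
    rw [ContinuousLinearMap.sub_apply, inner_sub_left, map_sub]
  have ha_anti : Antitone a := by
    refine antitone_nat_of_succ_le fun n => ?_
    have := (hSdiff n).re_inner_nonneg_left η
    rw [hdiff_eq] at this
    linarith
  have hbdd : BddBelow (Set.range a) := ⟨0, by rintro r ⟨n, rfl⟩; exact ha_nonneg n⟩
  set l := ⨅ n, a n with hl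
  have ha_tend : Tendsto a atTop (𝓝 l) := tendsto_atTop_ciInf ha_anti hbdd
  have hl_le : ∀ n, l ≤ a n := fun n => ciInf_le hbdd n
  have hkey : ∀ m n, m ≤ n → ‖S m η - S n η‖ ^ 2 ≤ 2 * (a m - a n) := by
    intro m n h
    have hD := hSmono m n h
    have hDnorm : ‖S m - S n‖ ≤ 2 := by
      calc ‖S m - S n‖ ≤ ‖S m‖ + ‖S n‖ := norm_sub_le _ _
        _ ≤ 1 + 1 := add_le_add (hSnorm m) (hSnorm n)
        _ = 2 := by norm_num
    have h1 := norm_sq_le_of_isPositive hD η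
    have hnn : 0 ≤ a m - a n := by
      have := hD.re_inner_nonneg_left η
      rw [hdiff_eq] at this
      linarith
    rw [hdiff_eq] at h1
    have h3 : (S m - S n) η = S m η - S n η := rfl
    rw [h3] at h1
    calc ‖S m η - S n η‖ ^ 2 ≤ ‖S m - S n‖ * (a m - a n) := h1
      _ ≤ 2 * (a m - a n) := mul_le_mul_of_nonneg_right hDnorm hnn
  have hb_tend : Tendsto (fun N => Real.sqrt (2 * (a N - l))) atTop (𝓝 0) := by
    have h1 : Tendsto (fun N => 2 * (a N - l)) atTop (𝓝 (2 * (l - l))) :=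
      (ha_tend.sub tendsto_const_nhds).const_mul 2
    have h2 : Tendsto (fun N => Real.sqrt (2 * (a N - l))) atTop
        (𝓝 (Real.sqrt (2 * (l - l)))) := (Real.continuous_sqrt.tendsto _).comp h1
    simpa using h2
  have hcau : CauchySeq fun n => S n η := by
    refine cauchySeq_of_le_tendsto_0 _ (fun n m N hn hm => ?_) hb_tend
    have key : ∀ p q : ℕ, p ≤ q → N ≤ p →
        dist (S q η) (S p η) ≤ Real.sqrt (2 * (a N - l)) := by
      intro p q hpq hNp
      rw [dist_eq_norm, ← norm_neg, neg_sub]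
      apply Real.le_sqrt_of_sq_le
      calc ‖S p η - S q η‖ ^ 2 ≤ 2 * (a p - a q) := hkey p q hpq
        _ ≤ 2 * (a N - l) := by
            have h1 : a p ≤ a N := ha_anti hNp
            have h2 : l ≤ a q := hl_le q
            linarith
    rcases le_total n m with h | h
    · rw [dist_comm]; exact key n m h hn
    · exact key m n h hm
  obtain ⟨v, hv⟩ := cauchySeq_tendsto_of_complete hcau
  have hfixv : Tlim v = v := by
    have h2 : Tendsto (fun n => S (n + 1) η) atTop (𝓝 v) := hv.comp (tendsto_add_atTop_nat 1)
    have hnrm : Tendsto (fun n => ‖S n η - v‖) atTop (𝓝 0) :=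
      tendsto_iff_norm_sub_tendsto_zero.mp hv
    have h3 : Tendsto (fun n => T (n + 1) (S n η) - T (n + 1) v) atTop (𝓝 0) := by
      apply squeeze_zero_norm _ hnrm
      intro n
      rw [← map_sub]
      exact hTnormapp (n + 1) _
    have h4 : Tendsto (fun n => T (n + 1) v) atTop (𝓝 (Tlim v)) :=
      (hTlim v).comp (tendsto_add_atTop_nat 1)
    have h5 : Tendsto (fun n => T (n + 1) (S n η)) atTop (𝓝 (Tlim v)) := by
      have := h3.add h4
      simpa using this
    have h6 : (fun n => T (n + 1) (S n η)) = fun n => S (n + 1) η := by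
      funext n
      rw [hSrec n]
      rfl
    rw [h6] at h5
    exact tendsto_nhds_unique h5 h2
  have hηv : ⟪η, v⟫_ℂ = 0 := hPorth ξ v hfixv
  have hinner0 : ∀ n, ⟪S n η, v⟫_ℂ = 0 := by
    intro n
    have hsym : ∀ u w : H, ⟪S n u, w⟫_ℂ = ⟪u, S n w⟫_ℂ :=
      fun u w => (isSelfAdjoint_iff_isSymmetric.mp (hSsa n)) u w
    rw [hsym, hSfix v hfixv n, hηv]
  have hvv : ⟪v, v⟫_ℂ = 0 := by
    have h1 : Tendsto (fun n => ⟪S n η, v⟫_ℂ) atTop (𝓝 ⟪v, v⟫_ℂ) :=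
      Filter.Tendsto.inner hv tendsto_const_nhds
    have h2 : Tendsto (fun n : ℕ => (0 : ℂ)) atTop (𝓝 (0 : ℂ)) := tendsto_const_nhds
    exact (tendsto_nhds_unique (by simpa [hinner0] using h1) h2)
  have hv0 : v = 0 := inner_self_eq_zero.mp hvv
  have hfin : ∀ n, S n ξ = P ξ + S n η := by
    intro n
    have hsum : P ξ + η = ξ := by rw [hη]; abel
    calc S n ξ = S n (P ξ + η) := by rw [hsum]
      _ = S n (P ξ) + S n η := map_add _ _ _
      _ = P ξ + S n η := by rw [hSfix (P ξ) (hPmem ξ) n]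
  have hfinal : Tendsto (fun n => P ξ + S n η) atTop (𝓝 (P ξ + v)) :=
    tendsto_const_nhds.add hv
  rw [hv0, add_zero] at hfinal
  show Tendsto (fun n => S n ξ) atTop (𝓝 (P ξ))
  simpa only [hfin] using hfinal
end

section
/- There is an absolute constant C > 0 with the following property. Let ε ∈ [0, 1/2], θ ∈ [0, π/3], and in ℝ² let ξ = (1, 0) and η = (cos θ, sin θ). Let A := P_η + (1−ε) P_η^⊥, where P_η is the orthogonal projection onto the line spanned by η and P_η^⊥ = I − P_η. Set α := ‖A ξ‖ and let φ ∈ [0, π/3] be the angle with A ξ = α (cos φ, sin φ). Then α ≥ 1 − ε θ² and |φ − ε θ| ≤ C ε θ³. -/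
open scoped InnerProductSpace
open Real

/-- The vector `(a, b)` in the Euclidean plane. -/
noncomputable def vec2 (a b : ℝ) : EuclideanSpace ℝ (Fin 2) :=
  (WithLp.equiv 2 (Fin 2 → ℝ)).symm ![a, b]

lemma vec2_inner (a b c d : ℝ) : ⟪vec2 a b, vec2 c d⟫_ℝ = a*c + b*d := by
  simp [vec2, PiLp.inner_apply, Fin.sum_univ_two, RCLike.inner_apply]; ring

lemma vec2_norm (a b : ℝ) : ‖vec2 a b‖ = Real.sqrt (a^2 + b^2) := by
  simp [vec2, EuclideanSpace.norm_eq, Fin.sum_univ_two, sq_abs]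

lemma vec2_smul (c a b : ℝ) : c • vec2 a b = vec2 (c*a) (c*b) := by
  ext i; fin_cases i <;> simp [vec2]

lemma vec2_add (a b c d : ℝ) : vec2 a b + vec2 c d = vec2 (a+c) (b+d) := by
  ext i; fin_cases i <;> simp [vec2]

lemma vec2_sub (a b c d : ℝ) : vec2 a b - vec2 c d = vec2 (a-c) (b-d) := by
  ext i; fin_cases i <;> simp [vec2]

lemma vec2_inj {a b c d : ℝ} (h : vec2 a b = vec2 c d) : a = c ∧ b = d := by
  constructor
  · have := congrArg (fun v => v 0) h; simpa [vec2] using this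
  · have := congrArg (fun v => v 1) h; simpa [vec2] using this

/-- `sin x ≥ x - x^3/6` for `x ≥ 0`. -/
lemma sin_ge_sub_cube (x : ℝ) (hx : 0 ≤ x) : x - x^3/6 ≤ sin x := by
  have key : ∀ y : ℝ, HasDerivAt (fun x => Real.sin x - x + x^3/6) (cos y - 1 + y^2/2) y := by
    intro y
    have := ((Real.hasDerivAt_sin y).sub (hasDerivAt_id y)).add
      (((hasDerivAt_pow 3 y)).div_const 6)
    exact this.congr_deriv (by ring)
  have mono : Monotone (fun x => Real.sin x - x + x^3/6) := by
    apply monotone_of_deriv_nonneg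
    · exact fun y => (key y).differentiableAt
    · intro y
      rw [(key y).deriv]
      nlinarith [Real.one_sub_sq_div_two_le_cos (x := y)]
  have := mono hx
  simp only [Real.sin_zero] at this
  norm_num at this
  linarith

/-- On `[0, π/3]` the sine function has slope at least `1/2`. -/
lemma abs_le_two_abs_sin {a b : ℝ} (ha : a ∈ Set.Icc (0:ℝ) (π/3)) (hb : b ∈ Set.Icc (0:ℝ) (π/3)) :
    |a - b| ≤ 2 * |sin a - sin b| := by
  have key : ∀ y : ℝ, HasDerivAt (fun x => Real.sin x - x/2) (cos y - 1/2) y := by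
    intro y
    exact ((Real.hasDerivAt_sin y).sub ((hasDerivAt_id y).div_const 2)).congr_deriv (by ring)
  have mono : MonotoneOn (fun x => Real.sin x - x/2) (Set.Icc 0 (π/3)) := by
    apply monotoneOn_of_deriv_nonneg (convex_Icc _ _)
    · exact fun y _ => (key y).differentiableAt.continuousAt.continuousWithinAt
    · exact fun y _ => (key y).differentiableAt.differentiableWithinAt
    · intro y hy
      rw [interior_Icc] at hy
      rw [(key y).deriv]
      have h1 : cos (π/3) ≤ cos y := by
        apply Real.cos_le_cos_of_nonneg_of_le_pi (le_of_lt hy.1) (by linarith [pi_pos]) (le_of_lt hy.2)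
      rw [Real.cos_pi_div_three] at h1
      linarith
  rcases le_total a b with h | h
  · have := mono ha hb h
    have hs : sin a ≤ sin b := by dsimp at this; linarith
    rw [abs_of_nonpos (by linarith), abs_of_nonpos (by linarith)]
    dsimp at this; linarith
  · have := mono hb ha h
    have hs : sin b ≤ sin a := by dsimp at this; linarith
    rw [abs_of_nonneg (by linarith), abs_of_nonneg (by linarith)]
    dsimp at this; linarith

set_option maxHeartbeats 1000000 in
/-- There is an absolute constant `C > 0` such that for `ε ∈ [0,1/2]`, `θ ∈ [0,π/3]`,
`ξ = (1,0)`, `η = (cos θ, sin θ)` and `A = P_η + (1-ε) P_η^⊥`, one has `‖Aξ‖ ≥ 1 - ε θ²`,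
and if `Aξ = ‖Aξ‖ (cos φ, sin φ)` with `φ ∈ [0, π/3]`, then `|φ - εθ| ≤ C ε θ³`. -/
theorem rank_one_perturbation_angle_estimate :
    ∃ C : ℝ, 0 < C ∧
      ∀ (ε θ : ℝ), ε ∈ Set.Icc (0 : ℝ) (1 / 2) → θ ∈ Set.Icc (0 : ℝ) (π / 3) →
      ∀ A : EuclideanSpace ℝ (Fin 2) →L[ℝ] EuclideanSpace ℝ (Fin 2),
        (∀ x, A x = ⟪vec2 (cos θ) (sin θ), x⟫_ℝ • vec2 (cos θ) (sin θ)
            + (1 - ε) • (x - ⟪vec2 (cos θ) (sin θ), x⟫_ℝ • vec2 (cos θ) (sin θ))) →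
        (1 - ε * θ ^ 2 ≤ ‖A (vec2 1 0)‖) ∧
        ∀ φ : ℝ, φ ∈ Set.Icc (0 : ℝ) (π / 3) →
          A (vec2 1 0) = ‖A (vec2 1 0)‖ • vec2 (cos φ) (sin φ) →
          |φ - ε * θ| ≤ C * ε * θ ^ 3 := by
  refine ⟨10, by norm_num, ?_⟩
  rintro ε θ ⟨hε0, hε2⟩ ⟨hθ0, hθ3⟩ A hA
  have hπ : (0:ℝ) < π := pi_pos
  have hθπ : θ ≤ π := by linarith
  have hsin0 : 0 ≤ sin θ := Real.sin_nonneg_of_nonneg_of_le_pi hθ0 hθπ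
  have hsinle : sin θ ≤ θ := Real.sin_le hθ0
  have hsin1 : sin θ ≤ 1 := Real.sin_le_one θ
  have hcos0 : 0 ≤ cos θ := Real.cos_nonneg_of_mem_Icc ⟨by linarith, by linarith⟩
  have hcos1 : cos θ ≤ 1 := Real.cos_le_one θ
  have hpyth : sin θ ^ 2 + cos θ ^ 2 = 1 := Real.sin_sq_add_cos_sq θ
  obtain ⟨a, ha_def⟩ : ∃ x : ℝ, x = 1 - ε * sin θ ^ 2 := ⟨_, rfl⟩
  obtain ⟨b, hb_def⟩ : ∃ x : ℝ, x = ε * (sin θ * cos θ) := ⟨_, rfl⟩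
  -- compute A ξ
  have hA0 : A (vec2 1 0) = vec2 a b := by
    rw [hA (vec2 1 0), vec2_inner]
    rw [vec2_smul, vec2_sub, vec2_smul, vec2_add]
    have e0 : (cos θ * 1 + sin θ * 0) * cos θ + (1 - ε) * (1 - (cos θ * 1 + sin θ * 0) * cos θ) = a := by
      rw [ha_def]; nlinarith [hpyth]
    have e1 : (cos θ * 1 + sin θ * 0) * sin θ + (1 - ε) * (0 - (cos θ * 1 + sin θ * 0) * sin θ) = b := by
      rw [hb_def]; ring
    rw [e0, e1]
  have ha2 : (1:ℝ)/2 ≤ a := by rw [ha_def]; nlinarith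
  have hb0 : 0 ≤ b := by rw [hb_def]; positivity
  obtain ⟨α, hα_def⟩ : ∃ x : ℝ, x = Real.sqrt (a^2 + b^2) := ⟨_, rfl⟩
  have hnorm : ‖A (vec2 1 0)‖ = α := by rw [hA0, vec2_norm, hα_def]
  have hαa : a ≤ α := by
    rw [hα_def]
    calc a ≤ |a| := le_abs_self a
    _ = Real.sqrt (a^2) := (Real.sqrt_sq_eq_abs a).symm
    _ ≤ Real.sqrt (a^2 + b^2) := Real.sqrt_le_sqrt (by nlinarith)
  have hα1 : α ≤ 1 := by
    rw [hα_def, show (1:ℝ) = Real.sqrt 1 by simp]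
    apply Real.sqrt_le_sqrt
    have hid : a^2 + b^2 = 1 - ε * sin θ^2 * (2 - ε) := by
      rw [ha_def, hb_def]; linear_combination (ε^2 * sin θ^2) * hpyth
    rw [hid]
    nlinarith [mul_nonneg (mul_nonneg hε0 (sq_nonneg (sin θ))) (show (0:ℝ) ≤ 2 - ε by linarith)]
  have hαpos : (0:ℝ) < α := by linarith
  have hsinsq : sin θ ^ 2 ≤ θ ^ 2 := by nlinarith
  constructor
  · rw [hnorm]
    have : 1 - ε * θ^2 ≤ a := by rw [ha_def]; nlinarith
    linarith
  · rintro φ ⟨hφ0, hφ3⟩ heq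
    rw [hnorm, hA0, vec2_smul] at heq
    obtain ⟨hc, hs⟩ := vec2_inj heq
    clear heq hA0 hnorm hA A
    -- hs : b = α * sin φ
    have hεθmem : ε * θ ∈ Set.Icc (0:ℝ) (π/3) := by
      constructor
      · positivity
      · linarith [mul_le_of_le_one_left hθ0 (show ε ≤ 1 by linarith)]
    have hkey := abs_le_two_abs_sin (a := φ) (b := ε * θ) ⟨hφ0, hφ3⟩ hεθmem
    -- bound |sin φ - sin (ε θ)|
    have hsinφ0 : 0 ≤ sin φ := Real.sin_nonneg_of_nonneg_of_le_pi hφ0 (by linarith)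
    have hsinφb : sin φ ≤ 2 * b := by
      have hm : 0 ≤ sin φ * (2*α - 1) := mul_nonneg hsinφ0 (by linarith)
      rw [hs]; linarith [hm]
    have h1 : |sin φ - b| ≤ ε * θ^3 := by
      have h1a : sin φ - b = sin φ * (1 - α) := by rw [hs]; ring
      have h1b : 1 - α ≤ ε * θ^2 := by
        have : 1 - ε * θ^2 ≤ a := by rw [ha_def]; nlinarith
        linarith
      rw [h1a, abs_of_nonneg (mul_nonneg hsinφ0 (by linarith))]
      have hsc : sin θ * cos θ ≤ θ := by nlinarith
      have hbεθ : b ≤ ε * θ := by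
        rw [hb_def]; exact mul_le_mul_of_nonneg_left hsc hε0
      have A1 : sin φ * (1 - α) ≤ (2*(ε*θ)) * (ε*θ^2) :=
        mul_le_mul (by linarith) h1b (by linarith) (by positivity)
      have A2 : (0:ℝ) ≤ ε * θ^3 * (1 - 2*ε) :=
        mul_nonneg (mul_nonneg hε0 (pow_nonneg hθ0 3)) (by linarith)
      nlinarith [A1, A2]
    have h2 : |b - ε * θ| ≤ ε * θ^3 := by
      have hs2θ : 2*θ - (2*θ)^3/6 ≤ sin (2*θ) := sin_ge_sub_cube (2*θ) (by linarith)
      have hs2θ' : sin (2*θ) ≤ 2*θ := Real.sin_le (by linarith)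
      have hdouble : sin (2*θ) = 2 * (sin θ * cos θ) := by
        rw [Real.sin_two_mul]; ring
      rw [hb_def, abs_sub_comm, abs_of_nonneg (by nlinarith)]
      nlinarith
    have h3 : |ε * θ - sin (ε * θ)| ≤ ε * θ^3 := by
      have hl : ε*θ - (ε*θ)^3/6 ≤ sin (ε*θ) := sin_ge_sub_cube (ε*θ) (by positivity)
      have hu : sin (ε*θ) ≤ ε*θ := Real.sin_le (by positivity)
      rw [abs_of_nonneg (by linarith)]
      have hεsq : ε^2 ≤ 1 := by nlinarith
      have A3 : (0:ℝ) ≤ ε * θ^3 * (1 - ε^2/6) :=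
        mul_nonneg (mul_nonneg hε0 (pow_nonneg hθ0 3)) (by linarith)
      nlinarith [A3]
    have htotal : |sin φ - sin (ε*θ)| ≤ 3 * (ε * θ^3) := by
      calc |sin φ - sin (ε*θ)| = |(sin φ - b) + (b - ε*θ) + (ε*θ - sin (ε*θ))| := by ring_nf
      _ ≤ |sin φ - b| + |b - ε*θ| + |ε*θ - sin (ε*θ)| := by
          apply (abs_add_le _ _).trans
          gcongr
          exact abs_add_le _ _
      _ ≤ 3 * (ε * θ^3) := by linarith
    calc |φ - ε*θ| ≤ 2 * |sin φ - sin (ε*θ)| := hkey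
    _ ≤ 2 * (3 * (ε * θ^3)) := by linarith [abs_nonneg (sin φ - sin (ε*θ))]
    _ ≤ 10 * ε * θ^3 := by
        have := mul_nonneg hε0 (pow_nonneg hθ0 3)
        linarith
end

section
/- Let ε, κ be reals with 0 < ε, ε + ε² < κ < 1/2, let φ ∈ ℝ, and in ℝ² let ξ = (1, 0) and ζ = (cos φ, sin φ). Then: (i) the operator inequality P_ξ + (1−ε) P_ξ^⊥ ≥ (1 − 2 sin² φ) (P_ζ + (1−κ) P_ζ^⊥) holds; and (ii) if β ≥ 0 satisfies P_ξ + (1−ε) P_ξ^⊥ ≥ β (P_ζ + (1−κ) P_ζ^⊥), then β ≤ 1. -/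
open scoped InnerProductSpace
open Real

lemma key_scalar (ε κ s c x y : ℝ) (hsc : s^2+c^2=1) (hε : 0<ε) (hεκ : ε+ε^2<κ)
    (hκ : κ<1/2) :
    (1-2*s^2) * ((c*x+s*y)^2 + (1-κ)*(x^2+y^2-(c*x+s*y)^2)) ≤ x^2 + (1-ε)*(x^2+y^2-x^2) := by
  have hmid : (1-2*s^2) * ((c*x+s*y)^2 + (1-κ)*(x^2+y^2-(c*x+s*y)^2)) ≤ x^2 + (1-ε)*y^2 := by
    set p := c*x+s*y with hp
    set q := c*y-s*x with hq
    have hsum : x^2+y^2 = p^2+q^2 := by rw [hp,hq]; linear_combination (-(x^2)-y^2)*hsc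
    have hε1 : ε < 1 := by nlinarith
    have h2 : (0:ℝ) < (2-ε)*(κ-ε) - ε^2 := by nlinarith
    have hcc : 2-κ-(2+ε-2*κ)*c^2 = (2-κ)*s^2 + (κ-ε)*c^2 := by linear_combination (κ-2)*hsc
    have hb : (0:ℝ) < 2-κ-(2+ε-2*κ)*c^2 := by
      rw [hcc]; nlinarith [sq_nonneg c, sq_nonneg s]
    have hab : (ε*c*s)^2 ≤ s^2*(2-ε) * (2-κ-(2+ε-2*κ)*c^2) := by
      rw [hcc]
      nlinarith [mul_nonneg (mul_nonneg (sq_nonneg s) (sq_nonneg s))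
          (by nlinarith : (0:ℝ) ≤ (2-ε)*(2-κ)),
        mul_nonneg (mul_nonneg (sq_nonneg s) (sq_nonneg c)) h2.le]
    have hmain : 2*(ε*c*s)*(p*q) ≤ s^2*(2-ε)*p^2 + (2-κ-(2+ε-2*κ)*c^2)*q^2 := by
      nlinarith [sq_nonneg (ε*c*s*p - (2-κ-(2+ε-2*κ)*c^2)*q),
        mul_nonneg (mul_nonneg (sq_nonneg p) hb.le) (sub_nonneg.2 hab), mul_pos hb hb]
    have hx : x = c*p - s*q := by rw [hp,hq]; linear_combination -x*hsc
    have hy : y = s*p + c*q := by rw [hp,hq]; linear_combination -y*hsc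
    have haux : (c*p-s*q)^2 + (1-ε)*(s*p+c*q)^2
        = (1-2*s^2)*(p^2+(1-κ)*q^2)
          + (s^2*(2-ε)*p^2 + (2-κ-(2+ε-2*κ)*c^2)*q^2 - 2*(ε*c*s)*(p*q)) := by
      linear_combination (p^2 + (3-2*κ)*q^2) * hsc
    rw [hsum, hx, hy, haux]
    nlinarith [hmain]
  linarith [hmid, (by ring : x^2 + (1-ε)*(x^2+y^2-x^2) = x^2 + (1-ε)*y^2).ge]

/-- With `ξ = (1,0)`, `ζ = (cos φ, sin φ)`, `A = P_ξ + (1-ε) P_ξ^⊥` and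
`B = P_ζ + (1-κ) P_ζ^⊥`, for `0 < ε`, `ε + ε² < κ < 1/2`:
(i) `A ≥ (1 - 2 sin² φ) B`, and (ii) any `β ≥ 0` with `A ≥ β B` satisfies `β ≤ 1`. -/
theorem two_rank_one_perturbations_comparison
    (ε κ φ : ℝ) (hε : 0 < ε) (hεκ : ε + ε ^ 2 < κ) (hκ : κ < 1 / 2)
    (A B : EuclideanSpace ℝ (Fin 2) →L[ℝ] EuclideanSpace ℝ (Fin 2))
    (hA : ∀ x, A x = ⟪vec2 1 0, x⟫_ℝ • vec2 1 0
        + (1 - ε) • (x - ⟪vec2 1 0, x⟫_ℝ • vec2 1 0))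
    (hB : ∀ x, B x = ⟪vec2 (cos φ) (sin φ), x⟫_ℝ • vec2 (cos φ) (sin φ)
        + (1 - κ) • (x - ⟪vec2 (cos φ) (sin φ), x⟫_ℝ • vec2 (cos φ) (sin φ))) :
    (∀ w, (1 - 2 * sin φ ^ 2) * ⟪B w, w⟫_ℝ ≤ ⟪A w, w⟫_ℝ) ∧
    (∀ β : ℝ, 0 ≤ β → (∀ w, β * ⟪B w, w⟫_ℝ ≤ ⟪A w, w⟫_ℝ) → β ≤ 1) := by
  have hAw : ∀ w : EuclideanSpace ℝ (Fin 2),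
      ⟪A w, w⟫_ℝ = (1*w 0 + 0*w 1)^2 + (1-ε)*((w 0)^2+(w 1)^2 - (1*w 0 + 0*w 1)^2) := by
    intro w
    rw [hA w]
    simp [vec2, PiLp.inner_apply, Fin.sum_univ_two]
    ring
  have hBw : ∀ w : EuclideanSpace ℝ (Fin 2),
      ⟪B w, w⟫_ℝ = (cos φ*w 0 + sin φ*w 1)^2
        + (1-κ)*((w 0)^2+(w 1)^2 - (cos φ*w 0 + sin φ*w 1)^2) := by
    intro w
    rw [hB w]
    simp [vec2, PiLp.inner_apply, Fin.sum_univ_two]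
    ring
  have hsc : sin φ ^ 2 + cos φ ^ 2 = 1 := sin_sq_add_cos_sq φ
  constructor
  · intro w
    rw [hAw w, hBw w]
    have := key_scalar ε κ (sin φ) (cos φ) (w 0) (w 1) hsc hε hεκ hκ
    calc (1 - 2 * sin φ ^ 2) *
          ((cos φ*w 0 + sin φ*w 1)^2 + (1-κ)*((w 0)^2+(w 1)^2 - (cos φ*w 0 + sin φ*w 1)^2))
        ≤ (w 0)^2 + (1-ε)*((w 0)^2+(w 1)^2 - (w 0)^2) := this
      _ = (1*w 0 + 0*w 1)^2 + (1-ε)*((w 0)^2+(w 1)^2 - (1*w 0 + 0*w 1)^2) := by ring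
  · intro β hβ hineq
    have h := hineq (vec2 (cos φ) (sin φ))
    rw [hAw _, hBw _] at h
    have h0 : (vec2 (cos φ) (sin φ)) 0 = cos φ := by simp [vec2]
    have h1 : (vec2 (cos φ) (sin φ)) 1 = sin φ := by simp [vec2]
    rw [h0, h1] at h
    have e1 : cos φ * cos φ + sin φ * sin φ = 1 := by linear_combination hsc
    have e2 : cos φ ^ 2 + sin φ ^ 2 = 1 := by linear_combination hsc
    rw [e1, e2] at h
    nlinarith [mul_nonneg hε.le (sq_nonneg (sin φ)), h]
end

section
/- Let H be a complex Hilbert space and let T_1 ≥ T_2 ≥ ⋯ be a decreasing sequence of positive linear contractions on H. Then there exists a sequence (x_n) of bounded linear operators on H with ‖x_n‖ ≤ 1 for all n such that T_n = y_n^* y_n for all n, where y_n := x_n x_{n-1} ⋯ x_1; moreover the double commutant of {T_1, T_2, …} equals the double commutant of {x_1, x_2, …}. -/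
open scoped InnerProductSpace ComplexOrder

section Aux

open StarAlgebra in
/-- Commutation passes to elements of the elemental star algebra. -/
lemma aux_commute_of_mem_elemental {A : Type*} [CStarAlgebra A] {a c y : A}
    (h1 : Commute c a) (h2 : Commute c (star a)) (hy : y ∈ StarAlgebra.elemental ℂ a) :
    Commute c y := by
  induction hy using StarAlgebra.elemental.induction_on with
  | self => exact h1
  | star_self => exact h2
  | algebraMap r => exact (Algebra.commutes r c).symm
  | add u hu v hv pu pv => exact pu.add_right pv
  | mul u hu v hv pu pv => exact pu.mul_right pv
  | closure s hs hP v hv =>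
    have hclosed : IsClosed {w : A | Commute c w} :=
      isClosed_eq (continuous_const.mul continuous_id) (continuous_id.mul continuous_const)
    exact closure_minimal (fun u hu => hP u hu) hclosed hv

lemma aux_commute_cfc {A : Type*} [CStarAlgebra A] {a c : A} [ha : IsStarNormal a]
    (h1 : Commute c a) (h2 : Commute c (star a)) (f : ℂ → ℂ) :
    Commute c (cfc f a) := by
  refine cfc_cases (fun z => Commute c z) a f (by simp [Commute.zero_right]) fun hf ha' => ?_
  rw [cfcHom_eq_of_isStarNormal]
  exact aux_commute_of_mem_elemental h1 h2
    ((continuousFunctionalCalculus a ⟨_, hf.restrict⟩).2)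

lemma aux_commute_sqrt {H : Type*} [NormedAddCommGroup H] [InnerProductSpace ℂ H]
    [CompleteSpace H] {a c : H →L[ℂ] H} (ha : 0 ≤ a) (h : Commute c a) :
    Commute c (CFC.sqrt a) := by
  have hsa : IsSelfAdjoint a := .of_nonneg ha
  rw [CFC.sqrt_eq_cfc, cfc_nnreal_eq_real _ _ ha, cfc_real_eq_complex _ hsa]
  have : IsStarNormal a := hsa.isStarNormal
  exact aux_commute_cfc h (hsa.star_eq.symm ▸ h) _

open ContinuousLinearMap in
/-- The Douglas-type factorization lemma with control on the commutant. -/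
lemma aux_exists_factor {H : Type*} [NormedAddCommGroup H] [InnerProductSpace ℂ H]
    [CompleteSpace H] (A B : H →L[ℂ] H) (hB : IsSelfAdjoint B)
    (hle : ∀ ξ, ‖A ξ‖ ≤ ‖B ξ‖) :
    ∃ x : H →L[ℂ] H, ‖x‖ ≤ 1 ∧ x * B = A ∧
      ∀ c : H →L[ℂ] H, Commute c A → Commute c B → Commute c x := by
  classical
  have hBsym : (B : H →ₗ[ℂ] H).IsSymmetric := isSelfAdjoint_iff_isSymmetric.mp hB
  set B' : H →ₗ[ℂ] H := (B : H →ₗ[ℂ] H) with hB'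
  set A' : H →ₗ[ℂ] H := (A : H →ₗ[ℂ] H) with hA'
  have hker : LinearMap.ker B' ≤ LinearMap.ker A' := by
    intro ξ hξ
    rw [LinearMap.mem_ker] at hξ ⊢
    have h1 := hle ξ
    have h2 : B ξ = 0 := hξ
    rw [h2, norm_zero] at h1
    have : ‖A ξ‖ = 0 := le_antisymm h1 (norm_nonneg _)
    show A ξ = 0
    simpa [norm_eq_zero] using this
  set S₀ : Submodule ℂ H := LinearMap.range B' with hS₀def
  set f₀ : S₀ →ₗ[ℂ] H :=
    (Submodule.liftQ (LinearMap.ker B') A' hker).comp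
      (LinearMap.quotKerEquivRange B').symm.toLinearMap with hf₀def
  have hf₀key : ∀ ξ : H, ∀ h : B ξ ∈ S₀, f₀ ⟨B ξ, h⟩ = A ξ := by
    intro ξ h
    have h1 : (LinearMap.quotKerEquivRange B').symm ⟨B ξ, h⟩ =
        Submodule.Quotient.mk ξ := by
      rw [LinearEquiv.symm_apply_eq]
      ext
      exact (LinearMap.quotKerEquivRange_apply_mk B' ξ)
    simp only [hf₀def, LinearMap.comp_apply, LinearEquiv.coe_toLinearMap, h1]
    exact Submodule.liftQ_apply _ _ _
  have hf₀norm : ∀ v : S₀, ‖f₀ v‖ ≤ 1 * ‖v‖ := by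
    rintro ⟨w, ξ, rfl⟩
    have : f₀ ⟨B' ξ, ⟨ξ, rfl⟩⟩ = A ξ := hf₀key ξ ⟨ξ, rfl⟩
    rw [this, one_mul]
    exact hle ξ
  set f : S₀ →L[ℂ] H := f₀.mkContinuous 1 hf₀norm with hfdef
  set S : Submodule ℂ H := S₀.topologicalClosure with hSdef
  haveI : CompleteSpace S := (S₀.isClosed_topologicalClosure).completeSpace_coe
  have hS₀S : S₀ ≤ S := S₀.le_topologicalClosure
  set einc : S₀ →L[ℂ] S :=
    LinearMap.mkContinuous (Submodule.inclusion hS₀S) 1 (fun v => by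
      rw [one_mul]; rfl) with hedef
  have hiso : Isometry einc := AddMonoidHomClass.isometry_of_norm _ (fun v => rfl)
  have hdense : DenseRange einc := by
    refine Topology.IsInducing.subtypeVal.dense_iff.2 fun s => ?_
    convert show (s : H) ∈ closure (S₀ : Set H) from s.prop
    rw [← Set.range_comp]
    refine Set.ext fun w => ⟨?_, fun hw => ⟨⟨w, hw⟩, rfl⟩⟩
    rintro ⟨v, rfl⟩
    exact v.prop
  set x₀ : S →L[ℂ] H := f.extend einc with hx₀def
  set x : H →L[ℂ] H := x₀.comp (S.orthogonalProjectionOnto) with hxdef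
  have hmemS : ∀ ξ : H, B ξ ∈ S := fun ξ => hS₀S ⟨ξ, rfl⟩
  have hxB : ∀ ξ : H, x (B ξ) = A ξ := by
    intro ξ
    have hP : S.orthogonalProjectionOnto (B ξ) = ⟨B ξ, hmemS ξ⟩ :=
      Submodule.orthogonalProjectionOnto_mem_subspace_eq_self (⟨B ξ, hmemS ξ⟩ : S)
    have he : (⟨B ξ, hmemS ξ⟩ : S) = einc ⟨B ξ, ⟨ξ, rfl⟩⟩ := by
      ext; rfl
    calc x (B ξ) = x₀ (S.orthogonalProjectionOnto (B ξ)) := rfl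
      _ = x₀ (einc ⟨B ξ, ⟨ξ, rfl⟩⟩) := by rw [hP, he]
      _ = f ⟨B ξ, ⟨ξ, rfl⟩⟩ := ContinuousLinearMap.extend_eq _ hdense hiso.isUniformInducing _
      _ = A ξ := hf₀key ξ ⟨ξ, rfl⟩
  have hxBeq : x * B = A := by
    ext ξ
    exact hxB ξ
  have hfnorm : ‖f‖ ≤ 1 := f₀.mkContinuous_norm_le zero_le_one hf₀norm
  have hx₀norm : ‖x₀‖ ≤ (1 : NNReal) * ‖f‖ :=
    f.opNorm_extend_le hdense (N := 1) (fun v => by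
      rw [NNReal.coe_one, one_mul]; rfl)
  have hxnorm : ‖x‖ ≤ 1 := by
    have h2 : ‖S.orthogonalProjectionOnto‖ ≤ 1 := Submodule.orthogonalProjectionOnto_norm_le S
    rw [NNReal.coe_one, one_mul] at hx₀norm
    have hx₀1 : ‖x₀‖ ≤ 1 := hx₀norm.trans hfnorm
    calc ‖x‖ ≤ ‖x₀‖ * ‖S.orthogonalProjectionOnto‖ := ContinuousLinearMap.opNorm_comp_le _ _
      _ ≤ 1 * 1 := mul_le_mul hx₀1 h2 (ContinuousLinearMap.opNorm_nonneg _) zero_le_one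
      _ = 1 := one_mul 1
  have hSclosure : (S : Set H) = closure (S₀ : Set H) := S₀.topologicalClosure_coe
  have hSperp_of_ker : ∀ t : H, B t = 0 → t ∈ Sᗮ := by
    intro t ht
    rw [Submodule.mem_orthogonal]
    intro u hu
    have hcl : IsClosed {u : H | ⟪u, t⟫_ℂ = 0} :=
      isClosed_eq (Continuous.inner continuous_id continuous_const) continuous_const
    have hsub : (S₀ : Set H) ⊆ {u : H | ⟪u, t⟫_ℂ = 0} := by
      rintro _ ⟨ξ, rfl⟩
      show ⟪B ξ, t⟫_ℂ = 0
      have h2 : ⟪B ξ, t⟫_ℂ = ⟪ξ, B t⟫_ℂ := hBsym ξ t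
      rw [h2, ht, inner_zero_right]
    have hfin : (S : Set H) ⊆ {u : H | ⟪u, t⟫_ℂ = 0} := by
      rw [hSclosure]
      exact closure_minimal hsub hcl
    exact hfin hu
  have hker_of_perp : ∀ t : H, t ∈ Sᗮ → B t = 0 := by
    intro t ht
    rw [Submodule.mem_orthogonal] at ht
    have h1 : ⟪B (B t), t⟫_ℂ = 0 := ht (B (B t)) (hmemS (B t))
    have h2 : ⟪B t, B t⟫_ℂ = 0 := by
      have h3 : ⟪B (B t), t⟫_ℂ = ⟪B t, B t⟫_ℂ := hBsym (B t) t
      rw [← h3]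
      exact h1
    exact inner_self_eq_zero.mp h2
  have hx_perp : ∀ t : H, t ∈ Sᗮ → x t = 0 := by
    intro t ht
    have hPz : S.orthogonalProjectionOnto t = 0 :=
      Submodule.orthogonalProjectionOnto_apply_of_mem_orthogonal ht
    calc x t = x₀ (S.orthogonalProjectionOnto t) := rfl
      _ = x₀ 0 := by rw [hPz]
      _ = 0 := map_zero _
  refine ⟨x, hxnorm, hxBeq, ?_⟩
  intro c hcA hcB
  have hcB' : ∀ ξ, c (B ξ) = B (c ξ) := fun ξ => by
    have h := DFunLike.congr_fun hcB ξ
    simpa [ContinuousLinearMap.mul_apply] using h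
  have hcA' : ∀ ξ, c (A ξ) = A (c ξ) := fun ξ => by
    have h := DFunLike.congr_fun hcA ξ
    simpa [ContinuousLinearMap.mul_apply] using h
  have honS : ∀ u ∈ S, x (c u) = c (x u) := by
    have hcl : IsClosed {u : H | x (c u) = c (x u)} :=
      isClosed_eq (x.continuous.comp c.continuous) (c.continuous.comp x.continuous)
    have hsub : (S₀ : Set H) ⊆ {u : H | x (c u) = c (x u)} := by
      rintro _ ⟨ξ, rfl⟩
      show x (c (B ξ)) = c (x (B ξ))
      rw [hcB' ξ, hxB, hxB, hcA']
    intro u hu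
    have hfin : (S : Set H) ⊆ {u : H | x (c u) = c (x u)} := by
      rw [hSclosure]
      exact closure_minimal hsub hcl
    exact hfin hu
  show c * x = x * c
  ext ξ
  have hsS : ((S.orthogonalProjectionOnto ξ : S) : H) ∈ S := (S.orthogonalProjectionOnto ξ).2
  set s : H := ((S.orthogonalProjectionOnto ξ : S) : H) with hs
  have htperp : ξ - s ∈ Sᗮ := Submodule.sub_starProjection_mem_orthogonal (K := S) ξ
  have hxt : x (ξ - s) = 0 := hx_perp _ htperp
  have hBt : B (ξ - s) = 0 := hker_of_perp _ htperp
  have hBct : B (c (ξ - s)) = 0 := by rw [← hcB', hBt, map_zero]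
  have hxct : x (c (ξ - s)) = 0 := hx_perp _ (hSperp_of_ker _ hBct)
  have hxi : x ξ = x s := by
    have hd : ξ = s + (ξ - s) := by abel
    conv_lhs => rw [hd]
    rw [map_add, hxt, add_zero]
  have hxc : x (c ξ) = x (c s) := by
    have hd : c ξ = c s + c (ξ - s) := by rw [← map_add]; congr 1; abel
    rw [hd, map_add, hxct, add_zero]
  show c (x ξ) = x (c ξ)
  rw [hxi, hxc, honS s hsS]

end Aux

set_option maxHeartbeats 1000000 in
/-- Every decreasing sequence of positive contractions `T n` arises as `T n = y n^* ∘ y n`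
for products `y n = x n ∘ ⋯ ∘ x 0` of contractions `x n`, with the double commutant of the
`T n` equal to the double commutant of the `x n`. -/
theorem decreasing_positive_contractions_as_products
    {H : Type*} [NormedAddCommGroup H] [InnerProductSpace ℂ H] [CompleteSpace H]
    (T : ℕ → H →L[ℂ] H)
    (hpos : ∀ n, ∀ ξ : H, 0 ≤ ⟪(T n) ξ, ξ⟫_ℂ)
    (hcontr : ∀ n, ‖T n‖ ≤ 1)
    (hdec : ∀ n, ∀ ξ : H, ⟪(T (n + 1)) ξ, ξ⟫_ℂ ≤ ⟪(T n) ξ, ξ⟫_ℂ) :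
    ∃ x y : ℕ → H →L[ℂ] H,
      (∀ n, ‖x n‖ ≤ 1) ∧
      y 0 = x 0 ∧
      (∀ n, y (n + 1) = (x (n + 1)).comp (y n)) ∧
      (∀ n, T n = (ContinuousLinearMap.adjoint (y n)).comp (y n)) ∧
      Set.centralizer (Set.centralizer (Set.range T)) =
        Set.centralizer (Set.centralizer (Set.range x)) := by
  classical
  have hTpos : ∀ n, (0 : H →L[ℂ] H) ≤ T n := by
    intro n
    rw [ContinuousLinearMap.nonneg_iff_isPositive,
      ContinuousLinearMap.isPositive_iff_complex]
    intro ξ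
    have h := hpos n ξ
    rw [Complex.le_def] at h
    simp only [Complex.zero_re, Complex.zero_im] at h
    constructor
    · apply Complex.ext
      · simp
      · simp [← h.2]
    · simpa using h.1
  set sqB : ℕ → H →L[ℂ] H := fun n => CFC.sqrt (T n) with hsqB
  have hsqnn : ∀ n, (0 : H →L[ℂ] H) ≤ sqB n := fun n => CFC.sqrt_nonneg _
  have hsqsa : ∀ n, IsSelfAdjoint (sqB n) := fun n => .of_nonneg (hsqnn n)
  have hsqmul : ∀ n, sqB n * sqB n = T n := fun n =>
    CFC.sqrt_mul_sqrt_self _ (hTpos n)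
  have hsqsym : ∀ n, ((sqB n : H →L[ℂ] H) : H →ₗ[ℂ] H).IsSymmetric := fun n =>
    (ContinuousLinearMap.isSelfAdjoint_iff_isSymmetric).mp (hsqsa n)
  have hnormsq : ∀ n ξ, ‖sqB n ξ‖ ^ 2 = (⟪(T n) ξ, ξ⟫_ℂ).re := by
    intro n ξ
    have h1 : ⟪(T n) ξ, ξ⟫_ℂ = ⟪sqB n ξ, sqB n ξ⟫_ℂ := by
      conv_lhs => rw [← hsqmul n]
      exact hsqsym n (sqB n ξ) ξ
    rw [h1]
    have h2 := inner_self_eq_norm_sq (𝕜 := ℂ) (sqB n ξ)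
    simpa using h2.symm
  have hle : ∀ n ξ, ‖sqB (n + 1) ξ‖ ≤ ‖sqB n ξ‖ := by
    intro n ξ
    have h := hdec n ξ
    rw [Complex.le_def] at h
    have h2 : ‖sqB (n + 1) ξ‖ ^ 2 ≤ ‖sqB n ξ‖ ^ 2 := by
      rw [hnormsq, hnormsq]
      exact h.1
    nlinarith [norm_nonneg (sqB (n + 1) ξ), norm_nonneg (sqB n ξ)]
  choose xs hxs1 hxs2 hxs3 using fun n =>
    aux_exists_factor (sqB (n + 1)) (sqB n) (hsqsa n) (hle n)
  set x : ℕ → H →L[ℂ] H := fun n => Nat.casesOn n (sqB 0) xs with hxdef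
  have hx0norm : ‖sqB 0‖ ≤ 1 := by
    have hstar := CStarRing.norm_star_mul_self (x := sqB 0)
    rw [(hsqsa 0).star_eq, hsqmul 0] at hstar
    nlinarith [norm_nonneg (sqB 0), hcontr 0]
  refine ⟨x, sqB, ?_, rfl, ?_, ?_, ?_⟩
  · intro n
    cases n with
    | zero => exact hx0norm
    | succ k => exact hxs1 k
  · intro n
    rw [← ContinuousLinearMap.mul_def]
    exact (hxs2 n).symm
  · intro n
    rw [← ContinuousLinearMap.star_eq_adjoint, (hsqsa n).star_eq,
      ← ContinuousLinearMap.mul_def]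
    exact (hsqmul n).symm
  · -- centralizer equality
    have hdir1 : ∀ n, ∀ c ∈ Set.centralizer (Set.range T), Commute c (x n) := by
      intro n c hc
      have hcT : ∀ k, Commute c (T k) := fun k =>
        (hc (T k) ⟨k, rfl⟩).symm
      have hcs : ∀ k, Commute c (sqB k) := fun k =>
        aux_commute_sqrt (hTpos k) (hcT k)
      cases n with
      | zero => exact hcs 0
      | succ k => exact hxs3 k c (hcs (k + 1)) (hcs k)
    have hdir2 : ∀ n, ∀ c ∈ Set.centralizer (Set.range x), Commute c (T n) := by
      intro n c hc
      have hcx : ∀ k, Commute c (x k) := fun k => (hc (x k) ⟨k, rfl⟩).symm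
      have hcs : ∀ k, Commute c (sqB k) := by
        intro k
        induction k with
        | zero => exact hcx 0
        | succ m ih =>
          rw [← hxs2 m]
          exact (hcx (m + 1)).mul_right ih
      rw [← hsqmul n]
      exact (hcs n).mul_right (hcs n)
    have h1 : Set.range T ⊆ Set.centralizer (Set.centralizer (Set.range x)) := by
      rintro _ ⟨n, rfl⟩
      rw [Set.mem_centralizer_iff]
      intro c hc
      exact hdir2 n c hc
    have h2 : Set.range x ⊆ Set.centralizer (Set.centralizer (Set.range T)) := by
      rintro _ ⟨n, rfl⟩
      rw [Set.mem_centralizer_iff]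
      intro c hc
      exact hdir1 n c hc
    have key : ∀ U V : Set (H →L[ℂ] H),
        U ⊆ Set.centralizer (Set.centralizer V) →
        Set.centralizer (Set.centralizer U) ⊆
          Set.centralizer (Set.centralizer V) := by
      intro U V h
      have ha := Set.centralizer_subset (Set.centralizer_subset h)
      rwa [Set.centralizer_centralizer_centralizer] at ha
    exact Set.Subset.antisymm (key _ _ h1) (key _ _ h2)
end

section
/- Let H be a complex Hilbert space and let (e_n)_{n∈ℕ} be a sequence of orthogonal projections on H. Then there exists a decreasing sequence T_1 ≥ T_2 ≥ ⋯ of positive linear contractions on H such that the double commutant of {T_1, T_2, …} equals the double commutant of {e_1, e_2, …}. (Consequently, every von Neumann algebra on a separable Hilbert space is generated, as a von Neumann algebra, by a decreasing sequence of positive contractions.) -/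
open scoped InnerProductSpace ComplexOrder

/-- For any sequence of orthogonal projections `e n` there is a decreasing sequence of
positive contractions `T n` generating the same von Neumann algebra (the double commutants
coincide). -/
theorem vonNeumann_algebra_generated_by_decreasing_contractions
    {H : Type*} [NormedAddCommGroup H] [InnerProductSpace ℂ H] [CompleteSpace H]
    (e : ℕ → H →L[ℂ] H)
    (heSa : ∀ n, IsSelfAdjoint (e n))
    (heIdem : ∀ n, (e n).comp (e n) = e n) :
    ∃ T : ℕ → H →L[ℂ] H,
      (∀ n, ∀ ξ : H, 0 ≤ ⟪(T n) ξ, ξ⟫_ℂ) ∧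
      (∀ n, ‖T n‖ ≤ 1) ∧
      (∀ n, ∀ ξ : H, ⟪(T (n + 1)) ξ, ξ⟫_ℂ ≤ ⟪(T n) ξ, ξ⟫_ℂ) ∧
      Set.centralizer (Set.centralizer (Set.range T)) =
        Set.centralizer (Set.centralizer (Set.range e)) := by
  classical
  have hsym : ∀ n, (e n).IsSymmetric := fun n => (heSa n).isSymmetric
  have hidem : ∀ n (ξ : H), e n (e n ξ) = e n ξ := by
    intro n ξ
    have := congrArg (fun A : H →L[ℂ] H => A ξ) (heIdem n)
    simpa using this
  have hinner_eq : ∀ n (ξ : H), ⟪e n ξ, ξ⟫_ℂ = ⟪e n ξ, e n ξ⟫_ℂ := by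
    intro n ξ
    conv_lhs => rw [← hidem n ξ]
    exact hsym n (e n ξ) ξ
  have hpos : ∀ n (ξ : H), 0 ≤ ⟪e n ξ, ξ⟫_ℂ := by
    intro n ξ
    rw [hinner_eq, Complex.nonneg_iff]
    constructor
    · exact_mod_cast inner_self_nonneg (𝕜 := ℂ) (x := e n ξ)
    · exact_mod_cast (inner_self_im (𝕜 := ℂ) (e n ξ)).symm
  -- norm bound for projections
  have hnorm_e : ∀ n, ‖e n‖ ≤ 1 := by
    intro n
    refine (e n).opNorm_le_bound zero_le_one (fun ξ => ?_)
    rw [one_mul]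
    by_cases h0 : ‖e n ξ‖ = 0
    · rw [h0]; exact norm_nonneg _
    have hsq : (‖e n ξ‖ : ℝ) ^ 2 = ‖⟪e n ξ, ξ⟫_ℂ‖ := by
      rw [hinner_eq, inner_self_eq_norm_sq_to_K]
      simp
    have h1 : ‖e n ξ‖ * ‖e n ξ‖ ≤ ‖e n ξ‖ * ‖ξ‖ := by
      have := norm_inner_le_norm (𝕜 := ℂ) (e n ξ) ξ
      nlinarith [hsq, this]
    exact le_of_mul_le_mul_left h1 (lt_of_le_of_ne (norm_nonneg _) (Ne.symm h0))
  -- the coefficients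
  set c : ℕ → ℝ := fun k => (2⁻¹ : ℝ) ^ (k + 1) with hc
  have hc_pos : ∀ k, (0 : ℝ) < c k := fun k => pow_pos (by norm_num) _
  have hc_sum : HasSum c 1 := by
    have h := (hasSum_geometric_of_lt_one (r := (2⁻¹ : ℝ)) (by norm_num) (by norm_num)).mul_right (2⁻¹ : ℝ)
    have : (1 - (2⁻¹ : ℝ))⁻¹ * 2⁻¹ = 1 := by norm_num
    rw [this] at h
    simpa [hc, pow_succ, mul_inv] using h
  set f : ℕ → (H →L[ℂ] H) := fun k => ((c k : ℝ) : ℂ) • e k with hf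
  have hf_norm : ∀ k, ‖f k‖ ≤ c k := by
    intro k
    rw [hf]
    calc ‖((c k : ℝ) : ℂ) • e k‖ = ‖((c k : ℝ) : ℂ)‖ * ‖e k‖ := norm_smul _ _
    _ ≤ c k * 1 := by
        apply mul_le_mul _ (hnorm_e k) (norm_nonneg _) (hc_pos k).le
        rw [Complex.norm_real, Real.norm_eq_abs, abs_of_nonneg (hc_pos k).le]
    _ = c k := mul_one _
  set g : ℕ → ℕ → (H →L[ℂ] H) := fun n k => if n ≤ k then f k else 0 with hg
  have hg_norm : ∀ n k, ‖g n k‖ ≤ c k := by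
    intro n k
    rw [hg]
    by_cases h : n ≤ k
    · simpa [h] using hf_norm k
    · simpa [h] using (hc_pos k).le
  have hg_sum : ∀ n, Summable (g n) :=
    fun n => Summable.of_norm_bounded hc_sum.summable (hg_norm n)
  set T : ℕ → (H →L[ℂ] H) := fun n => ∑' k, g n k with hT
  -- applied-inner sums
  have hinner_hasSum : ∀ n (ξ : H),
      HasSum (fun k => ⟪g n k ξ, ξ⟫_ℂ) ⟪T n ξ, ξ⟫_ℂ := by
    intro n ξ
    have hφadd : ∀ A B : H →L[ℂ] H, ⟪(A + B) ξ, ξ⟫_ℂ = ⟪A ξ, ξ⟫_ℂ + ⟪B ξ, ξ⟫_ℂ := by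
      intro A B
      simp [ContinuousLinearMap.add_apply, inner_add_left]
    let φ : (H →L[ℂ] H) →+ ℂ := AddMonoidHom.mk' (fun A => ⟪A ξ, ξ⟫_ℂ) hφadd
    have hφcont : Continuous φ := by
      have h1 : Continuous (fun A : H →L[ℂ] H => A ξ) :=
        (ContinuousLinearMap.apply ℂ H ξ).continuous
      exact Continuous.inner h1 continuous_const
    exact (hg_sum n).hasSum.map φ hφcont
  -- termwise positivity
  have hterm_pos : ∀ n k (ξ : H), 0 ≤ ⟪g n k ξ, ξ⟫_ℂ := by
    intro n k ξ
    rw [hg]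
    by_cases h : n ≤ k
    · simp only [h, if_true, hf, ContinuousLinearMap.smul_apply, inner_smul_left,
        Complex.conj_ofReal]
      exact mul_nonneg (Complex.zero_le_real.mpr (hc_pos k).le) (hpos k ξ)
    · simp [h]
  refine ⟨T, ?_, ?_, ?_, ?_⟩
  · intro n ξ
    exact hasSum_le (fun k => hterm_pos n k ξ) hasSum_zero (hinner_hasSum n ξ)
  · intro n
    refine le_trans (tsum_of_norm_bounded hc_sum (hg_norm n)) le_rfl
  · intro n ξ
    refine hasSum_le (fun k => ?_) (hinner_hasSum (n + 1) ξ) (hinner_hasSum n ξ)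
    by_cases h1 : n + 1 ≤ k
    · have h2 : n ≤ k := le_trans (Nat.le_succ n) h1
      simp [hg, h1, h2]
    · by_cases h2 : n ≤ k
      · simp only [hg, h1, if_false, h2, if_true, ContinuousLinearMap.zero_apply, inner_zero_left]
        simpa [hg, h2] using hterm_pos n k ξ
      · simp [hg, h1, h2]
  · -- the centralizers agree
    have key : Set.centralizer (Set.range T) = Set.centralizer (Set.range e) := by
      -- T n = T (n+1) + f n
      have hstep : ∀ n, T n = T (n + 1) + f n := by
        intro n
        have hgsplit : ∀ k, g n k = g (n + 1) k + (if k = n then f n else 0) := by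
          intro k
          rcases lt_trichotomy k n with h | h | h
          · simp [hg, Nat.not_le.mpr h, Nat.not_le.mpr (Nat.lt_succ_of_lt h), Nat.ne_of_lt h]
          · subst h
            simp [hg, Nat.not_succ_le_self]
          · simp [hg, Nat.le_of_lt h, Nat.succ_le_of_lt h, Nat.ne_of_gt h]
        have hδ : Summable (fun k => if k = n then f n else 0) :=
          (hasSum_ite_eq n (f n)).summable
        calc T n = ∑' k, (g (n + 1) k + (if k = n then f n else 0)) := by
              rw [hT]; exact tsum_congr hgsplit
        _ = (∑' k, g (n + 1) k) + ∑' k, (if k = n then f n else 0) :=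
              Summable.tsum_add (hg_sum (n + 1)) hδ
        _ = T (n + 1) + f n := by rw [hT, (hasSum_ite_eq n (f n)).tsum_eq]
      ext S
      simp only [Set.mem_centralizer_iff]
      constructor
      · rintro hS - ⟨n, rfl⟩
        have h1 : T n * S = S * T n := hS _ ⟨n, rfl⟩
        have h2 : T (n + 1) * S = S * T (n + 1) := hS _ ⟨n + 1, rfl⟩
        have h3 : f n * S = S * f n := by
          have := hstep n
          have h4 : (T (n + 1) + f n) * S = S * (T (n + 1) + f n) := by rw [← this, h1]
          rw [add_mul, mul_add, h2] at h4
          exact add_left_cancel h4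
        have h5 : ((c n : ℝ) : ℂ) • (e n * S) = ((c n : ℝ) : ℂ) • (S * e n) := by
          rw [← smul_mul_assoc, ← mul_smul_comm]
          exact h3
        have hcne : ((c n : ℝ) : ℂ) ≠ 0 := by
          simp only [ne_eq, Complex.ofReal_eq_zero]
          exact (hc_pos n).ne'
        exact smul_right_injective _ hcne h5
      · rintro hS - ⟨n, rfl⟩
        have hcomm : ∀ k, Commute S (g n k) := by
          intro k
          rw [hg]
          by_cases h : n ≤ k
          · simp only [h, if_true, hf]
            have : Commute S (e k) := (hS _ ⟨k, rfl⟩).symm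
            exact this.smul_right _
          · simp only [h, if_false]
            exact Commute.zero_right S
        exact (Commute.tsum_right S hcomm).symm.eq
    rw [key]
end

section
/- Let H be a complex Hilbert space, T_1 ≥ T_2 ≥ ⋯ a decreasing sequence of positive linear contractions on H, T the strong operator limit of (T_n), and P the orthogonal projection onto {ξ ∈ H : Tξ = ξ}. Let σ : ℕ → ℕ be proper and S_n^σ := T_{σ(n)} ⋯ T_{σ(1)}. Then (S_n^σ)^* ξ → P ξ in norm for every ξ ∈ H; in particular S_n^σ → P in the weak operator topology. -/
open Filter Topology
open scoped InnerProductSpace ComplexOrder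

section Aux

variable {H : Type*} [NormedAddCommGroup H] [InnerProductSpace ℂ H] [CompleteSpace H]

/-- An operator with nonnegative complex quadratic form is selfadjoint. -/
lemma aux_selfAdjoint (B : H →L[ℂ] H) (hpos : ∀ v : H, 0 ≤ ⟪B v, v⟫_ℂ) :
    IsSelfAdjoint B := by
  rw [ContinuousLinearMap.isSelfAdjoint_iff_isSymmetric]
  have := (LinearMap.isSymmetric_iff_inner_map_self_real (B : H →ₗ[ℂ] H)).2
  refine this fun v => ?_
  have h := hpos v
  rw [Complex.le_def] at h
  have him : (⟪B v, v⟫_ℂ).im = 0 := by simpa using h.2.symm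
  simpa using Complex.conj_eq_iff_im.2 him

/-- Cauchy–Schwarz style inequality for a selfadjoint operator with nonnegative
quadratic form. -/
lemma aux_sq_norm_le (B : H →L[ℂ] H) (hB : IsSelfAdjoint B)
    (hpos : ∀ v : H, 0 ≤ (⟪B v, v⟫_ℂ).re) (v : H) :
    ‖B v‖ ^ 2 ≤ ‖B‖ * (⟪B v, v⟫_ℂ).re := by
  rcases eq_or_ne (B v) 0 with h0 | h0
  · have : ‖B v‖ ^ 2 = 0 := by rw [h0]; simp
    rw [this]
    exact mul_nonneg (norm_nonneg _) (hpos v)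
  · have hsym : ∀ x y : H, ⟪B x, y⟫_ℂ = ⟪x, B y⟫_ℂ := fun x y => by
      rw [← ContinuousLinearMap.adjoint_inner_left, hB.adjoint_eq]
    have e1 : ⟪B v, B v⟫_ℂ = ((‖B v‖ : ℂ) ^ 2) := inner_self_eq_norm_sq_to_K _
    have e2 : ⟪B (B v), v⟫_ℂ = ((‖B v‖ : ℂ) ^ 2) := by
      rw [hsym (B v) v]; exact inner_self_eq_norm_sq_to_K _
    have key : ∀ t : ℝ, 0 ≤ (⟪B (B v), B v⟫_ℂ).re * (t * t) + (2 * ‖B v‖ ^ 2) * t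
        + (⟪B v, v⟫_ℂ).re := by
      intro t
      have h := hpos (v + (t : ℂ) • B v)
      have expand : (⟪B (v + (t : ℂ) • B v), v + (t : ℂ) • B v⟫_ℂ).re
          = (⟪B (B v), B v⟫_ℂ).re * (t * t) + (2 * ‖B v‖ ^ 2) * t + (⟪B v, v⟫_ℂ).re := by
        rw [map_add, map_smul]
        simp only [inner_add_left, inner_add_right, inner_smul_left, inner_smul_right,
          e1, e2, Complex.conj_ofReal, Complex.add_re, Complex.mul_re,
          Complex.ofReal_re, Complex.ofReal_im, smul_eq_mul, ← Complex.ofReal_pow]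
        push_cast
        ring_nf
      rw [expand] at h
      exact h
    have hd := discrim_le_zero key
    rw [discrim] at hd
    have ha : (⟪B (B v), B v⟫_ℂ).re ≤ ‖B‖ * ‖B v‖ ^ 2 := by
      have h1 : RCLike.re ⟪B (B v), B v⟫_ℂ ≤ ‖B (B v)‖ * ‖B v‖ := re_inner_le_norm _ _
      have h2 : ‖B (B v)‖ ≤ ‖B‖ * ‖B v‖ := B.le_opNorm _
      have h3 : RCLike.re ⟪B (B v), B v⟫_ℂ = (⟪B (B v), B v⟫_ℂ).re := rfl
      nlinarith [norm_nonneg (B v), norm_nonneg B]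
    have hwpos : (0 : ℝ) < ‖B v‖ := norm_pos_iff.2 h0
    have hc := hpos v
    have hx : (0:ℝ) < ‖B v‖ ^ 2 := by positivity
    nlinarith [mul_le_mul_of_nonneg_right ha hc, hx]

end Aux

section Pow

variable {H : Type*} [NormedAddCommGroup H] [InnerProductSpace ℂ H] [CompleteSpace H]

lemma aux_pow_tendsto (B : H →L[ℂ] H) (hB : IsSelfAdjoint B) (hnorm : ‖B‖ ≤ 1)
    (hpos : ∀ v : H, 0 ≤ (⟪B v, v⟫_ℂ).re) (μ : H)
    (hμ : ∀ w : H, B w = w → ⟪μ, w⟫_ℂ = 0) :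
    Tendsto (fun m => ‖(B ^ m) μ‖) atTop (𝓝 0) := by
  -- the operator `C = 1 - B`
  set C : H →L[ℂ] H := 1 - B with hC
  have hCsa : IsSelfAdjoint C := (IsSelfAdjoint.one (H →L[ℂ] H)).sub hB
  have hCapp : ∀ v : H, C v = v - B v := fun v => by simp [hC]
  have hCpos : ∀ v : H, 0 ≤ (⟪C v, v⟫_ℂ).re := by
    intro v
    have h1 : (⟪B v, v⟫_ℂ).re ≤ ‖v‖ * ‖v‖ := by
      have := re_inner_le_norm (𝕜 := ℂ) (B v) v
      have h2 : ‖B v‖ * ‖v‖ ≤ ‖v‖ * ‖v‖ := by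
        have h3 : ‖B v‖ ≤ ‖v‖ := by
          have := B.le_opNorm v
          nlinarith [norm_nonneg v]
        nlinarith [norm_nonneg v]
      exact le_trans this h2
    have h4 : ⟪C v, v⟫_ℂ = ⟪v, v⟫_ℂ - ⟪B v, v⟫_ℂ := by rw [hCapp, inner_sub_left]
    have h5 : (⟪v, v⟫_ℂ).re = ‖v‖ ^ 2 := by
      simpa using inner_self_eq_norm_sq (𝕜 := ℂ) v
    rw [h4, Complex.sub_re, h5]
    nlinarith
  have hCnorm : ‖C‖ ≤ 2 := by
    calc ‖C‖ ≤ ‖(1 : H →L[ℂ] H)‖ + ‖B‖ := norm_sub_le _ _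
      _ ≤ 1 + 1 := add_le_add ContinuousLinearMap.norm_id_le hnorm
      _ = 2 := by norm_num
  have hCfix : ∀ q : H, (⟪C q, q⟫_ℂ).re = 0 → B q = q := by
    intro q hq
    have := aux_sq_norm_le C hCsa hCpos q
    rw [hq, mul_zero] at this
    have h0 : C q = 0 := by
      have := norm_le_zero_iff.1 (by nlinarith [norm_nonneg (C q)] : ‖C q‖ ≤ 0)
      exact this
    have h1 := hCapp q
    rw [h0] at h1
    exact (sub_eq_zero.mp h1.symm).symm
  -- powers are contractions
  have hpowbd : ∀ (m : ℕ) (x : H), ‖(B ^ m) x‖ ≤ ‖x‖ := by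
    intro m
    induction m with
    | zero => intro x; simp
    | succ k ih =>
      intro x
      rw [pow_succ, ContinuousLinearMap.mul_apply]
      calc ‖(B ^ k) (B x)‖ ≤ ‖B x‖ := ih _
        _ ≤ ‖x‖ := by
            have := B.le_opNorm x
            nlinarith [norm_nonneg x]
  set A : ℕ → ℝ := fun m => ‖(B ^ m) μ‖ ^ 2 with hA
  have hAsucc : ∀ m, (B ^ (m + 1)) μ = B ((B ^ m) μ) := fun m => by
    rw [pow_succ', ContinuousLinearMap.mul_apply]
  have hAanti : ∀ m, A (m + 1) ≤ A m := by
    intro m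
    have h1 : ‖(B ^ (m + 1)) μ‖ ≤ ‖(B ^ m) μ‖ := by
      rw [hAsucc]
      have := B.le_opNorm ((B ^ m) μ)
      nlinarith [norm_nonneg ((B ^ m) μ)]
    have h0 := norm_nonneg ((B ^ (m + 1)) μ)
    simp only [hA]
    nlinarith
  have hAtend : Tendsto A atTop (𝓝 (⨅ m, A m)) :=
    tendsto_atTop_ciInf (antitone_nat_of_succ_le hAanti)
      ⟨0, fun x ⟨m, hm⟩ => hm ▸ sq_nonneg _⟩
  have hdiff : Tendsto (fun m => A m - A (m + 1)) atTop (𝓝 0) := by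
    have h2 : Tendsto (fun m => A (m + 1)) atTop (𝓝 (⨅ m, A m)) :=
      hAtend.comp (tendsto_add_atTop_nat 1)
    simpa using hAtend.sub h2
  have hre : ∀ m, A (m + 1) ≤ (⟪B ((B ^ m) μ), (B ^ m) μ⟫_ℂ).re := by
    intro m
    have h1 := aux_sq_norm_le B hB hpos ((B ^ m) μ)
    have h2 : ‖B‖ * (⟪B ((B ^ m) μ), (B ^ m) μ⟫_ℂ).re
        ≤ (⟪B ((B ^ m) μ), (B ^ m) μ⟫_ℂ).re := by
      have := hpos ((B ^ m) μ)
      nlinarith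
    have h3 : A (m + 1) = ‖B ((B ^ m) μ)‖ ^ 2 := by rw [hA]; simp only [hAsucc]
    rw [h3]
    exact le_trans h1 h2
  have hAm : ∀ m, (⟪(B ^ m) μ, (B ^ m) μ⟫_ℂ).re = A m := fun m => by
    simpa [hA] using inner_self_eq_norm_sq (𝕜 := ℂ) ((B ^ m) μ)
  have hCe : ∀ m, (⟪C ((B ^ m) μ), (B ^ m) μ⟫_ℂ).re ≤ A m - A (m + 1) := by
    intro m
    have h4 : ⟪C ((B ^ m) μ), (B ^ m) μ⟫_ℂ
        = ⟪(B ^ m) μ, (B ^ m) μ⟫_ℂ - ⟪B ((B ^ m) μ), (B ^ m) μ⟫_ℂ := by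
      rw [hCapp, inner_sub_left]
    rw [h4, Complex.sub_re, hAm]
    have := hre m
    linarith
  have hCtend : Tendsto (fun m => ‖C ((B ^ m) μ)‖) atTop (𝓝 0) := by
    have hsq : Tendsto (fun m => ‖C ((B ^ m) μ)‖ ^ 2) atTop (𝓝 0) := by
      have hbd : ∀ m, ‖C ((B ^ m) μ)‖ ^ 2 ≤ 2 * (A m - A (m + 1)) := by
        intro m
        have h1 := aux_sq_norm_le C hCsa hCpos ((B ^ m) μ)
        have h2 := hCe m
        have h3 := hCpos ((B ^ m) μ)
        nlinarith
      have hlim : Tendsto (fun m => 2 * (A m - A (m + 1))) atTop (𝓝 0) := by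
        simpa using hdiff.const_mul 2
      exact squeeze_zero (fun m => sq_nonneg _) hbd hlim
    have h5 := (Real.continuous_sqrt.tendsto 0).comp hsq
    have heq : ∀ m, Real.sqrt (‖C ((B ^ m) μ)‖ ^ 2) = ‖C ((B ^ m) μ)‖ := fun m =>
      Real.sqrt_sq (norm_nonneg _)
    simp only [Function.comp_def, heq, Real.sqrt_zero] at h5
    exact h5
  have hdense : ∀ ε : ℝ, 0 < ε → ∃ ν : H, ‖μ - C ν‖ < ε := by
    intro ε hε
    have hμK : μ ∈ (LinearMap.range (C : H →ₗ[ℂ] H)).topologicalClosure := by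
      rw [← Submodule.orthogonal_orthogonal_eq_closure, Submodule.mem_orthogonal]
      intro q hq
      rw [Submodule.mem_orthogonal] at hq
      have h1 : ⟪C q, q⟫_ℂ = 0 := hq (C q) (LinearMap.mem_range.2 ⟨q, rfl⟩)
      have h2 : B q = q := hCfix q (by rw [h1]; simp)
      rw [← inner_conj_symm, hμ q h2, map_zero]
    have h4 : μ ∈ closure ((LinearMap.range (C : H →ₗ[ℂ] H) : Submodule ℂ H) : Set H) := hμK
    rw [Metric.mem_closure_iff] at h4
    obtain ⟨y, hy, hyd⟩ := h4 ε hε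
    obtain ⟨ν, hν⟩ := LinearMap.mem_range.1 hy
    refine ⟨ν, ?_⟩
    have : (C : H →ₗ[ℂ] H) ν = C ν := rfl
    rw [← this, hν, ← dist_eq_norm]
    exact hyd
  have hAeq : ∀ m, A m = (⟪(B ^ (2 * m)) μ, μ⟫_ℂ).re := by
    intro m
    have hadj : ContinuousLinearMap.adjoint (B ^ m) = B ^ m := by
      rw [← ContinuousLinearMap.star_eq_adjoint]; exact hB.pow m
    have h1 : (B ^ (2 * m)) μ = (B ^ m) ((B ^ m) μ) := by
      rw [two_mul, pow_add, ContinuousLinearMap.mul_apply]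
    have h2 := ContinuousLinearMap.adjoint_inner_left (B ^ m) μ ((B ^ m) μ)
    rw [hadj] at h2
    rw [h1, h2, hAm]
  have hmain : Tendsto A atTop (𝓝 0) := by
    rw [Metric.tendsto_atTop]
    intro ε hε
    obtain ⟨ν, hν⟩ := hdense (ε / (2 * (‖μ‖ + 1))) (by positivity)
    have h2m : Tendsto (fun m : ℕ => ‖C ((B ^ (2 * m)) μ)‖) atTop (𝓝 0) :=
      hCtend.comp (tendsto_atTop_mono (fun m => by simp only [id_eq]; omega) tendsto_id)
    have hsmall : ∀ᶠ m in atTop, ‖C ((B ^ (2 * m)) μ)‖ < ε / (2 * (‖ν‖ + 1)) := by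
      have := Metric.tendsto_atTop.1 h2m (ε / (2 * (‖ν‖ + 1))) (by positivity)
      obtain ⟨N, hN⟩ := this
      exact eventually_atTop.2 ⟨N, fun m hm => by
        have := hN m hm
        rw [Real.dist_eq] at this
        exact lt_of_le_of_lt (le_abs_self _) (by simpa using this)⟩
    obtain ⟨N, hN⟩ := eventually_atTop.1 hsmall
    refine ⟨N, fun m hm => ?_⟩
    have h1 := hN m hm
    have h2 : ⟪(B ^ (2 * m)) μ, μ⟫_ℂ
        = ⟪(B ^ (2 * m)) μ, C ν⟫_ℂ + ⟪(B ^ (2 * m)) μ, μ - C ν⟫_ℂ := by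
      rw [← inner_add_right]
      congr 1
      abel
    have h3 : ‖⟪(B ^ (2 * m)) μ, C ν⟫_ℂ‖ ≤ ‖C ((B ^ (2 * m)) μ)‖ * ‖ν‖ := by
      have hCsym : ⟪(B ^ (2 * m)) μ, C ν⟫_ℂ = ⟪C ((B ^ (2 * m)) μ), ν⟫_ℂ := by
        rw [← ContinuousLinearMap.adjoint_inner_left C, hCsa.adjoint_eq]
      rw [hCsym]
      exact norm_inner_le_norm _ _
    have h4 : ‖⟪(B ^ (2 * m)) μ, μ - C ν⟫_ℂ‖ ≤ ‖μ‖ * (ε / (2 * (‖μ‖ + 1))) := by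
      calc ‖⟪(B ^ (2 * m)) μ, μ - C ν⟫_ℂ‖ ≤ ‖(B ^ (2 * m)) μ‖ * ‖μ - C ν‖ :=
            norm_inner_le_norm _ _
        _ ≤ ‖μ‖ * (ε / (2 * (‖μ‖ + 1))) := by
            have ha := hpowbd (2 * m) μ
            have hb := norm_nonneg ((B ^ (2 * m)) μ)
            have hc := norm_nonneg (μ - C ν)
            nlinarith [norm_nonneg μ]
    have h5 : A m ≤ ‖⟪(B ^ (2 * m)) μ, μ⟫_ℂ‖ := by
      rw [hAeq m]
      calc (⟪(B ^ (2 * m)) μ, μ⟫_ℂ).re ≤ ‖⟪(B ^ (2 * m)) μ, μ⟫_ℂ‖ :=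
            Complex.re_le_norm _
        _ = ‖⟪(B ^ (2 * m)) μ, μ⟫_ℂ‖ := rfl
    have h6 : ‖⟪(B ^ (2 * m)) μ, μ⟫_ℂ‖ < ε := by
      rw [h2]
      calc ‖⟪(B ^ (2 * m)) μ, C ν⟫_ℂ + ⟪(B ^ (2 * m)) μ, μ - C ν⟫_ℂ‖
          ≤ ‖⟪(B ^ (2 * m)) μ, C ν⟫_ℂ‖ + ‖⟪(B ^ (2 * m)) μ, μ - C ν⟫_ℂ‖ := norm_add_le _ _
        _ < ε := by
            have h7 : ‖C ((B ^ (2 * m)) μ)‖ * ‖ν‖ < ε / 2 := by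
              have hn := norm_nonneg (C ((B ^ (2 * m)) μ))
              have hn2 := norm_nonneg ν
              have hd : (0:ℝ) < 2 * (‖ν‖ + 1) := by positivity
              rw [lt_div_iff₀ hd] at h1
              nlinarith
            have h8 : ‖μ‖ * (ε / (2 * (‖μ‖ + 1))) ≤ ε / 2 := by
              have hμn := norm_nonneg μ
              rw [← mul_div_assoc,
                div_le_div_iff₀ (by positivity) (by norm_num : (0:ℝ) < 2)]
              nlinarith
            linarith
    rw [Real.dist_eq, sub_zero, abs_of_nonneg (by simp only [hA]; positivity)]
    exact lt_of_le_of_lt h5 h6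
  have h9 := (Real.continuous_sqrt.tendsto 0).comp hmain
  have heq2 : ∀ m, Real.sqrt (A m) = ‖(B ^ m) μ‖ := fun m => by
    rw [hA]; exact Real.sqrt_sq (norm_nonneg _)
  simp only [Function.comp_def, heq2, Real.sqrt_zero] at h9
  exact h9

end Pow

section Fix

variable {H : Type*} [NormedAddCommGroup H] [InnerProductSpace ℂ H] [CompleteSpace H]

/-- If the quadratic form of a selfadjoint contraction attains `‖w‖²` at `w`, then `w`
is a fixed vector. -/
lemma aux_fix (B : H →L[ℂ] H) (hB : IsSelfAdjoint B) (hnorm : ‖B‖ ≤ 1) (w : H)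
    (hw : ‖w‖ ^ 2 ≤ (⟪B w, w⟫_ℂ).re) : B w = w := by
  set C : H →L[ℂ] H := 1 - B with hC
  have hCsa : IsSelfAdjoint C := (IsSelfAdjoint.one (H →L[ℂ] H)).sub hB
  have hCapp : ∀ v : H, C v = v - B v := fun v => by simp [hC]
  have hCpos : ∀ v : H, 0 ≤ (⟪C v, v⟫_ℂ).re := by
    intro v
    have h1 : (⟪B v, v⟫_ℂ).re ≤ ‖v‖ * ‖v‖ := by
      have h0 := re_inner_le_norm (𝕜 := ℂ) (B v) v
      have h2 : ‖B v‖ * ‖v‖ ≤ ‖v‖ * ‖v‖ := by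
        have h3 : ‖B v‖ ≤ ‖v‖ := by
          have := B.le_opNorm v
          nlinarith [norm_nonneg v]
        nlinarith [norm_nonneg v]
      exact le_trans h0 h2
    have h4 : ⟪C v, v⟫_ℂ = ⟪v, v⟫_ℂ - ⟪B v, v⟫_ℂ := by rw [hCapp, inner_sub_left]
    have h5 : (⟪v, v⟫_ℂ).re = ‖v‖ ^ 2 := by
      simpa using inner_self_eq_norm_sq (𝕜 := ℂ) v
    rw [h4, Complex.sub_re, h5]
    nlinarith
  have hq : (⟪C w, w⟫_ℂ).re = 0 := by
    have h4 : ⟪C w, w⟫_ℂ = ⟪w, w⟫_ℂ - ⟪B w, w⟫_ℂ := by rw [hCapp, inner_sub_left]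
    have h5 : (⟪w, w⟫_ℂ).re = ‖w‖ ^ 2 := by
      simpa using inner_self_eq_norm_sq (𝕜 := ℂ) w
    have h6 := hCpos w
    rw [h4, Complex.sub_re, h5] at h6 ⊢
    linarith
  have h7 := aux_sq_norm_le C hCsa hCpos w
  rw [hq, mul_zero] at h7
  have h0 : C w = 0 :=
    norm_le_zero_iff.1 (by nlinarith [norm_nonneg (C w)] : ‖C w‖ ≤ 0)
  have h1 := hCapp w
  rw [h0] at h1
  exact (sub_eq_zero.mp h1.symm).symm

end Fix

/-- For a proper `σ`, `(S_n^σ)^* ξ → P ξ` in norm for every `ξ`; in particular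
`S_n^σ → P` in the weak operator topology. -/
theorem adjoint_of_sigma_products_tendsto_strongly
    {H : Type*} [NormedAddCommGroup H] [InnerProductSpace ℂ H] [CompleteSpace H]
    (T : ℕ → H →L[ℂ] H)
    (hpos : ∀ n, ∀ ξ : H, 0 ≤ ⟪(T n) ξ, ξ⟫_ℂ)
    (hcontr : ∀ n, ‖T n‖ ≤ 1)
    (hdec : ∀ n, ∀ ξ : H, ⟪(T (n + 1)) ξ, ξ⟫_ℂ ≤ ⟪(T n) ξ, ξ⟫_ℂ)
    (Tlim : H →L[ℂ] H)
    (hTlim : ∀ ξ : H, Tendsto (fun n => (T n) ξ) atTop (𝓝 (Tlim ξ)))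
    (P : H →L[ℂ] H)
    (hPmem : ∀ ξ : H, Tlim (P ξ) = P ξ)
    (hPorth : ∀ ξ η : H, Tlim η = η → ⟪ξ - P ξ, η⟫_ℂ = 0)
    (σ : ℕ → ℕ) (hσ : ∀ k, (σ ⁻¹' {k}).Finite) :
    (∀ ξ : H,
      Tendsto (fun n => (ContinuousLinearMap.adjoint (prodSeq T σ n)) ξ) atTop (𝓝 (P ξ))) ∧
    (∀ ξ η : H,
      Tendsto (fun n => ⟪prodSeq T σ n ξ, η⟫_ℂ) atTop (𝓝 ⟪P ξ, η⟫_ℂ)) := by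
  have hsa : ∀ n, IsSelfAdjoint (T n) := fun n => aux_selfAdjoint (T n) (hpos n)
  have hinner_t : ∀ v : H, Tendsto (fun n => ⟪T n v, v⟫_ℂ) atTop (𝓝 ⟪Tlim v, v⟫_ℂ) :=
    fun v => (hTlim v).inner tendsto_const_nhds
  have hlim_pos : ∀ v : H, 0 ≤ ⟪Tlim v, v⟫_ℂ := fun v =>
    ge_of_tendsto' (hinner_t v) fun n => hpos n v
  have hlim_sa : IsSelfAdjoint Tlim := aux_selfAdjoint Tlim hlim_pos
  have hlimposre : ∀ v : H, 0 ≤ (⟪Tlim v, v⟫_ℂ).re := fun v => by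
    have := hlim_pos v
    rw [Complex.le_def] at this
    simpa using this.1
  have hlimnorm : ‖Tlim‖ ≤ 1 := by
    apply ContinuousLinearMap.opNorm_le_bound _ zero_le_one
    intro v
    have h1 : Tendsto (fun n => ‖T n v‖) atTop (𝓝 ‖Tlim v‖) := (hTlim v).norm
    refine le_of_tendsto' h1 fun n => ?_
    calc ‖T n v‖ ≤ ‖T n‖ * ‖v‖ := (T n).le_opNorm v
      _ ≤ 1 * ‖v‖ := by nlinarith [norm_nonneg v, hcontr n, norm_nonneg (T n)]
  have hmono : ∀ (k : ℕ) (v : H), (⟪Tlim v, v⟫_ℂ).re ≤ (⟪T k v, v⟫_ℂ).re := by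
    intro k v
    have hanti : Antitone fun n => (⟪T n v, v⟫_ℂ).re := by
      apply antitone_nat_of_succ_le
      intro n
      have := hdec n v
      rw [Complex.le_def] at this
      exact this.1
    have hre : Tendsto (fun n => (⟪T n v, v⟫_ℂ).re) atTop (𝓝 (⟪Tlim v, v⟫_ℂ).re) :=
      (Complex.continuous_re.tendsto _).comp (hinner_t v)
    refine le_of_tendsto hre ?_
    filter_upwards [eventually_ge_atTop k] with n hn
    exact hanti hn
  have hfix : ∀ (k : ℕ) (w : H), Tlim w = w → T k w = w := by
    intro k w hw
    apply aux_fix (T k) (hsa k) (hcontr k)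
    have h1 : (⟪Tlim w, w⟫_ℂ).re = ‖w‖ ^ 2 := by
      rw [hw]
      simpa using inner_self_eq_norm_sq (𝕜 := ℂ) w
    have := hmono k w
    linarith
  have hσtop : Tendsto σ atTop atTop := by
    rw [tendsto_atTop]
    intro b
    rw [← Nat.cofinite_eq_atTop, eventually_cofinite]
    have hsub : {n | ¬ b ≤ σ n} ⊆ ⋃ k ∈ Finset.range b, σ ⁻¹' {k} := by
      intro n hn
      simp only [Set.mem_setOf_eq, not_le] at hn
      simp only [Set.mem_iUnion, Finset.mem_range, Set.mem_preimage, Set.mem_singleton_iff]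
      exact ⟨σ n, hn, rfl⟩
    exact ((Set.Finite.biUnion (Finset.range b).finite_toSet fun k _ => hσ k)).subset hsub
  have hTσ : ∀ v : H, Tendsto (fun n => T (σ n) v) atTop (𝓝 (Tlim v)) :=
    fun v => (hTlim v).comp hσtop
  have hprod_norm : ∀ n, ‖prodSeq T σ n‖ ≤ 1 := by
    intro n
    induction n with
    | zero => exact hcontr (σ 0)
    | succ k ih =>
      calc ‖prodSeq T σ (k + 1)‖ ≤ ‖T (σ (k + 1))‖ * ‖prodSeq T σ k‖ :=
            ContinuousLinearMap.opNorm_comp_le _ _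
        _ ≤ 1 := by
            have ha := norm_nonneg (prodSeq T σ k)
            have hb := norm_nonneg (T (σ (k + 1)))
            have hc := hcontr (σ (k + 1))
            nlinarith
  have hadj_succ : ∀ (n : ℕ) (v : H), ContinuousLinearMap.adjoint (prodSeq T σ (n + 1)) v
      = ContinuousLinearMap.adjoint (prodSeq T σ n) (T (σ (n + 1)) v) := by
    intro n v
    have h1 : prodSeq T σ (n + 1) = (T (σ (n + 1))).comp (prodSeq T σ n) := rfl
    rw [h1, ContinuousLinearMap.adjoint_comp]
    simp only [ContinuousLinearMap.coe_comp', Function.comp_apply]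
    rw [(hsa (σ (n + 1))).adjoint_eq]
  have hadj_norm : ∀ n, ‖ContinuousLinearMap.adjoint (prodSeq T σ n)‖ ≤ 1 := by
    intro n
    rw [LinearIsometryEquiv.norm_map ContinuousLinearMap.adjoint (prodSeq T σ n)]
    exact hprod_norm n
  have claim : ∀ (m : ℕ) (ν : H) (ε : ℝ), 0 < ε → ∀ᶠ n in atTop,
      ‖(ContinuousLinearMap.adjoint (prodSeq T σ n)) ν‖ ≤ ‖(Tlim ^ m) ν‖ + ε := by
    intro m
    induction m with
    | zero =>
      intro ν ε hε
      refine Eventually.of_forall fun n => ?_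
      have h1 : ‖(ContinuousLinearMap.adjoint (prodSeq T σ n)) ν‖ ≤ 1 * ‖ν‖ := by
        refine le_trans ((ContinuousLinearMap.adjoint (prodSeq T σ n)).le_opNorm ν) ?_
        have := hadj_norm n
        nlinarith [norm_nonneg ν]
      simp only [pow_zero, ContinuousLinearMap.one_apply]
      linarith
    | succ m ih =>
      intro ν ε hε
      obtain ⟨N1, hN1⟩ := eventually_atTop.1 (ih (Tlim ν) (ε / 2) (by linarith))
      obtain ⟨N2, hN2⟩ := Metric.tendsto_atTop.1 (hTσ ν) (ε / 2) (by linarith)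
      rw [eventually_atTop]
      refine ⟨max (N1 + 1) N2, fun n hn => ?_⟩
      obtain ⟨k, rfl⟩ : ∃ k, n = k + 1 := ⟨n - 1, by omega⟩
      have hk1 : N1 ≤ k := by omega
      have hk2 : N2 ≤ k + 1 := by omega
      rw [hadj_succ]
      have h3 : ‖ContinuousLinearMap.adjoint (prodSeq T σ k) (T (σ (k + 1)) ν)
          - ContinuousLinearMap.adjoint (prodSeq T σ k) (Tlim ν)‖ ≤ ε / 2 := by
        rw [← map_sub]
        calc ‖ContinuousLinearMap.adjoint (prodSeq T σ k) (T (σ (k + 1)) ν - Tlim ν)‖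
            ≤ ‖ContinuousLinearMap.adjoint (prodSeq T σ k)‖ * ‖T (σ (k + 1)) ν - Tlim ν‖ :=
              ContinuousLinearMap.le_opNorm _ _
          _ ≤ 1 * (ε / 2) := by
              have h4 := hN2 (k + 1) hk2
              rw [dist_eq_norm] at h4
              have h5 := hadj_norm k
              have h6 := norm_nonneg (T (σ (k + 1)) ν - Tlim ν)
              have h7 := norm_nonneg (ContinuousLinearMap.adjoint (prodSeq T σ k))
              nlinarith
          _ = ε / 2 := one_mul _
      have h4 := hN1 k hk1
      have h5 : ‖(Tlim ^ m) (Tlim ν)‖ = ‖(Tlim ^ (m + 1)) ν‖ := by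
        rw [pow_succ, ContinuousLinearMap.mul_apply]
      have h8 : ContinuousLinearMap.adjoint (prodSeq T σ k) (T (σ (k + 1)) ν)
          = ContinuousLinearMap.adjoint (prodSeq T σ k) (Tlim ν)
            + (ContinuousLinearMap.adjoint (prodSeq T σ k) (T (σ (k + 1)) ν)
              - ContinuousLinearMap.adjoint (prodSeq T σ k) (Tlim ν)) := by abel
      calc ‖ContinuousLinearMap.adjoint (prodSeq T σ k) (T (σ (k + 1)) ν)‖
          ≤ ‖ContinuousLinearMap.adjoint (prodSeq T σ k) (Tlim ν)‖ + ε / 2 := by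
            rw [h8]
            exact le_trans (norm_add_le _ _) (by linarith)
        _ ≤ (‖(Tlim ^ m) (Tlim ν)‖ + ε / 2) + ε / 2 := by linarith
        _ = ‖(Tlim ^ (m + 1)) ν‖ + ε := by rw [h5]; ring
  have hfixprod : ∀ w : H, (∀ k, T k w = w) →
      ∀ n, ContinuousLinearMap.adjoint (prodSeq T σ n) w = w := by
    intro w hw n
    induction n with
    | zero =>
      have h1 : prodSeq T σ 0 = T (σ 0) := rfl
      rw [h1, (hsa (σ 0)).adjoint_eq]
      exact hw _
    | succ k ih =>
      rw [hadj_succ, hw]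
      exact ih
  have part1 : ∀ ξ : H,
      Tendsto (fun n => (ContinuousLinearMap.adjoint (prodSeq T σ n)) ξ) atTop (𝓝 (P ξ)) := by
    intro ξ
    have hμ : ∀ w, Tlim w = w → ⟪ξ - P ξ, w⟫_ℂ = 0 := fun w hw => hPorth ξ w hw
    have hPfix : ∀ k, T k (P ξ) = P ξ := fun k => hfix k _ (hPmem ξ)
    have hPprod : ∀ n, ContinuousLinearMap.adjoint (prodSeq T σ n) (P ξ) = P ξ :=
      hfixprod _ hPfix
    have hdiffeq : ∀ n, ContinuousLinearMap.adjoint (prodSeq T σ n) ξ - P ξ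
        = ContinuousLinearMap.adjoint (prodSeq T σ n) (ξ - P ξ) := by
      intro n
      rw [map_sub, hPprod]
    have hpow := aux_pow_tendsto Tlim hlim_sa hlimnorm hlimposre (ξ - P ξ) hμ
    rw [Metric.tendsto_atTop]
    intro ε hε
    obtain ⟨m, hm⟩ : ∃ m, ‖(Tlim ^ m) (ξ - P ξ)‖ < ε / 4 := by
      obtain ⟨N, hN⟩ := Metric.tendsto_atTop.1 hpow (ε / 4) (by linarith)
      refine ⟨N, ?_⟩
      have := hN N le_rfl
      rwa [Real.dist_eq, sub_zero, abs_of_nonneg (norm_nonneg _)] at this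
    obtain ⟨N, hN⟩ := eventually_atTop.1 (claim m (ξ - P ξ) (ε / 4) (by linarith))
    refine ⟨N, fun n hn => ?_⟩
    rw [dist_eq_norm, hdiffeq]
    have h1 := hN n hn
    linarith
  refine ⟨part1, fun ξ η => ?_⟩
  have h1 := part1 η
  have h2 : Tendsto (fun n => ⟪ξ, ContinuousLinearMap.adjoint (prodSeq T σ n) η⟫_ℂ)
      atTop (𝓝 ⟪ξ, P η⟫_ℂ) := tendsto_const_nhds.inner h1
  have h3 : ∀ n, ⟪ξ, ContinuousLinearMap.adjoint (prodSeq T σ n) η⟫_ℂ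
      = ⟪prodSeq T σ n ξ, η⟫_ℂ := fun n => ContinuousLinearMap.adjoint_inner_right _ _ _
  have h4 : ⟪ξ, P η⟫_ℂ = ⟪P ξ, η⟫_ℂ := by
    have e1 : ⟪ξ - P ξ, P η⟫_ℂ = 0 := hPorth ξ (P η) (hPmem η)
    have e2 : ⟪η - P η, P ξ⟫_ℂ = 0 := hPorth η (P ξ) (hPmem ξ)
    have e3 : ⟪P ξ, η - P η⟫_ℂ = 0 := by rw [← inner_conj_symm, e2, map_zero]
    rw [inner_sub_left] at e1
    rw [inner_sub_right] at e3
    have e4 := sub_eq_zero.mp e1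
    have e5 := sub_eq_zero.mp e3
    rw [e4, ← e5]
  simp only [h3] at h2
  rw [h4] at h2
  exact h2
end

section
/- Let H be a complex Hilbert space, T_1 ≥ T_2 ≥ ⋯ a decreasing sequence of positive linear contractions on H, T the strong operator limit of (T_n), and P the orthogonal projection onto {ξ ∈ H : Tξ = ξ}. Let σ : ℕ → ℕ be proper and S_n^σ := T_{σ(n)} ⋯ T_{σ(1)}. If ξ ∈ H is such that the set {S_n^σ ξ : n ∈ ℕ} is totally bounded in H, then ‖S_n^σ ξ − P ξ‖ → 0. -/
open Filter Topology
open scoped InnerProductSpace ComplexOrder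

section Aux

variable {H : Type*} [NormedAddCommGroup H] [InnerProductSpace ℂ H]

lemma re_le_norm' (z : ℂ) : z.re ≤ ‖z‖ := by
  exact Complex.re_le_norm z

/-- Cauchy–Schwarz for the positive sesquilinear form of a positive operator. -/
lemma pos_cauchy_schwarz (A : H →L[ℂ] H) (hpos : ∀ x : H, 0 ≤ ⟪A x, x⟫_ℂ)
    (hsym : ∀ x y : H, ⟪A x, y⟫_ℂ = ⟪x, A y⟫_ℂ) (x y : H) :
    ‖⟪A x, y⟫_ℂ‖ * ‖⟪A y, x⟫_ℂ‖ ≤ (⟪A x, x⟫_ℂ).re * (⟪A y, y⟫_ℂ).re := by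
  letI c : PreInnerProductSpace.Core ℂ H :=
    { inner := fun u v => ⟪A u, v⟫_ℂ
      conj_inner_symm := fun u v => by
        show (starRingEnd ℂ) ⟪A v, u⟫_ℂ = ⟪A u, v⟫_ℂ
        rw [inner_conj_symm, ← hsym]
      re_inner_nonneg := fun u => (Complex.le_def.mp (hpos u)).1
      add_left := fun u v w => by
        show ⟪A (u + v), w⟫_ℂ = ⟪A u, w⟫_ℂ + ⟪A v, w⟫_ℂ
        rw [map_add, inner_add_left]
      smul_left := fun u v r => by
        show ⟪A (r • u), v⟫_ℂ = (starRingEnd ℂ) r * ⟪A u, v⟫_ℂ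
        rw [map_smul, inner_smul_left] }
  exact @InnerProductSpace.Core.inner_mul_inner_self_le ℂ H _ _ _ c x y

lemma re_inner_le_norm_sq (A : H →L[ℂ] H) (hA : ‖A‖ ≤ 1) (x : H) :
    (⟪A x, x⟫_ℂ).re ≤ ‖x‖ ^ 2 := by
  have h1 : (⟪A x, x⟫_ℂ).re ≤ ‖⟪A x, x⟫_ℂ‖ := re_le_norm' _
  have h2 : ‖⟪A x, x⟫_ℂ‖ ≤ ‖A x‖ * ‖x‖ := norm_inner_le_norm _ _
  have h3 : ‖A x‖ ≤ 1 * ‖x‖ := A.le_of_opNorm_le hA x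
  nlinarith [norm_nonneg x, norm_nonneg (A x)]

lemma norm_sq_le_re_inner (A : H →L[ℂ] H) (hpos : ∀ x : H, 0 ≤ ⟪A x, x⟫_ℂ)
    (hsym : ∀ x y : H, ⟪A x, y⟫_ℂ = ⟪x, A y⟫_ℂ) (hA : ‖A‖ ≤ 1) (x : H) :
    ‖A x‖ ^ 2 ≤ (⟪A x, x⟫_ℂ).re := by
  have hcs := pos_cauchy_schwarz A hpos hsym x (A x)
  have e1 : ‖⟪A x, A x⟫_ℂ‖ = ‖A x‖ ^ 2 := by
    rw [@inner_self_eq_norm_sq_to_K ℂ, norm_pow, RCLike.norm_ofReal, abs_norm]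
  have e2 : ⟪A (A x), x⟫_ℂ = ⟪A x, A x⟫_ℂ := by rw [hsym]
  rw [e2, e1] at hcs
  have h4 : (⟪A (A x), A x⟫_ℂ).re ≤ ‖A (A x)‖ * ‖A x‖ :=
    le_trans (re_le_norm' _) (norm_inner_le_norm _ _)
  have h5 : ‖A (A x)‖ ≤ 1 * ‖A x‖ := A.le_of_opNorm_le hA (A x)
  have h6 : (0:ℝ) ≤ (⟪A x, x⟫_ℂ).re := (Complex.le_def.mp (hpos x)).1
  rcases eq_or_lt_of_le (norm_nonneg (A x)) with h0 | h0
  · rw [← h0]; simpa using h6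
  · have h7 : (⟪A (A x), A x⟫_ℂ).re ≤ ‖A x‖ ^ 2 := by nlinarith
    have h8 : ‖A x‖ ^ 2 * ‖A x‖ ^ 2 ≤ (⟪A x, x⟫_ℂ).re * (‖A x‖ ^ 2) := by
      nlinarith
    exact le_of_mul_le_mul_right h8 (by positivity)
end Aux

set_option maxHeartbeats 1600000 in
/-- If the orbit `{S_n^σ ξ}` is totally bounded, then `‖S_n^σ ξ - P ξ‖ → 0`. -/
theorem sigma_products_tendsto_of_totallyBounded
    {H : Type*} [NormedAddCommGroup H] [InnerProductSpace ℂ H] [CompleteSpace H]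
    (T : ℕ → H →L[ℂ] H)
    (hpos : ∀ n, ∀ ξ : H, 0 ≤ ⟪(T n) ξ, ξ⟫_ℂ)
    (hcontr : ∀ n, ‖T n‖ ≤ 1)
    (hdec : ∀ n, ∀ ξ : H, ⟪(T (n + 1)) ξ, ξ⟫_ℂ ≤ ⟪(T n) ξ, ξ⟫_ℂ)
    (Tlim : H →L[ℂ] H)
    (hTlim : ∀ ξ : H, Tendsto (fun n => (T n) ξ) atTop (𝓝 (Tlim ξ)))
    (P : H →L[ℂ] H)
    (hPmem : ∀ ξ : H, Tlim (P ξ) = P ξ)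
    (hPorth : ∀ ξ η : H, Tlim η = η → ⟪ξ - P ξ, η⟫_ℂ = 0)
    (σ : ℕ → ℕ) (hσ : ∀ k, (σ ⁻¹' {k}).Finite)
    (ξ : H) (htb : TotallyBounded (Set.range fun n => prodSeq T σ n ξ)) :
    Tendsto (fun n => ‖prodSeq T σ n ξ - P ξ‖) atTop (𝓝 0) := by
  classical
  set u : ℕ → H := fun n => prodSeq T σ n ξ with hu
  -- symmetry of each T n
  have hsym : ∀ n, ∀ x y : H, ⟪T n x, y⟫_ℂ = ⟪x, T n y⟫_ℂ := by
    intro n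
    have : LinearMap.IsSymmetric ((T n : H →ₗ[ℂ] H)) := by
      rw [LinearMap.isSymmetric_iff_inner_map_self_real]
      intro v
      have h := (Complex.le_def.mp (hpos n v)).2
      exact Complex.conj_eq_iff_im.mpr h.symm
    exact fun x y => this x y
  have hcT : ∀ n (x : H), ‖T n x‖ ≤ ‖x‖ := by
    intro n x
    simpa using (T n).le_of_opNorm_le (hcontr n) x
  -- basic inequalities for the iterates
  have hrec : ∀ n, u (n + 1) = T (σ (n + 1)) (u n) := fun n => rfl
  have hsq : ∀ n, ‖u (n + 1)‖ ^ 2 ≤ (⟪T (σ (n + 1)) (u n), u n⟫_ℂ).re := by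
    intro n
    rw [hrec n]
    exact norm_sq_le_re_inner _ (hpos _) (hsym _) (hcontr _) (u n)
  have hre_le : ∀ n, (⟪T (σ (n + 1)) (u n), u n⟫_ℂ).re ≤ ‖u n‖ ^ 2 := fun n =>
    re_inner_le_norm_sq _ (hcontr _) (u n)
  set b : ℕ → ℝ := fun n => ‖u n‖ ^ 2 with hb
  have hbdec : ∀ n, b (n + 1) ≤ b n := fun n => le_trans (hsq n) (hre_le n)
  have hbant : Antitone b := antitone_nat_of_succ_le hbdec
  have hbdd : BddBelow (Set.range b) := ⟨0, by rintro x ⟨n, rfl⟩; positivity⟩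
  have hblim : Tendsto b atTop (𝓝 (⨅ n, b n)) := tendsto_atTop_ciInf hbant hbdd
  have hdiffb : Tendsto (fun n => b n - b (n + 1)) atTop (𝓝 0) := by
    have h1 : Tendsto (fun n => b (n + 1)) atTop (𝓝 (⨅ n, b n)) :=
      hblim.comp (tendsto_add_atTop_nat 1)
    simpa using hblim.sub h1
  -- consecutive differences tend to zero
  have hstep : ∀ n, ‖u (n + 1) - u n‖ ^ 2 ≤ b n - b (n + 1) := by
    intro n
    have h1 : ‖u (n + 1) - u n‖ ^ 2 =
        ‖u (n + 1)‖ ^ 2 - 2 * (⟪u (n + 1), u n⟫_ℂ).re + ‖u n‖ ^ 2 := by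
      have := @norm_sub_sq ℂ H _ _ _ (u (n + 1)) (u n)
      simpa [RCLike.re_to_complex] using this
    have h2 : ‖u (n + 1)‖ ^ 2 ≤ (⟪u (n + 1), u n⟫_ℂ).re := by
      have := hsq n; rwa [← hrec n] at this
    have h3 := hsq n
    rw [← hrec n] at h3
    simp only [hb]
    nlinarith [hsq n, hre_le n]
  have hd0 : Tendsto (fun n => ‖u (n + 1) - u n‖) atTop (𝓝 0) := by
    have hsq0 : Tendsto (fun n => ‖u (n + 1) - u n‖ ^ 2) atTop (𝓝 0) := by
      refine squeeze_zero (fun n => by positivity) hstep hdiffb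
    have : Tendsto (fun n => Real.sqrt (‖u (n + 1) - u n‖ ^ 2)) atTop (𝓝 (Real.sqrt 0)) :=
      (Real.continuous_sqrt.tendsto 0).comp hsq0
    simpa [Real.sqrt_sq (norm_nonneg _)] using this
  -- σ tends to infinity
  have hsigma : Tendsto σ atTop atTop := by
    refine tendsto_atTop.mpr fun k => ?_
    rw [← Nat.cofinite_eq_atTop, eventually_cofinite]
    have : {n | ¬ k ≤ σ n} ⊆ σ ⁻¹' (Set.Iio k) := by
      intro n hn; simpa [Set.mem_preimage, Set.mem_Iio] using not_le.mp hn
    refine Set.Finite.subset ?_ this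
    rw [← Set.biUnion_preimage_singleton]
    exact (Set.finite_Iio k).biUnion (fun i _ => hσ i)
  -- vectors fixed by Tlim are fixed by each T k
  have hfix : ∀ ζ : H, Tlim ζ = ζ → ∀ k, T k ζ = ζ := by
    intro ζ hζ k
    set c : ℕ → ℝ := fun m => (⟪T m ζ, ζ⟫_ℂ).re with hc
    have hcant : Antitone c :=
      antitone_nat_of_succ_le (fun m => (Complex.le_def.mp (hdec m ζ)).1)
    have hclim : Tendsto c atTop (𝓝 (‖ζ‖ ^ 2)) := by
      have h1 : Tendsto (fun m => ⟪T m ζ, ζ⟫_ℂ) atTop (𝓝 ⟪Tlim ζ, ζ⟫_ℂ) :=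
        (hTlim ζ).inner tendsto_const_nhds
      have h2 : Tendsto c atTop (𝓝 ((⟪Tlim ζ, ζ⟫_ℂ).re)) :=
        (Complex.continuous_re.tendsto _).comp h1
      have h3 : (⟪Tlim ζ, ζ⟫_ℂ).re = ‖ζ‖ ^ 2 := by
        rw [hζ]
        have := inner_self_eq_norm_sq (𝕜 := ℂ) ζ
        simpa [RCLike.re_to_complex] using this
      rwa [h3] at h2
    have hge : ∀ m, ‖ζ‖ ^ 2 ≤ c m := fun m => hcant.le_of_tendsto hclim m
    have heq : c k = ‖ζ‖ ^ 2 :=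
      le_antisymm (re_inner_le_norm_sq _ (hcontr k) ζ) (hge k)
    have hnormle : ‖T k ζ - ζ‖ ^ 2 ≤ ‖ζ‖ ^ 2 - c k := by
      have h1 : ‖T k ζ - ζ‖ ^ 2 = ‖T k ζ‖ ^ 2 - 2 * c k + ‖ζ‖ ^ 2 := by
        have := @norm_sub_sq ℂ H _ _ _ (T k ζ) ζ
        simpa [RCLike.re_to_complex, hc] using this
      have h2 : ‖T k ζ‖ ^ 2 ≤ c k :=
        norm_sq_le_re_inner _ (hpos k) (hsym k) (hcontr k) ζ
      nlinarith
    rw [heq] at hnormle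
    have : ‖T k ζ - ζ‖ ^ 2 ≤ 0 := by linarith
    have : T k ζ - ζ = 0 := by
      have h := le_antisymm this (by positivity)
      exact norm_eq_zero.mp (by nlinarith [norm_nonneg (T k ζ - ζ)])
    exact sub_eq_zero.mp this
  -- inner products with fixed vectors are invariant
  have hinv : ∀ ζ : H, Tlim ζ = ζ → ∀ n, ⟪u n, ζ⟫_ℂ = ⟪ξ, ζ⟫_ℂ := by
    intro ζ hζ n
    induction n with
    | zero =>
      show ⟪T (σ 0) ξ, ζ⟫_ℂ = ⟪ξ, ζ⟫_ℂ
      rw [hsym, hfix ζ hζ]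
    | succ m ih =>
      rw [hrec m, hsym, hfix ζ hζ, ih]
  -- every subsequential limit equals P ξ
  have hlim : ∀ (m : ℕ → ℕ), Tendsto m atTop atTop → ∀ η : H,
      Tendsto (fun j => u (m j)) atTop (𝓝 η) → η = P ξ := by
    intro m hm η hη
    -- η is fixed by Tlim
    have hd0' : Tendsto (fun j => ‖u (m j + 1) - u (m j)‖) atTop (𝓝 0) := hd0.comp hm
    have hη1 : Tendsto (fun j => u (m j + 1)) atTop (𝓝 η) := by
      have h1 : Tendsto (fun j => u (m j + 1) - u (m j)) atTop (𝓝 0) := by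
        exact tendsto_zero_iff_norm_tendsto_zero.mpr hd0'
      have := h1.add hη
      simpa using this
    have hm1 : Tendsto (fun j => σ (m j + 1)) atTop atTop :=
      hsigma.comp (tendsto_atTop_mono (fun j => Nat.le_succ (m j)) hm)
    have hη2 : Tendsto (fun j => T (σ (m j + 1)) η) atTop (𝓝 (Tlim η)) :=
      (hTlim η).comp hm1
    have hη3 : Tendsto (fun j => T (σ (m j + 1)) (u (m j)) - T (σ (m j + 1)) η)
        atTop (𝓝 0) := by
      apply tendsto_zero_iff_norm_tendsto_zero.mpr
      refine squeeze_zero (g := fun j => ‖u (m j) - η‖) (fun j => norm_nonneg _)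
        (fun j => ?_) ?_
      · calc ‖T (σ (m j + 1)) (u (m j)) - T (σ (m j + 1)) η‖
            = ‖T (σ (m j + 1)) (u (m j) - η)‖ := by rw [map_sub]
          _ ≤ ‖u (m j) - η‖ := hcT _ _
      · have : Tendsto (fun j => u (m j) - η) atTop (𝓝 0) := by
          simpa using hη.sub (tendsto_const_nhds (x := η))
        exact tendsto_zero_iff_norm_tendsto_zero.mp this
    have hη4 : Tendsto (fun j => u (m j + 1)) atTop (𝓝 (Tlim η)) := by
      have heq : (fun j => u (m j + 1)) = fun j =>
          (T (σ (m j + 1)) (u (m j)) - T (σ (m j + 1)) η) + T (σ (m j + 1)) η := by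
        funext j
        rw [sub_add_cancel, hrec]
      rw [heq]
      simpa using hη3.add hη2
    have hηfix : Tlim η = η := tendsto_nhds_unique hη4 hη1
    -- set ζ := η - P ξ, a fixed vector
    set ζ : H := η - P ξ with hζdef
    have hζfix : Tlim ζ = ζ := by
      rw [hζdef, map_sub, hηfix, hPmem]
    have hηζ : ⟪η, ζ⟫_ℂ = ⟪ξ, ζ⟫_ℂ := by
      have h1 : Tendsto (fun j => ⟪u (m j), ζ⟫_ℂ) atTop (𝓝 ⟪η, ζ⟫_ℂ) :=
        hη.inner tendsto_const_nhds
      have h2 : (fun j => ⟪u (m j), ζ⟫_ℂ) = fun _ => ⟪ξ, ζ⟫_ℂ := by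
        funext j; exact hinv ζ hζfix (m j)
      rw [h2] at h1
      exact tendsto_nhds_unique h1 tendsto_const_nhds
    have hzero : ⟪ζ, ζ⟫_ℂ = 0 := by
      have h1 : ⟪ζ, ζ⟫_ℂ = ⟪η, ζ⟫_ℂ - ⟪P ξ, ζ⟫_ℂ := by
        rw [hζdef, inner_sub_left]
      rw [h1, hηζ, ← inner_sub_left]
      exact hPorth ξ ζ hζfix
    have : ζ = 0 := inner_self_eq_zero.mp hzero
    rw [hζdef, sub_eq_zero] at this
    exact this
  -- compactness and conclusion
  have hK : IsCompact (closure (Set.range u)) :=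
    TotallyBounded.isCompact_of_isClosed htb.closure isClosed_closure
  have hmain : Tendsto u atTop (𝓝 (P ξ)) := by
    apply tendsto_of_subseq_tendsto
    intro ns hns
    have hmem : ∀ j, u (ns j) ∈ closure (Set.range u) := fun j =>
      subset_closure (Set.mem_range_self _)
    obtain ⟨η, _, φ, hφ, hconv⟩ := hK.tendsto_subseq hmem
    have hphiT : Tendsto (fun j => ns (φ j)) atTop atTop :=
      hns.comp hφ.tendsto_atTop
    have : η = P ξ := hlim (fun j => ns (φ j)) hphiT η hconv
    exact ⟨φ, this ▸ hconv⟩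
  have := tendsto_zero_iff_norm_tendsto_zero.mp
    (by simpa using hmain.sub (tendsto_const_nhds (x := P ξ)))
  exact this
end

section
/- Let H be a complex Hilbert space, T_1 ≥ T_2 ≥ ⋯ a decreasing sequence of positive linear contractions on H, σ : ℕ → ℕ proper, and S_n^σ := T_{σ(n)} ⋯ T_{σ(1)}. Then for every ξ ∈ H and every k ∈ ℕ, ‖S_{n+k}^σ ξ − S_n^σ ξ‖ → 0 as n → ∞. -/
open Filter Topology
open scoped InnerProductSpace ComplexOrder

lemma pos_contraction_key {H : Type*} [NormedAddCommGroup H] [InnerProductSpace ℂ H]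
    (T : H →L[ℂ] H) (hpos : ∀ ξ : H, 0 ≤ ⟪T ξ, ξ⟫_ℂ) (hc : ‖T‖ ≤ 1) (x : H) :
    ‖T x - x‖ ^ 2 ≤ ‖x‖ ^ 2 - ‖T x‖ ^ 2 := by
  have hreal : ∀ v : H, (starRingEnd ℂ) ⟪T v, v⟫_ℂ = ⟪T v, v⟫_ℂ := by
    intro v
    have h := hpos v
    rw [Complex.le_def] at h
    exact Complex.conj_eq_iff_im.mpr h.2.symm
  have hsym : (T : H →ₗ[ℂ] H).IsSymmetric :=
    (LinearMap.isSymmetric_iff_inner_map_self_real _).mpr hreal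
  have hnorm : ∀ y : H, ‖T y‖ ≤ ‖y‖ := by
    intro y
    calc ‖T y‖ ≤ ‖T‖ * ‖y‖ := T.le_opNorm y
    _ ≤ 1 * ‖y‖ := by gcongr
    _ = ‖y‖ := one_mul _
  -- key: ‖T x‖² ≤ re ⟪T x, x⟫
  have hkey : ‖T x‖ ^ 2 ≤ (⟪T x, x⟫_ℂ).re := by
    have h1 : (0 : ℝ) ≤ (⟪T (x - T x), x - T x⟫_ℂ).re := by
      have := hpos (x - T x)
      rw [Complex.le_def] at this
      simpa using this.1
    have hexp : ⟪T (x - T x), x - T x⟫_ℂ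
        = ⟪T x, x⟫_ℂ - ⟪T x, T x⟫_ℂ - ⟪T (T x), x⟫_ℂ + ⟪T (T x), T x⟫_ℂ := by
      rw [map_sub, inner_sub_left, inner_sub_right, inner_sub_right]
      ring
    have hswap : ⟪T (T x), x⟫_ℂ = ⟪T x, T x⟫_ℂ := by
      have := hsym (T x) x
      simpa using this
    have hTT : ⟪T x, T x⟫_ℂ = (‖T x‖ ^ 2 : ℝ) := by
      rw [inner_self_eq_norm_sq_to_K]; norm_num
    have hc2 : (⟪T (T x), T x⟫_ℂ).re ≤ ‖T x‖ ^ 2 := by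
      calc (⟪T (T x), T x⟫_ℂ).re ≤ ‖⟪T (T x), T x⟫_ℂ‖ := Complex.re_le_norm _
        _ ≤ ‖T (T x)‖ * ‖T x‖ := norm_inner_le_norm _ _
        _ ≤ ‖T x‖ * ‖T x‖ := by
            have := hnorm (T x)
            gcongr
        _ = ‖T x‖ ^ 2 := (sq ‖T x‖).symm
    rw [hexp, hswap, hTT] at h1
    simp only [Complex.add_re, Complex.sub_re, Complex.ofReal_re] at h1
    linarith
  have hns : ‖T x - x‖ ^ 2 = ‖T x‖ ^ 2 - 2 * (⟪T x, x⟫_ℂ).re + ‖x‖ ^ 2 := by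
    have := @norm_sub_sq ℂ H _ _ _ (T x) x
    simpa using this
  linarith

/-- For every `ξ` and `k`, `‖S_{n+k}^σ ξ - S_n^σ ξ‖ → 0` as `n → ∞`. -/
theorem sigma_products_consecutive_differences_tendsto_zero
    {H : Type*} [NormedAddCommGroup H] [InnerProductSpace ℂ H] [CompleteSpace H]
    (T : ℕ → H →L[ℂ] H)
    (hpos : ∀ n, ∀ ξ : H, 0 ≤ ⟪(T n) ξ, ξ⟫_ℂ)
    (hcontr : ∀ n, ‖T n‖ ≤ 1)
    (hdec : ∀ n, ∀ ξ : H, ⟪(T (n + 1)) ξ, ξ⟫_ℂ ≤ ⟪(T n) ξ, ξ⟫_ℂ)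
    (σ : ℕ → ℕ) (hσ : ∀ k, (σ ⁻¹' {k}).Finite) :
    ∀ (ξ : H) (k : ℕ),
      Tendsto (fun n => ‖prodSeq T σ (n + k) ξ - prodSeq T σ n ξ‖) atTop (𝓝 0) := by
  intro ξ k
  set a : ℕ → ℝ := fun n => ‖prodSeq T σ n ξ‖ with ha
  have hnorm : ∀ m (y : H), ‖T m y‖ ≤ ‖y‖ := by
    intro m y
    calc ‖T m y‖ ≤ ‖T m‖ * ‖y‖ := (T m).le_opNorm y
    _ ≤ 1 * ‖y‖ := by gcongr; exact hcontr m
    _ = ‖y‖ := one_mul _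
  have hsucc : ∀ n, prodSeq T σ (n + 1) ξ = T (σ (n + 1)) (prodSeq T σ n ξ) := fun n => rfl
  have hanti : Antitone a := by
    apply antitone_nat_of_succ_le
    intro n
    rw [ha]
    simp only
    rw [hsucc]
    exact hnorm _ _
  have hbdd : BddBelow (Set.range a) := ⟨0, by rintro x ⟨n, rfl⟩; exact norm_nonneg _⟩
  have hconv : Tendsto a atTop (𝓝 (⨅ n, a n)) := tendsto_atTop_ciInf hanti hbdd
  have hconv2 : Tendsto (fun n => a n ^ 2) atTop (𝓝 ((⨅ n, a n) ^ 2)) := hconv.pow 2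
  have hdiff : Tendsto (fun n => a n ^ 2 - a (n + 1) ^ 2) atTop (𝓝 0) := by
    have h2 : Tendsto (fun n => a (n + 1) ^ 2) atTop (𝓝 ((⨅ n, a n) ^ 2)) :=
      hconv2.comp (tendsto_add_atTop_nat 1)
    simpa using hconv2.sub h2
  -- consecutive difference tends to 0
  have hd : Tendsto (fun n => ‖prodSeq T σ (n + 1) ξ - prodSeq T σ n ξ‖) atTop (𝓝 0) := by
    have hsq : ∀ n, ‖prodSeq T σ (n + 1) ξ - prodSeq T σ n ξ‖ ^ 2 ≤ a n ^ 2 - a (n + 1) ^ 2 := by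
      intro n
      rw [hsucc]
      exact pos_contraction_key (T (σ (n + 1))) (hpos _) (hcontr _) (prodSeq T σ n ξ)
    have hsqrt : Tendsto (fun n => Real.sqrt (a n ^ 2 - a (n + 1) ^ 2)) atTop (𝓝 0) := by
      have := (Real.continuous_sqrt.tendsto 0).comp hdiff
      simpa [Function.comp_def] using this
    apply squeeze_zero (fun n => norm_nonneg _) _ hsqrt
    intro n
    exact Real.le_sqrt_of_sq_le (hsq n)
  -- induction on k
  induction k with
  | zero => simpa using tendsto_const_nhds
  | succ k ih =>
    have hstep : Tendsto (fun n => ‖prodSeq T σ (n + k + 1) ξ - prodSeq T σ (n + k) ξ‖)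
        atTop (𝓝 0) := hd.comp (tendsto_add_atTop_nat k)
    have hsum : Tendsto (fun n => ‖prodSeq T σ (n + k + 1) ξ - prodSeq T σ (n + k) ξ‖
        + ‖prodSeq T σ (n + k) ξ - prodSeq T σ n ξ‖) atTop (𝓝 0) := by
      simpa using hstep.add ih
    apply squeeze_zero (fun n => norm_nonneg _) _ hsum
    intro n
    calc ‖prodSeq T σ (n + (k + 1)) ξ - prodSeq T σ n ξ‖
        ≤ ‖prodSeq T σ (n + (k+1)) ξ - prodSeq T σ (n + k) ξ‖
          + ‖prodSeq T σ (n + k) ξ - prodSeq T σ n ξ‖ := norm_sub_le_norm_sub_add_norm_sub _ _ _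
      _ = _ := by rw [show n + (k+1) = n + k + 1 from rfl]
end

section
/- Let H be a complex Hilbert space, T_1 ≥ T_2 ≥ ⋯ a decreasing sequence of positive linear contractions on H, T the strong operator limit of (T_n), and P the orthogonal projection onto {ξ ∈ H : Tξ = ξ}. Let σ : ℕ → ℕ be proper and S_n^σ := T_{σ(n)} ⋯ T_{σ(1)}. Then the set H_σ := {ξ ∈ H : ‖S_n^σ ξ − P ξ‖ → 0} is a closed linear subspace of H containing the range of P, and for every ξ ∈ H one has ‖S_n^σ ξ − P ξ‖ → 0 if and only if ‖S_n^σ ξ‖ → ‖P ξ‖. -/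
open Filter Topology
open scoped InnerProductSpace ComplexOrder

section helpers

variable {H : Type*} [NormedAddCommGroup H] [InnerProductSpace ℂ H]

lemma sym_of_pos (A : H →L[ℂ] H) (h : ∀ ξ : H, 0 ≤ ⟪A ξ, ξ⟫_ℂ) :
    ∀ x y : H, ⟪A x, y⟫_ℂ = ⟪x, A y⟫_ℂ := by
  have hsym : (A : H →ₗ[ℂ] H).IsSymmetric := by
    rw [LinearMap.isSymmetric_iff_inner_map_self_real]
    intro v
    have h0 := h v
    rw [Complex.le_def] at h0
    simp only [Complex.zero_im] at h0
    exact Complex.conj_eq_iff_im.mpr h0.2.symm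
  exact fun x y => hsym x y

lemma fixed_of_limit_fixed (T : ℕ → H →L[ℂ] H)
    (hcontr : ∀ n, ‖T n‖ ≤ 1)
    (hdec : ∀ n, ∀ ξ : H, ⟪(T (n + 1)) ξ, ξ⟫_ℂ ≤ ⟪(T n) ξ, ξ⟫_ℂ)
    (Tlim : H →L[ℂ] H)
    (hTlim : ∀ ξ : H, Tendsto (fun n => (T n) ξ) atTop (𝓝 (Tlim ξ)))
    (η : H) (hη : Tlim η = η) (n : ℕ) : T n η = η := by
  have hre : ∀ m, (⟪T (m + 1) η, η⟫_ℂ).re ≤ (⟪T m η, η⟫_ℂ).re :=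
    fun m => (Complex.le_def.mp (hdec m η)).1
  have hanti : Antitone fun m => (⟪T m η, η⟫_ℂ).re := antitone_nat_of_succ_le hre
  have h1 : Tendsto (fun m => ⟪T m η, η⟫_ℂ) atTop (𝓝 ⟪η, η⟫_ℂ) := by
    have := Filter.Tendsto.inner (𝕜 := ℂ) (hTlim η) (tendsto_const_nhds (x := η))
    rwa [hη] at this
  have hlim : Tendsto (fun m => (⟪T m η, η⟫_ℂ).re) atTop (𝓝 (‖η‖ ^ 2)) := by
    have h2 := (Complex.continuous_re.tendsto _).comp h1
    have h3 : (⟪η, η⟫_ℂ).re = ‖η‖ ^ 2 := by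
      rw [← RCLike.re_to_complex]
      exact inner_self_eq_norm_sq η
    rwa [h3] at h2
  have hge : ‖η‖ ^ 2 ≤ (⟪T n η, η⟫_ℂ).re := hanti.le_of_tendsto hlim n
  have hTn : ‖T n η‖ ≤ ‖η‖ := by
    have := (T n).le_opNorm η
    nlinarith [hcontr n, norm_nonneg η]
  have hle : (⟪T n η, η⟫_ℂ).re ≤ ‖η‖ * ‖η‖ := by
    have h4 : RCLike.re ⟪T n η, η⟫_ℂ ≤ ‖T n η‖ * ‖η‖ := re_inner_le_norm _ _
    rw [RCLike.re_to_complex] at h4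
    nlinarith [norm_nonneg η]
  have hsq : ‖T n η - η‖ ^ 2 ≤ 0 := by
    have h5 := norm_sub_sq (𝕜 := ℂ) (T n η) η
    rw [RCLike.re_to_complex] at h5
    nlinarith [norm_nonneg (T n η)]
  have h6 : ‖T n η - η‖ = 0 := by
    nlinarith [norm_nonneg (T n η - η), sq_nonneg ‖T n η - η‖]
  exact sub_eq_zero.mp (norm_eq_zero.mp h6)

end helpers

/-- The σ-Paszkiewicz set `H_σ = {ξ | S_n^σ ξ → P ξ}` is a closed linear subspace containing
the range of `P`, and `S_n^σ ξ → P ξ` iff `‖S_n^σ ξ‖ → ‖P ξ‖`. -/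
theorem sigma_paszkiewicz_subspace
    {H : Type*} [NormedAddCommGroup H] [InnerProductSpace ℂ H] [CompleteSpace H]
    (T : ℕ → H →L[ℂ] H)
    (hpos : ∀ n, ∀ ξ : H, 0 ≤ ⟪(T n) ξ, ξ⟫_ℂ)
    (hcontr : ∀ n, ‖T n‖ ≤ 1)
    (hdec : ∀ n, ∀ ξ : H, ⟪(T (n + 1)) ξ, ξ⟫_ℂ ≤ ⟪(T n) ξ, ξ⟫_ℂ)
    (Tlim : H →L[ℂ] H)
    (hTlim : ∀ ξ : H, Tendsto (fun n => (T n) ξ) atTop (𝓝 (Tlim ξ)))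
    (P : H →L[ℂ] H)
    (hPmem : ∀ ξ : H, Tlim (P ξ) = P ξ)
    (hPorth : ∀ ξ η : H, Tlim η = η → ⟪ξ - P ξ, η⟫_ℂ = 0)
    (σ : ℕ → ℕ) (hσ : ∀ k, (σ ⁻¹' {k}).Finite) :
    (∃ K : Submodule ℂ H,
      (K : Set H) = {ξ : H | Tendsto (fun n => prodSeq T σ n ξ) atTop (𝓝 (P ξ))}) ∧
    IsClosed {ξ : H | Tendsto (fun n => prodSeq T σ n ξ) atTop (𝓝 (P ξ))} ∧
    (∀ ξ : H, P ξ ∈ {ξ : H | Tendsto (fun n => prodSeq T σ n ξ) atTop (𝓝 (P ξ))}) ∧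
    (∀ ξ : H, Tendsto (fun n => prodSeq T σ n ξ) atTop (𝓝 (P ξ)) ↔
      Tendsto (fun n => ‖prodSeq T σ n ξ‖) atTop (𝓝 ‖P ξ‖)) := by
  have hsym : ∀ n (x y : H), ⟪T n x, y⟫_ℂ = ⟪x, T n y⟫_ℂ := fun n => sym_of_pos (T n) (hpos n)
  have hfix : ∀ (η : H), Tlim η = η → ∀ n, T n η = η :=
    fun η hη n => fixed_of_limit_fixed T hcontr hdec Tlim hTlim η hη n
  have hTnorm : ∀ k (x : H), ‖T k x‖ ≤ ‖x‖ := by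
    intro k x
    have := (T k).le_opNorm x
    nlinarith [hcontr k, norm_nonneg x]
  have hPnorm : ∀ ξ : H, ‖P ξ‖ ≤ ‖ξ‖ := by
    intro ξ
    have h0 : ⟪ξ - P ξ, P ξ⟫_ℂ = 0 := hPorth ξ (P ξ) (hPmem ξ)
    rw [inner_sub_left, sub_eq_zero] at h0
    have h1 : ‖P ξ‖ ^ 2 = RCLike.re ⟪ξ, P ξ⟫_ℂ := by
      rw [h0]; exact (inner_self_eq_norm_sq (P ξ)).symm
    have h2 : RCLike.re ⟪ξ, P ξ⟫_ℂ ≤ ‖ξ‖ * ‖P ξ‖ := re_inner_le_norm _ _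
    nlinarith [norm_nonneg (P ξ), norm_nonneg ξ]
  have hPidem : ∀ ξ : H, P (P ξ) = P ξ := by
    intro ξ
    have hfixsub : Tlim (P ξ - P (P ξ)) = P ξ - P (P ξ) := by
      rw [map_sub, hPmem, hPmem]
    have h0 := hPorth (P ξ) (P ξ - P (P ξ)) hfixsub
    exact (sub_eq_zero.mp (inner_self_eq_zero.mp h0)).symm
  have hTP : ∀ (ξ : H) n, T n (P ξ) = P ξ := fun ξ n => hfix (P ξ) (hPmem ξ) n
  have hSP : ∀ (ξ : H) n, prodSeq T σ n (P ξ) = P ξ := by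
    intro ξ n
    induction n with
    | zero => exact hTP ξ (σ 0)
    | succ n ih =>
      simp only [prodSeq, ContinuousLinearMap.comp_apply]
      rw [ih]; exact hTP ξ _
  have hSnorm : ∀ n (ξ : H), ‖prodSeq T σ n ξ‖ ≤ ‖ξ‖ := by
    intro n
    induction n with
    | zero => intro ξ; exact hTnorm (σ 0) ξ
    | succ n ih =>
      intro ξ
      simp only [prodSeq, ContinuousLinearMap.comp_apply]
      exact le_trans (hTnorm (σ (n + 1)) _) (ih ξ)
  have horth : ∀ (ξ : H) n, ⟪prodSeq T σ n ξ - P ξ, P ξ⟫_ℂ = 0 := by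
    intro ξ n
    have hd : prodSeq T σ n ξ - P ξ = prodSeq T σ n (ξ - P ξ) := by
      rw [map_sub, hSP]
    rw [hd]
    induction n with
    | zero =>
      show ⟪T (σ 0) (ξ - P ξ), P ξ⟫_ℂ = 0
      rw [hsym, hTP]
      exact hPorth ξ (P ξ) (hPmem ξ)
    | succ n ih =>
      have ih' := ih (by rw [map_sub, hSP])
      simp only [prodSeq, ContinuousLinearMap.comp_apply]
      rw [hsym, hTP]
      exact ih'
  have hpyth : ∀ (ξ : H) n, ‖prodSeq T σ n ξ‖ ^ 2 = ‖P ξ‖ ^ 2 + ‖prodSeq T σ n ξ - P ξ‖ ^ 2 := by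
    intro ξ n
    have h0 : ⟪(P ξ : H), prodSeq T σ n ξ - P ξ⟫_ℂ = 0 := by
      rw [← inner_conj_symm, horth ξ n, map_zero]
    have hrep : prodSeq T σ n ξ = P ξ + (prodSeq T σ n ξ - P ξ) := by abel
    calc ‖prodSeq T σ n ξ‖ ^ 2 = ‖P ξ + (prodSeq T σ n ξ - P ξ)‖ ^ 2 := by rw [← hrep]
      _ = ‖P ξ‖ ^ 2 + 2 * RCLike.re ⟪(P ξ : H), prodSeq T σ n ξ - P ξ⟫_ℂ
            + ‖prodSeq T σ n ξ - P ξ‖ ^ 2 := norm_add_sq _ _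
      _ = ‖P ξ‖ ^ 2 + ‖prodSeq T σ n ξ - P ξ‖ ^ 2 := by rw [h0]; simp
  refine ⟨?_, ?_, ?_, ?_⟩
  · refine ⟨{ carrier := ({ξ : H | Tendsto (fun n => prodSeq T σ n ξ) atTop (𝓝 (P ξ))} : Set H)
              add_mem' := ?_
              zero_mem' := ?_
              smul_mem' := ?_ }, rfl⟩
    · intro a b ha hb
      simp only [Set.mem_setOf_eq] at ha hb ⊢
      simpa only [map_add] using ha.add hb
    · show Tendsto (fun n => prodSeq T σ n (0 : H)) atTop (𝓝 (P 0))
      simpa only [map_zero] using (tendsto_const_nhds : Tendsto (fun _ : ℕ => (0 : H)) atTop (𝓝 0))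
    · intro c x hx
      simp only [Set.mem_setOf_eq] at hx ⊢
      simpa only [map_smul] using hx.const_smul c
  · rw [← isSeqClosed_iff_isClosed]
    intro u ξ hu hulim
    rw [Set.mem_setOf_eq, Metric.tendsto_atTop]
    intro ε hε
    obtain ⟨k, hk⟩ := (Metric.tendsto_atTop.mp hulim) (ε / 3) (by positivity)
    have hk' : ‖u k - ξ‖ < ε / 3 := by rw [← dist_eq_norm]; exact hk k le_rfl
    obtain ⟨N, hN⟩ := (Metric.tendsto_atTop.mp (hu k)) (ε / 3) (by positivity)
    refine ⟨N, fun n hn => ?_⟩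
    have e1 : ‖prodSeq T σ n ξ - prodSeq T σ n (u k)‖ ≤ ‖ξ - u k‖ := by
      rw [← map_sub]; exact hSnorm n _
    have e2 : ‖prodSeq T σ n (u k) - P (u k)‖ < ε / 3 := by
      rw [← dist_eq_norm]; exact hN n hn
    have e3 : ‖P (u k) - P ξ‖ ≤ ‖u k - ξ‖ := by
      rw [← map_sub]; exact hPnorm _
    have tri : dist (prodSeq T σ n ξ) (P ξ) ≤
        dist (prodSeq T σ n ξ) (prodSeq T σ n (u k)) + dist (prodSeq T σ n (u k)) (P (u k))
          + dist (P (u k)) (P ξ) := dist_triangle4 _ _ _ _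
    simp only [dist_eq_norm] at tri ⊢
    have hrev : ‖ξ - u k‖ = ‖u k - ξ‖ := norm_sub_rev _ _
    linarith
  · intro ξ
    have hconst : (fun n => prodSeq T σ n (P ξ)) = fun _ => P ξ := funext (hSP ξ)
    rw [Set.mem_setOf_eq, hconst, hPidem]
    exact tendsto_const_nhds
  · intro ξ
    constructor
    · exact fun h => h.norm
    · intro h
      rw [tendsto_iff_norm_sub_tendsto_zero]
      have h2 : Tendsto (fun n => ‖prodSeq T σ n ξ - P ξ‖ ^ 2) atTop (𝓝 0) := by
        have h3 : Tendsto (fun n => ‖prodSeq T σ n ξ‖ ^ 2 - ‖P ξ‖ ^ 2) atTop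
            (𝓝 (‖P ξ‖ ^ 2 - ‖P ξ‖ ^ 2)) := (h.pow 2).sub tendsto_const_nhds
        rw [sub_self] at h3
        refine h3.congr fun n => ?_
        rw [hpyth ξ n]; ring
      have h4 : Tendsto (fun n => Real.sqrt (‖prodSeq T σ n ξ - P ξ‖ ^ 2)) atTop
          (𝓝 (Real.sqrt 0)) := (Real.continuous_sqrt.tendsto 0).comp h2
      simpa [Real.sqrt_sq_eq_abs, abs_norm] using h4
end

section
/- Let H be a complex Hilbert space, T_1 ≥ T_2 ≥ ⋯ a decreasing sequence of positive linear contractions on H, T the strong operator limit of (T_n), and P the orthogonal projection onto {ξ ∈ H : Tξ = ξ}. Define H_𝒮 := ⋂_{σ proper} H_σ, where H_σ := {ξ ∈ H : ‖T_{σ(n)} ⋯ T_{σ(1)} ξ − P ξ‖ → 0}. Then H_𝒮 is a closed linear subspace of H which is invariant under T_m for every m ∈ ℕ, i.e., T_m(H_𝒮) ⊆ H_𝒮. -/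
open Filter Topology
open scoped InnerProductSpace ComplexOrder

section Aux

variable {H : Type*} [NormedAddCommGroup H] [InnerProductSpace ℂ H]

lemma prodSeq_norm_le (T : ℕ → H →L[ℂ] H) (hcontr : ∀ n, ‖T n‖ ≤ 1)
    (σ : ℕ → ℕ) (n : ℕ) : ‖prodSeq T σ n‖ ≤ 1 := by
  induction n with
  | zero => exact hcontr _
  | succ n ih =>
    calc ‖prodSeq T σ (n + 1)‖ ≤ ‖T (σ (n + 1))‖ * ‖prodSeq T σ n‖ :=
          ContinuousLinearMap.opNorm_comp_le _ _
    _ ≤ 1 * 1 := by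
          exact mul_le_mul (hcontr _) ih (norm_nonneg _) zero_le_one
    _ = 1 := one_mul 1

lemma prodSeq_shift (T : ℕ → H →L[ℂ] H) (σ : ℕ → ℕ) (m : ℕ) (ξ : H) (n : ℕ) :
    prodSeq T (fun k => Nat.rec m (fun j _ => σ j) k) (n + 1) ξ
      = prodSeq T σ n (T m ξ) := by
  induction n with
  | zero => rfl
  | succ n ih =>
    show T (σ (n + 1)) (prodSeq T (fun k => Nat.rec m (fun j _ => σ j) k) (n + 1) ξ)
      = T (σ (n + 1)) (prodSeq T σ n (T m ξ))
    rw [ih]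

end Aux

/-- The generalized Paszkiewicz set `H_𝒮 = ⋂_{σ proper} H_σ` is a closed linear subspace of
`H` which is invariant under every `T m`. -/
theorem generalized_paszkiewicz_subspace_invariant
    {H : Type*} [NormedAddCommGroup H] [InnerProductSpace ℂ H] [CompleteSpace H]
    (T : ℕ → H →L[ℂ] H)
    (hpos : ∀ n, ∀ ξ : H, 0 ≤ ⟪(T n) ξ, ξ⟫_ℂ)
    (hcontr : ∀ n, ‖T n‖ ≤ 1)
    (hdec : ∀ n, ∀ ξ : H, ⟪(T (n + 1)) ξ, ξ⟫_ℂ ≤ ⟪(T n) ξ, ξ⟫_ℂ)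
    (Tlim : H →L[ℂ] H)
    (hTlim : ∀ ξ : H, Tendsto (fun n => (T n) ξ) atTop (𝓝 (Tlim ξ)))
    (P : H →L[ℂ] H)
    (hPmem : ∀ ξ : H, Tlim (P ξ) = P ξ)
    (hPorth : ∀ ξ η : H, Tlim η = η → ⟪ξ - P ξ, η⟫_ℂ = 0)
    (HS : Set H)
    (hHS : HS = {ξ : H | ∀ σ : ℕ → ℕ, (∀ k, (σ ⁻¹' {k}).Finite) →
      Tendsto (fun n => prodSeq T σ n ξ) atTop (𝓝 (P ξ))}) :
    (∃ K : Submodule ℂ H, (K : Set H) = HS) ∧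
    IsClosed HS ∧
    (∀ m : ℕ, ∀ ξ ∈ HS, T m ξ ∈ HS) := by
  -- each T m is symmetric
  have hsym : ∀ m (ξ η : H), ⟪T m ξ, η⟫_ℂ = ⟪ξ, T m η⟫_ℂ := by
    intro m
    have := (LinearMap.isSymmetric_iff_inner_map_self_real ((T m : H →L[ℂ] H) : H →ₗ[ℂ] H)).2
      (fun v => by
        have h := hpos m v
        rw [Complex.le_def] at h
        apply Complex.conj_eq_iff_im.2
        simpa using h.2.symm)
    exact fun ξ η => this ξ η
  -- fixed points of Tlim are fixed by every T n
  have hfix : ∀ (η : H), Tlim η = η → ∀ n, T n η = η := by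
    intro η hη n
    have hanti : Antitone (fun k => Complex.re ⟪T k η, η⟫_ℂ) := by
      apply antitone_nat_of_succ_le
      intro k
      have := hdec k η
      rw [Complex.le_def] at this
      exact this.1
    have htend : Tendsto (fun k => Complex.re ⟪T k η, η⟫_ℂ) atTop
        (𝓝 (Complex.re ⟪Tlim η, η⟫_ℂ)) :=
      (Complex.continuous_re.tendsto _).comp
        ((hTlim η).inner (tendsto_const_nhds : Tendsto (fun _ : ℕ => η) atTop (𝓝 η)))
    have hle : Complex.re ⟪Tlim η, η⟫_ℂ ≤ Complex.re ⟪T n η, η⟫_ℂ := by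
      apply le_of_tendsto htend
      filter_upwards [eventually_ge_atTop n] with k hk
      exact hanti hk
    rw [hη] at hle
    have hinner : (‖η‖ : ℝ) ^ 2 ≤ Complex.re ⟪T n η, η⟫_ℂ := by
      have h0 : RCLike.re ⟪η, η⟫_ℂ = ‖η‖ ^ 2 := @inner_self_eq_norm_sq ℂ _ _ _ _ η
      rw [RCLike.re_to_complex] at h0
      rw [← h0]
      exact hle
    have hnorm : ‖T n η‖ ≤ ‖η‖ := by
      calc ‖T n η‖ ≤ ‖T n‖ * ‖η‖ := (T n).le_opNorm η
      _ ≤ 1 * ‖η‖ := by nlinarith [norm_nonneg η, hcontr n]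
      _ = ‖η‖ := one_mul _
    have hsq : ‖T n η - η‖ ^ 2 ≤ 0 := by
      rw [@norm_sub_sq ℂ]
      simp only [RCLike.re_to_complex]
      nlinarith [norm_nonneg (T n η), norm_nonneg η]
    have : T n η - η = 0 := by
      have := norm_nonneg (T n η - η)
      have h0 : ‖T n η - η‖ = 0 := by nlinarith
      exact norm_eq_zero.1 h0
    exact sub_eq_zero.1 this
  -- P (T m ξ) = P ξ
  have hPT : ∀ m (ξ : H), P (T m ξ) = P ξ := by
    intro m ξ
    set d := P (T m ξ) - P ξ with hd
    have hdfix : Tlim d = d := by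
      rw [hd, map_sub, hPmem, hPmem]
    have h1 : ⟪T m ξ - P (T m ξ), d⟫_ℂ = 0 := hPorth (T m ξ) d hdfix
    have h2 : ⟪ξ - P ξ, d⟫_ℂ = 0 := hPorth ξ d hdfix
    have h3 : ⟪T m ξ - ξ, d⟫_ℂ = 0 := by
      rw [inner_sub_left, hsym m ξ d, hfix d hdfix m, sub_self]
    have h4 : ⟪d, d⟫_ℂ = 0 := by
      have : (⟪T m ξ - P (T m ξ), d⟫_ℂ) - (⟪T m ξ - ξ, d⟫_ℂ) - (⟪ξ - P ξ, d⟫_ℂ)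
          = - ⟪d, d⟫_ℂ := by
        rw [← inner_sub_left, ← inner_sub_left, ← inner_neg_left]
        congr 1
        rw [hd]
        abel
      rw [h1, h2, h3] at this
      simpa using this.symm
    have : d = 0 := inner_self_eq_zero.1 h4
    exact sub_eq_zero.1 this
  -- ‖P ξ‖ ≤ ‖ξ‖
  have hPnorm : ∀ ξ : H, ‖P ξ‖ ≤ ‖ξ‖ := by
    intro ξ
    have h := hPorth ξ (P ξ) (hPmem ξ)
    have hre : Complex.re ⟪P ξ, ξ - P ξ⟫_ℂ = 0 := by
      rw [← inner_conj_symm, h]; simp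
    have : ‖ξ‖ ^ 2 = ‖P ξ‖ ^ 2 + ‖ξ - P ξ‖ ^ 2 := by
      have hsum : P ξ + (ξ - P ξ) = ξ := by abel
      calc ‖ξ‖ ^ 2 = ‖P ξ + (ξ - P ξ)‖ ^ 2 := by rw [hsum]
      _ = ‖P ξ‖ ^ 2 + 2 * Complex.re ⟪P ξ, ξ - P ξ⟫_ℂ + ‖ξ - P ξ‖ ^ 2 := by
            have := @norm_add_sq ℂ H _ _ _ (P ξ) (ξ - P ξ)
            rw [RCLike.re_to_complex] at this
            exact this
      _ = ‖P ξ‖ ^ 2 + ‖ξ - P ξ‖ ^ 2 := by rw [hre]; ring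
    nlinarith [norm_nonneg (P ξ), norm_nonneg ξ, norm_nonneg (ξ - P ξ)]
  subst hHS
  refine ⟨?_, ?_, ?_⟩
  · -- submodule
    refine ⟨{ carrier := _,
              add_mem' := ?_, zero_mem' := ?_, smul_mem' := ?_ }, rfl⟩
    · intro a b ha hb σ hσ
      have := (ha σ hσ).add (hb σ hσ)
      simpa [map_add] using this
    · intro σ hσ
      simp only [map_zero]
      exact tendsto_const_nhds
    · intro c a ha σ hσ
      have := (ha σ hσ).const_smul c
      simpa [map_smul] using this
  · -- closed
    apply IsSeqClosed.isClosed
    intro x a hx hxa σ hσ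
    rw [Metric.tendsto_atTop]
    intro ε hε
    obtain ⟨k, hk⟩ : ∃ k, ‖x k - a‖ < ε / 3 := by
      have := (Metric.tendsto_atTop.1 hxa) (ε / 3) (by linarith)
      obtain ⟨N, hN⟩ := this
      exact ⟨N, by simpa [dist_eq_norm] using hN N le_rfl⟩
    obtain ⟨N, hN⟩ := (Metric.tendsto_atTop.1 (hx k σ hσ)) (ε / 3) (by linarith)
    refine ⟨N, fun n hn => ?_⟩
    have h1 : ‖prodSeq T σ n a - prodSeq T σ n (x k)‖ ≤ ‖a - x k‖ := by
      calc ‖prodSeq T σ n a - prodSeq T σ n (x k)‖ = ‖prodSeq T σ n (a - x k)‖ := by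
            rw [map_sub]
      _ ≤ ‖prodSeq T σ n‖ * ‖a - x k‖ := (prodSeq T σ n).le_opNorm _
      _ ≤ 1 * ‖a - x k‖ := by
            exact mul_le_mul_of_nonneg_right (prodSeq_norm_le T hcontr σ n) (norm_nonneg _)
      _ = ‖a - x k‖ := one_mul _
    have h2 : ‖prodSeq T σ n (x k) - P (x k)‖ < ε / 3 := by
      simpa [dist_eq_norm] using hN n hn
    have h3 : ‖P (x k) - P a‖ ≤ ‖x k - a‖ := by
      calc ‖P (x k) - P a‖ = ‖P (x k - a)‖ := by rw [map_sub]
      _ ≤ ‖x k - a‖ := hPnorm _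
    have hax : ‖a - x k‖ < ε / 3 := by
      rw [← norm_neg]; simpa using hk
    calc dist (prodSeq T σ n a) (P a) = ‖prodSeq T σ n a - P a‖ := dist_eq_norm _ _
    _ = ‖(prodSeq T σ n a - prodSeq T σ n (x k)) + (prodSeq T σ n (x k) - P (x k))
          + (P (x k) - P a)‖ := by congr 1; abel
    _ ≤ ‖prodSeq T σ n a - prodSeq T σ n (x k)‖ + ‖prodSeq T σ n (x k) - P (x k)‖
          + ‖P (x k) - P a‖ := norm_add₃_le
    _ < ε / 3 + ε / 3 + ε / 3 := by
          have := h1.trans_lt hax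
          have := h3.trans_lt hk
          linarith
    _ = ε := by ring
  · -- invariance
    intro m ξ hξ σ hσ
    set σ' : ℕ → ℕ := fun k => Nat.rec m (fun j _ => σ j) k with hσ'
    have hσ'proper : ∀ k, (σ' ⁻¹' {k}).Finite := by
      intro k
      have hsub : σ' ⁻¹' {k} ⊆ insert 0 (Nat.succ '' (σ ⁻¹' {k})) := by
        intro n hn
        match n with
        | 0 => exact Set.mem_insert _ _
        | n + 1 =>
          exact Set.mem_insert_of_mem _ ⟨n, hn, rfl⟩
      exact Set.Finite.subset (Set.Finite.insert 0 ((hσ k).image _)) hsub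
    have h := hξ σ' hσ'proper
    have hshift : Tendsto (fun n => prodSeq T σ' (n + 1) ξ) atTop (𝓝 (P ξ)) :=
      h.comp (tendsto_add_atTop_nat 1)
    have heq : (fun n => prodSeq T σ' (n + 1) ξ) = fun n => prodSeq T σ n (T m ξ) := by
      funext n
      exact prodSeq_shift T σ m ξ n
    rw [heq] at hshift
    rw [hPT m ξ]
    exact hshift
end

section
/- Let H be a complex Hilbert space, T_1 ≥ T_2 ≥ ⋯ a decreasing sequence of positive linear contractions on H, T the strong operator limit of (T_n), and P the orthogonal projection onto {ξ ∈ H : Tξ = ξ}. Define H_𝒮 := ⋂_{σ proper} H_σ, where H_σ := {ξ ∈ H : ‖T_{σ(n)} ⋯ T_{σ(1)} ξ − P ξ‖ → 0}, and let e be the orthogonal projection onto H_𝒮. Let u be a bounded linear operator on H which commutes with T_n for every n ∈ ℕ and is a partial isometry with u^* u = e. Then the range of u u^* is contained in H_𝒮, i.e., u u^* ≤ e. -/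
open Filter Topology
open scoped InnerProductSpace ComplexOrder

/-- If `e` is the orthogonal projection onto `H_𝒮` and `u` is a partial isometry commuting
with all `T n` with `u^* u = e`, then the range of `u u^*` is contained in `H_𝒮`. -/
theorem equivalent_projection_below_generalized_paszkiewicz
    {H : Type*} [NormedAddCommGroup H] [InnerProductSpace ℂ H] [CompleteSpace H]
    (T : ℕ → H →L[ℂ] H)
    (hpos : ∀ n, ∀ ξ : H, 0 ≤ ⟪(T n) ξ, ξ⟫_ℂ)
    (hcontr : ∀ n, ‖T n‖ ≤ 1)
    (hdec : ∀ n, ∀ ξ : H, ⟪(T (n + 1)) ξ, ξ⟫_ℂ ≤ ⟪(T n) ξ, ξ⟫_ℂ)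
    (Tlim : H →L[ℂ] H)
    (hTlim : ∀ ξ : H, Tendsto (fun n => (T n) ξ) atTop (𝓝 (Tlim ξ)))
    (P : H →L[ℂ] H)
    (hPmem : ∀ ξ : H, Tlim (P ξ) = P ξ)
    (hPorth : ∀ ξ η : H, Tlim η = η → ⟪ξ - P ξ, η⟫_ℂ = 0)
    (HS : Set H)
    (hHS : HS = {ξ : H | ∀ σ : ℕ → ℕ, (∀ k, (σ ⁻¹' {k}).Finite) →
      Tendsto (fun n => prodSeq T σ n ξ) atTop (𝓝 (P ξ))})
    (e : H →L[ℂ] H)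
    (heMem : ∀ ξ : H, e ξ ∈ HS)
    (heOrth : ∀ ξ : H, ∀ η ∈ HS, ⟪ξ - e ξ, η⟫_ℂ = 0)
    (u : H →L[ℂ] H)
    (huComm : ∀ n, u.comp (T n) = (T n).comp u)
    (huu : (ContinuousLinearMap.adjoint u).comp u = e) :
    ∀ ξ : H, (u.comp (ContinuousLinearMap.adjoint u)) ξ ∈ HS := by
  classical
  set u' := ContinuousLinearMap.adjoint u with hu'
  -- T n is self-adjoint
  have hsa : ∀ n, IsSelfAdjoint (T n) := by
    intro n
    have := (ContinuousLinearMap.isPositive_iff_complex (T n)).mpr (fun x => by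
      have h := hpos n x
      rw [Complex.le_def] at h
      constructor
      · apply Complex.ext <;> simp [h.2.symm]
      · simpa using h.1)
    exact this.isSelfAdjoint
  -- pointwise commutation
  have huComm' : ∀ n (ξ : H), u (T n ξ) = T n (u ξ) := by
    intro n ξ
    have := congrArg (fun A : H →L[ℂ] H => A ξ) (huComm n)
    simpa using this
  have hu'Comm : ∀ n (ξ : H), u' (T n ξ) = T n (u' ξ) := by
    intro n ξ
    have h := congrArg ContinuousLinearMap.adjoint (huComm n)
    rw [ContinuousLinearMap.adjoint_comp, ContinuousLinearMap.adjoint_comp,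
      (hsa n).adjoint_eq] at h
    have := congrArg (fun A : H →L[ℂ] H => A ξ) h
    simpa [u'] using this.symm
  -- u and u' commute with Tlim
  have huTlim : ∀ ξ : H, u (Tlim ξ) = Tlim (u ξ) := by
    intro ξ
    have h1 : Tendsto (fun n => u (T n ξ)) atTop (𝓝 (u (Tlim ξ))) :=
      (u.continuous.tendsto _).comp (hTlim ξ)
    have h2 : Tendsto (fun n => T n (u ξ)) atTop (𝓝 (Tlim (u ξ))) := hTlim (u ξ)
    have h3 : (fun n => u (T n ξ)) = fun n => T n (u ξ) := funext fun n => huComm' n ξ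
    rw [h3] at h1
    exact tendsto_nhds_unique h1 h2
  have hu'Tlim : ∀ ξ : H, u' (Tlim ξ) = Tlim (u' ξ) := by
    intro ξ
    have h1 : Tendsto (fun n => u' (T n ξ)) atTop (𝓝 (u' (Tlim ξ))) :=
      (u'.continuous.tendsto _).comp (hTlim ξ)
    have h2 : Tendsto (fun n => T n (u' ξ)) atTop (𝓝 (Tlim (u' ξ))) := hTlim (u' ξ)
    have h3 : (fun n => u' (T n ξ)) = fun n => T n (u' ξ) := funext fun n => hu'Comm n ξ
    rw [h3] at h1
    exact tendsto_nhds_unique h1 h2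
  -- HS is closed under subtraction
  have hsub : ∀ ξ η : H, ξ ∈ HS → η ∈ HS → ξ - η ∈ HS := by
    intro ξ η hξ hη
    rw [hHS] at hξ hη ⊢
    intro σ hσ
    have := (hξ σ hσ).sub (hη σ hσ)
    simpa [map_sub] using this
  -- e is idempotent
  have hidem : ∀ ξ : H, e (e ξ) = e ξ := by
    intro ξ
    have hd : e ξ - e (e ξ) ∈ HS := hsub _ _ (heMem ξ) (heMem (e ξ))
    have h0 : ⟪e ξ - e (e ξ), e ξ - e (e ξ)⟫_ℂ = 0 := heOrth (e ξ) _ hd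
    have := inner_self_eq_zero.mp h0
    exact (sub_eq_zero.mp this).symm
  -- u ∘ e = u
  have hue : ∀ ξ : H, u (e ξ) = u ξ := by
    intro ξ
    have hkey : ⟪u (ξ - e ξ), u (ξ - e ξ)⟫_ℂ = 0 := by
      rw [← ContinuousLinearMap.adjoint_inner_right]
      have : u' (u (ξ - e ξ)) = e (ξ - e ξ) := by
        have := congrArg (fun A : H →L[ℂ] H => A (ξ - e ξ)) huu
        simpa [u'] using this
      rw [this]
      simp [map_sub, hidem]
    have h0 : u (ξ - e ξ) = 0 := inner_self_eq_zero.mp hkey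
    rw [map_sub, sub_eq_zero] at h0
    exact h0.symm
  -- P commutes with u
  have hPu : ∀ ξ : H, P (u ξ) = u (P ξ) := by
    intro ξ
    set d := P (u ξ) - u (P ξ) with hd
    have hdfix : Tlim d = d := by
      rw [hd, map_sub, hPmem, ← huTlim, hPmem]
    have h1 : ⟪u ξ - P (u ξ), d⟫_ℂ = 0 := hPorth (u ξ) d hdfix
    have h2 : ⟪u ξ - u (P ξ), d⟫_ℂ = 0 := by
      have : u ξ - u (P ξ) = u (ξ - P ξ) := by rw [map_sub]
      rw [this, ← ContinuousLinearMap.adjoint_inner_right]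
      exact hPorth ξ _ (by rw [← hu', ← hu'Tlim d, hdfix])
    have hdd : ⟪d, d⟫_ℂ = 0 := by
      have : (⟪d, d⟫_ℂ) = ⟪u ξ - u (P ξ), d⟫_ℂ - ⟪u ξ - P (u ξ), d⟫_ℂ := by
        rw [← inner_sub_left]
        congr 1
        rw [hd]; abel
      rw [this, h1, h2, sub_zero]
    have := inner_self_eq_zero.mp hdd
    rw [hd, sub_eq_zero] at this
    exact this
  -- main argument
  intro ξ
  set w := e (u' ξ) with hw
  have hwHS : w ∈ HS := heMem _
  have hval : (u.comp u') ξ = u w := by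
    simp only [ContinuousLinearMap.comp_apply, hw, hue]
  rw [hval, hHS]
  intro σ hσ
  have hconv : Tendsto (fun n => prodSeq T σ n w) atTop (𝓝 (P w)) := by
    have := hwHS; rw [hHS] at this; exact this σ hσ
  have hprod : ∀ n (ζ : H), prodSeq T σ n (u ζ) = u (prodSeq T σ n ζ) := by
    intro n
    induction n with
    | zero => intro ζ; exact (huComm' (σ 0) ζ).symm
    | succ k ih =>
      intro ζ
      simp only [prodSeq, ContinuousLinearMap.comp_apply]
      rw [ih ζ, huComm']
  have hfinal : Tendsto (fun n => u (prodSeq T σ n w)) atTop (𝓝 (u (P w))) :=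
    (u.continuous.tendsto _).comp hconv
  have : (fun n => prodSeq T σ n (u w)) = fun n => u (prodSeq T σ n w) :=
    funext fun n => hprod n w
  rw [this, hPu]
  exact hfinal
end

section
/- Let H be a complex Hilbert space and let T_1 ≥ T_2 be positive linear contractions on H. For i ∈ {1, 2} let P_i denote the orthogonal projection onto {ξ ∈ H : T_i ξ = ξ}, and P_i^⊥ := I − P_i. Then for all i, j ∈ {1, 2}, T_i maps the range of P_j^⊥ into the range of P_{max(i,j)}^⊥; equivalently, if ξ is orthogonal to {η : T_j η = η}, then T_i ξ is orthogonal to {η : T_{max(i,j)} η = η}. -/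
open scoped InnerProductSpace ComplexOrder

/-- For positive contractions `T 0 ≥ T 1`, the operator `T i` maps the orthogonal complement
of the fixed-point set of `T j` into the orthogonal complement of the fixed-point set of
`T (max i j)`. -/
theorem positive_contraction_maps_orthocomplement
    {H : Type*} [NormedAddCommGroup H] [InnerProductSpace ℂ H] [CompleteSpace H]
    (T : Fin 2 → H →L[ℂ] H)
    (hpos : ∀ i, ∀ ξ : H, 0 ≤ ⟪(T i) ξ, ξ⟫_ℂ)
    (hcontr : ∀ i, ‖T i‖ ≤ 1)
    (hdec : ∀ ξ : H, ⟪(T 1) ξ, ξ⟫_ℂ ≤ ⟪(T 0) ξ, ξ⟫_ℂ) :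
    ∀ i j : Fin 2, ∀ ξ : H,
      (∀ η : H, T j η = η → ⟪ξ, η⟫_ℂ = 0) →
      (∀ η : H, T (max i j) η = η → ⟪(T i) ξ, η⟫_ℂ = 0) := by
  -- each T i is symmetric
  have hsym : ∀ i : Fin 2, ∀ x y : H, ⟪(T i) x, y⟫_ℂ = ⟪x, (T i) y⟫_ℂ := by
    intro i
    have := (LinearMap.isSymmetric_iff_inner_map_self_real ((T i : H →ₗ[ℂ] H))).2
      (fun v => by
        have h := hpos i v
        rw [Complex.le_def] at h
        exact Complex.conj_eq_iff_im.2 h.2.symm)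
    exact fun x y => this x y
  -- norm bound
  have hnorm : ∀ i : Fin 2, ∀ x : H, ‖(T i) x‖ ≤ ‖x‖ := by
    intro i x
    calc ‖(T i) x‖ ≤ ‖T i‖ * ‖x‖ := (T i).le_opNorm x
    _ ≤ 1 * ‖x‖ := by
      exact mul_le_mul_of_nonneg_right (hcontr i) (norm_nonneg x)
    _ = ‖x‖ := one_mul _
  -- fixed points of T 1 are fixed by T 0
  have hfix : ∀ η : H, T 1 η = η → T 0 η = η := by
    intro η hη
    have h1 : ⟪(T 1) η, η⟫_ℂ = (‖η‖ : ℂ) ^ 2 := by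
      rw [hη]; exact inner_self_eq_norm_sq_to_K (𝕜 := ℂ) η
    have h2 := hdec η
    rw [h1, Complex.le_def] at h2
    have hre : (‖η‖ : ℝ) ^ 2 ≤ (⟪(T 0) η, η⟫_ℂ).re := by
      simpa [← Complex.ofReal_pow] using h2.1
    have hre2 : (⟪(T 0) η, η⟫_ℂ).re ≤ ‖(T 0) η‖ * ‖η‖ := by
      have := re_inner_le_norm (𝕜 := ℂ) ((T 0) η) η
      simpa using this
    have hb : ‖(T 0) η‖ ≤ ‖η‖ := hnorm 0 η
    have hsub : ‖(T 0) η - η‖ ^ 2 = ‖(T 0) η‖ ^ 2 - 2 * (⟪(T 0) η, η⟫_ℂ).re + ‖η‖ ^ 2 := by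
      have := norm_sub_sq (𝕜 := ℂ) ((T 0) η) η
      simpa using this
    have hzero : ‖(T 0) η - η‖ ^ 2 ≤ 0 := by nlinarith [norm_nonneg ((T 0) η), norm_nonneg η]
    have : ‖(T 0) η - η‖ = 0 := by nlinarith [norm_nonneg ((T 0) η - η)]
    have := norm_eq_zero.mp this
    exact sub_eq_zero.mp this
  intro i j ξ hξ η
  have hi : i = 0 ∨ i = 1 := by omega
  have hj : j = 0 ∨ j = 1 := by omega
  rcases hi with rfl | rfl <;> rcases hj with rfl | rfl <;>
    simp only [show (max (0:Fin 2) 0) = 0 by decide, show (max (0:Fin 2) 1) = 1 by decide,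
      show (max (1:Fin 2) 0) = 1 by decide, show (max (1:Fin 2) 1) = 1 by decide] <;>
    intro hη
  · rw [hsym 0, hη]; exact hξ η hη
  · rw [hsym 0, hfix η hη]; exact hξ η hη
  · rw [hsym 1, hη]; exact hξ η (hfix η hη)
  · rw [hsym 1, hη]; exact hξ η hη
end

section
/- Let H be a complex Hilbert space, T_1 ≥ T_2 ≥ ⋯ a decreasing sequence of positive linear contractions on H, T the strong operator limit of (T_n), and P the orthogonal projection onto {ξ ∈ H : Tξ = ξ}. Assume the sequence has uniform spectral gap at 1, i.e., there exist δ ∈ (0, 1) and N ∈ ℕ such that the spectrum of T_n does not intersect the open interval (1−δ, 1) for every n ≥ N. Then for every proper σ : ℕ → ℕ and every ξ ∈ H, ‖T_{σ(n)} ⋯ T_{σ(1)} ξ − P ξ‖ → 0. -/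
open Filter Topology
open scoped InnerProductSpace ComplexOrder

section PaszkiewiczHelpers
open ContinuousLinearMap RCLike

variable {H : Type*} [NormedAddCommGroup H] [InnerProductSpace ℂ H] [CompleteSpace H]

lemma sa_inner_im (A : H →L[ℂ] H) (hsa : IsSelfAdjoint A) (x : H) :
    (⟪A x, x⟫_ℂ).im = 0 := by
  have h : (starRingEnd ℂ) ⟪A x, x⟫_ℂ = ⟪A x, x⟫_ℂ := by
    rw [inner_conj_symm]
    exact ((isSelfAdjoint_iff_isSymmetric.mp hsa) x x).symm
  exact Complex.conj_eq_iff_im.mp h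

lemma sa_inner_real (A : H →L[ℂ] H) (hsa : IsSelfAdjoint A) (x : H) :
    ((re ⟪A x, x⟫_ℂ : ℝ) : ℂ) = ⟪A x, x⟫_ℂ := by
  apply Complex.ext <;> simp [sa_inner_im A hsa x]

lemma le_one_of_norm_le (A : H →L[ℂ] H) (hsa : IsSelfAdjoint A) (h : ‖A‖ ≤ 1) : A ≤ 1 := by
  rw [ContinuousLinearMap.le_def, isPositive_iff_complex]
  intro x
  have h1 : ‖⟪A x, x⟫_ℂ‖ ≤ ‖x‖ ^ 2 := by
    have h2 := norm_inner_le_norm (𝕜 := ℂ) (A x) x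
    have h3 := A.le_opNorm x
    have h4 := norm_nonneg x
    have h5 := opNorm_nonneg A
    nlinarith [norm_nonneg (A x)]
  have hsa1 : IsSelfAdjoint ((1 : H →L[ℂ] H) - A) := IsSelfAdjoint.sub (.one _) hsa
  refine ⟨sa_inner_real _ hsa1 x, ?_⟩
  have hx : (1 - A) x = x - A x := rfl
  rw [hx, inner_sub_left, map_sub]
  have hre : re ⟪A x, x⟫_ℂ ≤ ‖⟪A x, x⟫_ℂ‖ := re_le_norm _
  have hself : re ⟪x, x⟫_ℂ = ‖x‖ ^ 2 := by
    rw [inner_self_eq_norm_sq]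
  linarith

lemma mem_spectrum_complex (A : H →L[ℂ] H) (x : ℝ) (hx : x ∈ spectrum ℝ A) :
    (x : ℂ) ∈ spectrum ℂ A := by
  rw [spectrum.mem_iff] at hx ⊢
  convert hx using 2
  rw [Algebra.algebraMap_eq_smul_one, Algebra.algebraMap_eq_smul_one, Complex.coe_smul]

lemma nonneg_of_inner (A : H →L[ℂ] H) (h : ∀ ξ : H, 0 ≤ ⟪A ξ, ξ⟫_ℂ) : 0 ≤ A := by
  rw [nonneg_iff_isPositive, isPositive_iff_complex]
  intro x
  have := h x
  rw [Complex.le_def] at this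
  simp only [Complex.zero_re, Complex.zero_im] at this
  exact ⟨by apply Complex.ext <;> simp [this.2.symm], this.1⟩

lemma inner_mono_of_le {A B : H →L[ℂ] H} (h : A ≤ B) (x : H) :
    re ⟪A x, x⟫_ℂ ≤ re ⟪B x, x⟫_ℂ := by
  have := (ContinuousLinearMap.le_def A B).mp h |>.inner_nonneg_left x
  rw [ContinuousLinearMap.sub_apply, inner_sub_left] at this
  have h2 := (Complex.le_def.mp this).1
  simp only [Complex.zero_re, Complex.sub_re] at h2
  exact sub_nonneg.mp h2

variable {H : Type*} [NormedAddCommGroup H] [InnerProductSpace ℂ H] [CompleteSpace H]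

noncomputable def gapFun (δ : ℝ) : ℝ → ℝ := fun x => max 0 ((x - (1-δ))/δ)

@[fun_prop]
lemma gapFun_cont (δ : ℝ) : Continuous (gapFun δ) := by
  unfold gapFun; fun_prop

lemma gapFun_one {δ : ℝ} (hδ : 0 < δ) : gapFun δ 1 = 1 := by
  simp only [gapFun]
  rw [show (1 - (1-δ))/δ = 1 by field_simp; ring]
  simp

variable {A : H →L[ℂ] H} {δ : ℝ}

lemma gap_cases (hδ : 0 < δ)
    (hspec : ∀ x ∈ spectrum ℝ A, x ∈ Set.Icc (0:ℝ) 1 ∧ x ∉ Set.Ioo (1-δ) 1) :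
    ∀ x ∈ spectrum ℝ A, (gapFun δ x = 0 ∧ 0 ≤ x ∧ x ≤ 1 - δ) ∨ (x = 1 ∧ gapFun δ x = 1) := by
  intro x hx
  obtain ⟨⟨h0, h1⟩, hgap⟩ := hspec x hx
  rcases le_or_gt x (1-δ) with h | h
  · left
    refine ⟨?_, h0, h⟩
    simp only [gapFun, max_eq_left_iff]
    apply div_nonpos_of_nonpos_of_nonneg <;> linarith
  · right
    have hx1 : x = 1 := by
      by_contra hne
      exact hgap ⟨h, lt_of_le_of_ne h1 hne⟩
    exact ⟨hx1, by rw [hx1]; exact gapFun_one hδ⟩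

noncomputable def gapProj (δ : ℝ) (A : H →L[ℂ] H) : H →L[ℂ] H := cfc (gapFun δ) A

lemma gapProj_sa : IsSelfAdjoint (gapProj δ A) := cfc_predicate _ A

section Q
variable (hδ : 0 < δ)
    (hspec : ∀ x ∈ spectrum ℝ A, x ∈ Set.Icc (0:ℝ) 1 ∧ x ∉ Set.Ioo (1-δ) 1)

include hδ hspec

lemma gapProj_idem : gapProj δ A * gapProj δ A = gapProj δ A := by
  unfold gapProj
  rw [← cfc_mul _ _ A]
  apply cfc_congr
  intro x hx
  rcases gap_cases hδ hspec x hx with ⟨h, -, -⟩ | ⟨-, h⟩ <;> simp [h]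

lemma mul_gapProj (hsa : IsSelfAdjoint A) : A * gapProj δ A = gapProj δ A := by
  have h := cfc_mul (fun x : ℝ => x) (gapFun δ) A
  rw [cfc_id' ℝ A] at h
  unfold gapProj
  rw [← h]
  apply cfc_congr
  intro x hx
  rcases gap_cases hδ hspec x hx with ⟨h, -, -⟩ | ⟨h1, h⟩
  · simp [h]
  · simp [h, h1]

lemma gapProj_mul (hsa : IsSelfAdjoint A) : gapProj δ A * A = gapProj δ A := by
  have h := cfc_mul (gapFun δ) (fun x : ℝ => x) A
  rw [cfc_id' ℝ A] at h
  unfold gapProj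
  rw [← h]
  apply cfc_congr
  intro x hx
  rcases gap_cases hδ hspec x hx with ⟨h, -, -⟩ | ⟨h1, h⟩
  · simp [h]
  · simp [h, h1]

lemma sq_le_gapProj (hsa : IsSelfAdjoint A) :
    A * A ≤ ((1-δ)^2 : ℝ) • (1 : H →L[ℂ] H) + (2*δ - δ^2) • gapProj δ A := by
  have h1 : A * A = cfc (fun x : ℝ => x * x) A := by
    rw [cfc_mul _ _ A, cfc_id' ℝ A]
  have h2 : cfc (fun x : ℝ => (1-δ)^2 + (2*δ - δ^2) * gapFun δ x) A
      = ((1-δ)^2 : ℝ) • (1 : H →L[ℂ] H) + (2*δ - δ^2) • gapProj δ A := by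
    rw [cfc_const_add _ _ A, cfc_const_mul _ _ A, Algebra.algebraMap_eq_smul_one]
    rfl
  rw [h1, ← h2]
  refine cfc_mono (fun x hx => ?_) (by fun_prop) (by fun_prop)
  rcases gap_cases hδ hspec x hx with ⟨h, h0, hle⟩ | ⟨h1, h⟩
  · rw [h]; nlinarith
  · rw [h1] at h ⊢; rw [h]; nlinarith

lemma one_sub_gapProj_le (hsa : IsSelfAdjoint A) :
    (1 : H →L[ℂ] H) - gapProj δ A ≤ δ⁻¹ • ((1 : H →L[ℂ] H) - A) := by
  have h1 : cfc (fun x : ℝ => 1 - gapFun δ x) A = (1 : H →L[ℂ] H) - gapProj δ A := by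
    rw [cfc_sub _ _ A, cfc_const_one ℝ A]
    rfl
  have h2 : cfc (fun x : ℝ => δ⁻¹ * (1 - x)) A = δ⁻¹ • ((1 : H →L[ℂ] H) - A) := by
    rw [cfc_const_mul _ _ A, cfc_sub _ _ A, cfc_const_one ℝ A, cfc_id' ℝ A]
  rw [← h1, ← h2]
  refine cfc_mono (fun x hx => ?_) (by fun_prop) (by fun_prop)
  rcases gap_cases hδ hspec x hx with ⟨h, h0, hle⟩ | ⟨h1, h⟩
  · rw [h]
    have h9 : δ⁻¹ * δ = 1 := inv_mul_cancel₀ hδ.ne'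
    have h10 : (0:ℝ) < δ⁻¹ := inv_pos.mpr hδ
    nlinarith
  · rw [h1] at h ⊢; rw [h]; simp

lemma gapProj_nonneg : (0:H →L[ℂ] H) ≤ gapProj δ A := by
  apply cfc_nonneg
  intro x hx
  rcases gap_cases hδ hspec x hx with ⟨h, -, -⟩ | ⟨-, h⟩ <;> simp [h]

end Q

section Vec
variable {A Q : H →L[ℂ] H} {δ : ℝ}

lemma clm_mul_apply (B C : H →L[ℂ] H) (ξ : H) : (B * C) ξ = B (C ξ) := rfl

lemma proj_apply_idem (hidem : Q * Q = Q) (ξ : H) : Q (Q ξ) = Q ξ := by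
  have : (Q * Q) ξ = Q ξ := by rw [hidem]
  simpa [clm_mul_apply] using this

lemma proj_perp_inner (hq : IsSelfAdjoint Q) (hidem : Q * Q = Q) (ξ : H) :
    ⟪Q ξ, ξ - Q ξ⟫_ℂ = 0 := by
  have hS := isSelfAdjoint_iff_isSymmetric.mp hq
  have h1 : ⟪Q ξ, Q ξ⟫_ℂ = ⟪Q (Q ξ), ξ⟫_ℂ := (hS (Q ξ) ξ).symm
  rw [proj_apply_idem hidem] at h1
  rw [inner_sub_right, ← h1, sub_self]

lemma proj_perp_inner' (hq : IsSelfAdjoint Q) (hidem : Q * Q = Q) (ξ : H) :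
    ⟪ξ - Q ξ, Q ξ⟫_ℂ = 0 := by
  rw [← inner_conj_symm, proj_perp_inner hq hidem, map_zero]

lemma proj_pythag (hq : IsSelfAdjoint Q) (hidem : Q * Q = Q) (ξ : H) :
    ‖ξ‖^2 = ‖Q ξ‖^2 + ‖ξ - Q ξ‖^2 := by
  have h := proj_perp_inner hq hidem ξ
  have h2 : ‖Q ξ + (ξ - Q ξ)‖^2 = ‖Q ξ‖^2 + ‖ξ - Q ξ‖^2 := by
    rw [@norm_add_sq ℂ _ _ _ _ (Q ξ) (ξ - Q ξ), h]
    simp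
  simpa using h2

lemma proj_norm_le (hq : IsSelfAdjoint Q) (hidem : Q * Q = Q) (ξ : H) :
    ‖Q ξ‖ ≤ ‖ξ‖ ∧ ‖ξ - Q ξ‖ ≤ ‖ξ‖ := by
  have h := proj_pythag hq hidem ξ
  have h1 := norm_nonneg (Q ξ); have h2 := norm_nonneg (ξ - Q ξ); have h3 := norm_nonneg ξ
  constructor <;> nlinarith

lemma proj_perp_normsq (hq : IsSelfAdjoint Q) (hidem : Q * Q = Q) (ξ : H) :
    ‖ξ - Q ξ‖^2 = re ⟪(ξ - Q ξ), ξ⟫_ℂ := by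
  have h3 := proj_perp_inner' hq hidem ξ
  have key : ⟪ξ - Q ξ, ξ - Q ξ⟫_ℂ = ⟪ξ - Q ξ, ξ⟫_ℂ := by
    rw [inner_sub_right, h3, sub_zero]
  rw [← key, inner_self_eq_norm_sq (𝕜 := ℂ)]

end Vec

section VecA
variable {A : H →L[ℂ] H} {δ : ℝ}

lemma re_inner_smul_real (r : ℝ) (B : H →L[ℂ] H) (x : H) :
    re ⟪(r • B) x, x⟫_ℂ = r * re ⟪B x, x⟫_ℂ := by
  rw [ContinuousLinearMap.smul_apply]
  have h : (r • (B x)) = ((r:ℂ) • (B x)) := by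
    simp
  rw [h, inner_smul_left]
  simp

variable (hδ : 0 < δ)
    (hspec : ∀ x ∈ spectrum ℝ A, x ∈ Set.Icc (0:ℝ) 1 ∧ x ∉ Set.Ioo (1-δ) 1)
    (hsa : IsSelfAdjoint A)

include hδ hspec hsa

lemma gap_contract_perp (ξ : H) :
    ‖A (ξ - gapProj δ A ξ)‖^2 ≤ (1-δ)^2 * ‖ξ - gapProj δ A ξ‖^2 := by
  set Q := gapProj δ A with hQ
  set u := ξ - Q ξ with hu
  have hq0 : Q u = 0 := by
    rw [hu, map_sub, proj_apply_idem (gapProj_idem hδ hspec), sub_self]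
  have h := inner_mono_of_le (sq_le_gapProj hδ hspec hsa) u
  have hS := isSelfAdjoint_iff_isSymmetric.mp hsa
  have hL : re ⟪(A * A) u, u⟫_ℂ = ‖A u‖^2 := by
    have e : ⟪A (A u), u⟫_ℂ = ⟪A u, A u⟫_ℂ := hS (A u) u
    rw [clm_mul_apply, e, inner_self_eq_norm_sq (𝕜 := ℂ)]
  have hR : re ⟪(((1-δ)^2 : ℝ) • (1 : H →L[ℂ] H) + (2*δ - δ^2) • Q) u, u⟫_ℂ
      = (1-δ)^2 * ‖u‖^2 := by
    rw [ContinuousLinearMap.add_apply, inner_add_left, map_add,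
      re_inner_smul_real, re_inner_smul_real, hq0]
    simp [inner_self_eq_norm_sq (𝕜 := ℂ)]
    left; rw [← Complex.ofReal_pow, Complex.ofReal_re]
  rw [hL, hR] at h
  exact h

lemma gap_fix {ξ : H} (hfix : A ξ = ξ) : gapProj δ A ξ = ξ := by
  set Q := gapProj δ A with hQ
  have h := inner_mono_of_le (one_sub_gapProj_le hδ hspec hsa) ξ
  have hL : re ⟪((1 : H →L[ℂ] H) - Q) ξ, ξ⟫_ℂ = ‖ξ - Q ξ‖^2 := by
    rw [ContinuousLinearMap.sub_apply, ContinuousLinearMap.one_apply,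
      proj_perp_normsq gapProj_sa (gapProj_idem hδ hspec)]
  have hR : re ⟪(δ⁻¹ • ((1 : H →L[ℂ] H) - A)) ξ, ξ⟫_ℂ = 0 := by
    rw [re_inner_smul_real, ContinuousLinearMap.sub_apply, ContinuousLinearMap.one_apply, hfix]
    simp
  rw [hL, hR] at h
  have : ξ - Q ξ = 0 := by
    have := norm_nonneg (ξ - Q ξ)
    have h2 : ‖ξ - Q ξ‖ = 0 := by nlinarith
    exact norm_eq_zero.mp h2
  rw [← sub_eq_zero]
  rw [← neg_sub]
  simp [this]

end VecA

section Helpers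
variable {A Q : H →L[ℂ] H}

lemma proj_normsq (hq : IsSelfAdjoint Q) (hidem : Q * Q = Q) (ξ : H) :
    ‖Q ξ‖^2 = re ⟪Q ξ, ξ⟫_ℂ := by
  have hS := isSelfAdjoint_iff_isSymmetric.mp hq
  have h1 : ⟪Q ξ, Q ξ⟫_ℂ = ⟪Q (Q ξ), ξ⟫_ℂ := (hS (Q ξ) ξ).symm
  rw [proj_apply_idem hidem] at h1
  rw [← inner_self_eq_norm_sq (𝕜 := ℂ), h1]

lemma comm_of_fix (hA : IsSelfAdjoint A) (hQ : IsSelfAdjoint Q)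
    (h : ∀ y, A (Q y) = Q y) : ∀ y, Q (A y) = Q y := by
  have h1 : A * Q = Q := by
    ext y
    simpa [clm_mul_apply] using h y
  have h2 := congrArg star h1
  rw [star_mul, hA.star_eq, hQ.star_eq] at h2
  intro y
  calc Q (A y) = (Q * A) y := rfl
  _ = Q y := by rw [h2]

lemma step_main (hq : IsSelfAdjoint Q) (hidem : Q * Q = Q)
    (hfix1 : ∀ y, A (Q y) = Q y) (hfix2 : ∀ y, Q (A y) = Q y) (z : H) :
    A z - Q (A z) = A (z - Q z) ∧ ‖A z‖^2 = ‖Q z‖^2 + ‖A (z - Q z)‖^2 := by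
  have hS := isSelfAdjoint_iff_isSymmetric.mp hq
  have hAu : A (z - Q z) = A z - Q z := by rw [map_sub, hfix1]
  have hQAu : Q (A (z - Q z)) = 0 := by
    rw [hfix2, map_sub, proj_apply_idem hidem, sub_self]
  constructor
  · rw [hAu, hfix2]
  · have hdecomp : A z = Q z + A (z - Q z) := by rw [hAu]; abel
    have horth : ⟪Q z, A (z - Q z)⟫_ℂ = 0 := by
      have h := hS (Q z) (A (z - Q z))
      simp only [ContinuousLinearMap.coe_coe] at h
      rw [proj_apply_idem hidem, hQAu, inner_zero_right] at h
      exact h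
    rw [hdecomp, @norm_add_sq ℂ _ _ _ _ (Q z) (A (z - Q z)), horth]
    simp

lemma fix_of_re_inner (hA1 : ∀ x : H, ‖A x‖ ≤ ‖x‖) {x : H}
    (h : ‖x‖^2 ≤ re ⟪A x, x⟫_ℂ) : A x = x := by
  have hexp : ‖A x - x‖^2 = ‖A x‖^2 - 2 * re ⟪A x, x⟫_ℂ + ‖x‖^2 := by
    rw [@norm_sub_sq ℂ _ _ _ _ (A x) x]
  have h1 := hA1 x
  have h2 : ‖A x - x‖^2 ≤ 0 := by nlinarith [norm_nonneg (A x), norm_nonneg x]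
  have h3 : A x - x = 0 := norm_eq_zero.mp (by nlinarith [norm_nonneg (A x - x)])
  rw [sub_eq_zero] at h3
  exact h3

end Helpers

end PaszkiewiczHelpers

open ContinuousLinearMap RCLike

set_option maxHeartbeats 2000000 in
/-- A decreasing sequence of positive contractions with uniform spectral gap at `1`
satisfies the generalized Paszkiewicz conjecture: `S_n^σ ξ → P ξ` for every proper `σ`. -/
theorem generalized_paszkiewicz_of_uniform_spectral_gap
    {H : Type*} [NormedAddCommGroup H] [InnerProductSpace ℂ H] [CompleteSpace H]
    (T : ℕ → H →L[ℂ] H)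
    (hpos : ∀ n, ∀ ξ : H, 0 ≤ ⟪(T n) ξ, ξ⟫_ℂ)
    (hcontr : ∀ n, ‖T n‖ ≤ 1)
    (hdec : ∀ n, ∀ ξ : H, ⟪(T (n + 1)) ξ, ξ⟫_ℂ ≤ ⟪(T n) ξ, ξ⟫_ℂ)
    (Tlim : H →L[ℂ] H)
    (hTlim : ∀ ξ : H, Tendsto (fun n => (T n) ξ) atTop (𝓝 (Tlim ξ)))
    (P : H →L[ℂ] H)
    (hPmem : ∀ ξ : H, Tlim (P ξ) = P ξ)
    (hPorth : ∀ ξ η : H, Tlim η = η → ⟪ξ - P ξ, η⟫_ℂ = 0)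
    (hgap : ∃ δ ∈ Set.Ioo (0 : ℝ) 1, ∃ N : ℕ, ∀ n ≥ N,
      ∀ x : ℝ, x ∈ Set.Ioo (1 - δ) 1 → (x : ℂ) ∉ spectrum ℂ (T n)) :
    ∀ σ : ℕ → ℕ, (∀ k, (σ ⁻¹' {k}).Finite) →
      ∀ ξ : H, Tendsto (fun n => prodSeq T σ n ξ) atTop (𝓝 (P ξ)) := by
  obtain ⟨δ, ⟨hδ0, hδ1⟩, N, hgapN⟩ := hgap
  intro σ hσ ξ0
  rcases subsingleton_or_nontrivial H with hsub | hNT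
  · have he : ∀ n, prodSeq T σ n ξ0 = P ξ0 := fun n => Subsingleton.elim _ _
    simpa [he] using (tendsto_const_nhds : Tendsto (fun _ : ℕ => P ξ0) atTop (𝓝 (P ξ0)))
  -- basic operator facts
  have hsa : ∀ n, IsSelfAdjoint (T n) := fun n =>
    ((nonneg_iff_isPositive _).mp (nonneg_of_inner _ (hpos n))).isSelfAdjoint
  have hcontr' : ∀ n (x : H), ‖T n x‖ ≤ ‖x‖ := by
    intro n x
    calc ‖T n x‖ ≤ ‖T n‖ * ‖x‖ := (T n).le_opNorm x
    _ ≤ ‖x‖ := by nlinarith [hcontr n, opNorm_nonneg (T n), norm_nonneg x]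
  have hspec : ∀ n, N ≤ n → ∀ x ∈ spectrum ℝ (T n),
      x ∈ Set.Icc (0:ℝ) 1 ∧ x ∉ Set.Ioo (1-δ) 1 := by
    intro n hn x hx
    refine ⟨⟨spectrum_nonneg_of_nonneg (nonneg_of_inner _ (hpos n)) hx, ?_⟩,
      fun hmem => hgapN n hn x hmem (mem_spectrum_complex _ x hx)⟩
    have h2 := spectrum.norm_le_norm_of_mem hx
    rw [Real.norm_eq_abs] at h2
    linarith [le_abs_self x, hcontr n]
  -- monotonicity of the quadratic forms
  have hmono : ∀ k m, k ≤ m → ∀ x : H, re ⟪T m x, x⟫_ℂ ≤ re ⟪T k x, x⟫_ℂ := by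
    intro k m hkm x
    induction m, hkm using Nat.le_induction with
    | base => exact le_refl _
    | succ m hm ih =>
      have h1 : re ⟪T (m+1) x, x⟫_ℂ ≤ re ⟪T m x, x⟫_ℂ := (Complex.le_def.mp (hdec m x)).1
      linarith
  have hfixmono : ∀ k m, k ≤ m → ∀ x : H, T m x = x → T k x = x := by
    intro k m hkm x hx
    apply fix_of_re_inner (hcontr' k)
    have h1 : re ⟪T m x, x⟫_ℂ = ‖x‖^2 := by
      rw [hx, inner_self_eq_norm_sq (𝕜 := ℂ)]
    have := hmono k m hkm x
    linarith
  have hfixlim : ∀ k (x : H), Tlim x = x → T k x = x := by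
    intro k x hx
    apply fix_of_re_inner (hcontr' k)
    have h1 : Tendsto (fun m => re ⟪T m x, x⟫_ℂ) atTop (𝓝 (re ⟪Tlim x, x⟫_ℂ)) := by
      apply (RCLike.continuous_re.tendsto _).comp
      exact (hTlim x).inner tendsto_const_nhds
    have h2 : re ⟪Tlim x, x⟫_ℂ ≤ re ⟪T k x, x⟫_ℂ := by
      apply le_of_tendsto h1
      filter_upwards [eventually_ge_atTop k] with m hm
      exact hmono k m hm x
    rw [hx, inner_self_eq_norm_sq (𝕜 := ℂ)] at h2
    exact h2
  -- sigma tends to infinity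
  have hσtop : Tendsto σ atTop atTop := by
    apply tendsto_atTop.mpr
    intro K
    rw [← Nat.cofinite_eq_atTop, Filter.eventually_cofinite]
    have hsub2 : {n | ¬ K ≤ σ n} ⊆ ⋃ k ∈ Set.Iio K, σ ⁻¹' {k} := by
      intro n hn
      simp only [Set.mem_setOf_eq, not_le] at hn
      exact Set.mem_biUnion hn rfl
    exact ((Set.Finite.biUnion (Set.finite_Iio K) (fun k _ => hσ k)).subset hsub2)
  -- the sequence
  set η : H := ξ0 - P ξ0 with hη
  set Z : ℕ → H := fun n => prodSeq T σ n η with hZdef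
  have hZsucc : ∀ n, Z (n+1) = T (σ (n+1)) (Z n) := fun n => rfl
  have hZzero : Z 0 = T (σ 0) η := rfl
  have hsplit : ∀ n, prodSeq T σ n ξ0 = P ξ0 + Z n := by
    intro n
    induction n with
    | zero =>
      show T (σ 0) ξ0 = P ξ0 + Z 0
      have : ξ0 = P ξ0 + η := by rw [hη]; abel
      rw [hZzero]
      conv_lhs => rw [this]
      rw [map_add, hfixlim (σ 0) (P ξ0) (hPmem ξ0)]
    | succ n ih =>
      show T (σ (n+1)) (prodSeq T σ n ξ0) = P ξ0 + Z (n+1)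
      rw [ih, map_add, hfixlim (σ (n+1)) (P ξ0) (hPmem ξ0), hZsucc]
  -- squared norms
  set b : ℕ → ℝ := fun n => ‖Z n‖^2 with hbdef
  have hbsucc : ∀ n, b (n+1) ≤ b n := by
    intro n
    have h1 := hcontr' (σ (n+1)) (Z n)
    have h2 : ‖Z (n+1)‖ ≤ ‖Z n‖ := by rw [hZsucc]; exact h1
    have h3 := norm_nonneg (Z (n+1))
    simp only [hbdef]
    nlinarith
  have hbanti : Antitone b := antitone_nat_of_succ_le hbsucc
  have hbbdd : BddBelow (Set.range b) := by
    refine ⟨0, fun x hx => ?_⟩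
    obtain ⟨n, rfl⟩ := hx
    exact sq_nonneg _
  have hbconv : Tendsto b atTop (𝓝 (⨅ n, b n)) := tendsto_atTop_ciInf hbanti hbbdd
  have hdtend : Tendsto (fun n => b n - b (n+1)) atTop (𝓝 0) := by
    have h2 : Tendsto (fun n => b (n+1)) atTop (𝓝 (⨅ n, b n)) :=
      (tendsto_add_atTop_iff_nat 1).mpr hbconv
    simpa using hbconv.sub h2
  have hdnn : ∀ n, 0 ≤ b n - b (n+1) := fun n => by linarith [hbsucc n]
  -- running maximum
  set M : ℕ → ℕ := fun n => (Finset.range (n+1)).sup σ with hMdef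
  have hMσ : ∀ j n, j ≤ n → σ j ≤ M n := fun j n hj =>
    Finset.le_sup (Finset.mem_range.mpr (Nat.lt_succ_of_le hj))
  have hMsucc : ∀ n, M (n+1) = max (σ (n+1)) (M n) := by
    intro n
    simp only [hMdef]
    rw [Finset.range_add_one, Finset.sup_insert]
  have hMge : ∀ n, σ n ≤ M n := fun n => hMσ n n le_rfl
  have hMtop : Tendsto M atTop atTop := tendsto_atTop_mono hMge hσtop
  -- the spectral projections
  set q : ℕ → H →L[ℂ] H := fun m => gapProj δ (T m) with hqdef
  have hq_sa : ∀ m, IsSelfAdjoint (q m) := fun m => gapProj_sa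
  have hq_idem : ∀ m, N ≤ m → q m * q m = q m := fun m hm => gapProj_idem hδ0 (hspec m hm)
  have hq_fix1 : ∀ m, N ≤ m → ∀ k, k ≤ m → ∀ y : H, T k (q m y) = q m y := by
    intro m hm k hk y
    apply hfixmono k m hk
    have h1 : (T m * q m) y = q m y := by rw [mul_gapProj hδ0 (hspec m hm) (hsa m)]
    simpa [clm_mul_apply] using h1
  have hq_fix2 : ∀ m, N ≤ m → ∀ k, k ≤ m → ∀ y : H, q m (T k y) = q m y :=
    fun m hm k hk => comm_of_fix (hsa k) (hq_sa m) (hq_fix1 m hm k hk)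
  have hq_fixpt : ∀ m, N ≤ m → ∀ x : H, T m x = x → q m x = x :=
    fun m hm x hx => gap_fix hδ0 (hspec m hm) (hsa m) hx
  -- the key exact identity
  have hkey : ∀ n m, N ≤ m → (∀ j, j ≤ n → σ j ≤ m) → q m (Z n) = q m η := by
    intro n
    induction n with
    | zero =>
      intro m hm hj
      rw [hZzero]
      exact hq_fix2 m hm (σ 0) (hj 0 le_rfl) η
    | succ n ih =>
      intro m hm hj
      rw [hZsucc, hq_fix2 m hm (σ (n+1)) (hj (n+1) le_rfl)]
      exact ih m hm (fun j hjn => hj j (le_trans hjn (Nat.le_succ n)))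
  -- nested projections applied to η tend to zero
  have hqη : ∀ ε : ℝ, 0 < ε → ∃ m0, N ≤ m0 ∧ ∀ m, m0 ≤ m → ‖q m η‖ ≤ ε := by
    intro ε hε
    set g : ℕ → H := fun i => q (N + i) η with hgdef
    have hidem' : ∀ i, q (N+i) * q (N+i) = q (N+i) := fun i => hq_idem _ (Nat.le_add_right N i)
    have hself : ∀ j, T (N+j) (g j) = g j := fun j =>
      hq_fix1 (N+j) (Nat.le_add_right N j) (N+j) le_rfl η
    have hgfix : ∀ i j, i ≤ j → q (N+i) (g j) = g j := by
      intro i j hij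
      exact hq_fixpt (N+i) (Nat.le_add_right N i) _
        (hfixmono (N+i) (N+j) (by omega) _ (hself j))
    set c : ℕ → ℝ := fun i => ‖g i‖^2 with hcdef
    have hcre : ∀ i, c i = re ⟪g i, η⟫_ℂ := fun i => proj_normsq (hq_sa _) (hidem' i) η
    have hinner : ∀ i j, i ≤ j → re ⟪g i, g j⟫_ℂ = c j := by
      intro i j hij
      have hS := isSelfAdjoint_iff_isSymmetric.mp (hq_sa (N+i))
      have h1 : ⟪q (N+i) η, g j⟫_ℂ = ⟪η, q (N+i) (g j)⟫_ℂ := hS η (g j)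
      rw [hgfix i j hij] at h1
      have h2 : re ⟪g i, g j⟫_ℂ = re ⟪η, g j⟫_ℂ := by rw [hgdef]; rw [h1]
      rw [h2, hcre j]
      exact inner_re_symm (𝕜 := ℂ) η (g j)
    have hdist : ∀ i j, i ≤ j → ‖g i - g j‖^2 = c i - c j := by
      intro i j hij
      rw [@norm_sub_sq ℂ _ _ _ _ (g i) (g j), hinner i j hij]
      simp only [hcdef]
      ring
    have hcanti : Antitone c := by
      apply antitone_nat_of_succ_le
      intro i
      have h1 := hdist i (i+1) (Nat.le_succ i)
      nlinarith [sq_nonneg ‖g i - g (i+1)‖]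
    have hcbdd : BddBelow (Set.range c) := by
      refine ⟨0, fun x hx => ?_⟩
      obtain ⟨i, rfl⟩ := hx
      exact sq_nonneg _
    have hcconv : Tendsto c atTop (𝓝 (⨅ i, c i)) := tendsto_atTop_ciInf hcanti hcbdd
    have hLle : ∀ i, (⨅ i, c i) ≤ c i := fun i => ciInf_le hcbdd i
    have hgC : CauchySeq g := by
      rw [Metric.cauchySeq_iff']
      intro r hr
      obtain ⟨K, hK⟩ := (Metric.tendsto_atTop.mp hcconv) (r^2) (by positivity)
      refine ⟨K, fun j hj => ?_⟩
      have h1 : dist (g j) (g K)^2 = c K - c j := by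
        rw [dist_eq_norm, ← norm_neg, neg_sub]
        exact hdist K j hj
      have h2 := hK K le_rfl
      rw [Real.dist_eq] at h2
      have h3 : c K - (⨅ i, c i) < r^2 := by
        have := hLle K
        have := abs_lt.mp h2
        linarith [this.2]
      have h4 : dist (g j) (g K)^2 < r^2 := by
        rw [h1]
        linarith [hLle j]
      nlinarith [dist_nonneg (x := g j) (y := g K)]
    obtain ⟨z, hz⟩ := cauchySeq_tendsto_of_complete hgC
    have hTz : ∀ k, T k z = z := by
      intro k
      have h1 : Tendsto (fun j => T k (g j)) atTop (𝓝 (T k z)) :=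
        ((T k).continuous.tendsto z).comp hz
      have h2 : ∀ᶠ j in atTop, T k (g j) = g j := by
        filter_upwards [eventually_ge_atTop k] with j hj
        exact hfixmono k (N+j) (by omega) _ (hself j)
      exact tendsto_nhds_unique (h1.congr' (h2.mono fun j hj => hj)) hz
    have hTlimz : Tlim z = z := by
      apply tendsto_nhds_unique (hTlim z)
      simpa [hTz] using (tendsto_const_nhds : Tendsto (fun _ : ℕ => z) atTop (𝓝 z))
    have hηz : ⟪η, z⟫_ℂ = 0 := hPorth ξ0 z hTlimz
    have hczero : Tendsto c atTop (𝓝 0) := by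
      have h1 : Tendsto (fun i => re ⟪g i, η⟫_ℂ) atTop (𝓝 (re ⟪z, η⟫_ℂ)) := by
        apply (RCLike.continuous_re.tendsto _).comp
        exact hz.inner tendsto_const_nhds
      have h2 : re ⟪z, η⟫_ℂ = 0 := by
        rw [← inner_conj_symm, hηz]
        simp
      have h3 : Tendsto c atTop (𝓝 0) := by
        rw [← h2]
        exact h1.congr (fun i => (hcre i).symm)
      exact h3
    obtain ⟨i0, hi0⟩ := (Metric.tendsto_atTop.mp hczero) (ε^2) (by positivity)
    refine ⟨N + i0, Nat.le_add_right _ _, fun m hm => ?_⟩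
    have hm2 : m = N + (m - N) := by omega
    have h5 := hi0 (m - N) (by omega)
    rw [Real.dist_eq, sub_zero] at h5
    have h6 : c (m - N) < ε^2 := lt_of_abs_lt h5
    have h7 : ‖g (m - N)‖^2 < ε^2 := h6
    have h8 : ‖q m η‖ = ‖g (m - N)‖ := by
      show ‖q m η‖ = ‖q (N + (m - N)) η‖
      rw [← hm2]
    rw [h8]
    nlinarith [norm_nonneg (g (m - N))]
  -- step estimates
  have hstep1 : ∀ n, N ≤ M n → σ (n+1) ≤ M n →
      ‖Z (n+1) - q (M n) (Z (n+1))‖ ≤ ‖Z n - q (M n) (Z n)‖ := by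
    intro n hMN hle
    have hs := step_main (hq_sa (M n)) (hq_idem _ hMN)
      (hq_fix1 (M n) hMN (σ (n+1)) hle) (hq_fix2 (M n) hMN (σ (n+1)) hle) (Z n)
    rw [hZsucc, hs.1]
    exact hcontr' _ _
  have hstep2 : ∀ n, N ≤ σ (n+1) →
      (2*δ - δ^2) * ‖Z (n+1) - q (σ (n+1)) (Z (n+1))‖^2 ≤ b n - b (n+1) := by
    intro n hN
    have hs := step_main (hq_sa (σ (n+1))) (hq_idem _ hN)
      (hq_fix1 (σ (n+1)) hN (σ (n+1)) le_rfl) (hq_fix2 (σ (n+1)) hN (σ (n+1)) le_rfl) (Z n)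
    have hgapc : ‖T (σ (n+1)) (Z n - q (σ (n+1)) (Z n))‖^2
        ≤ (1-δ)^2 * ‖Z n - q (σ (n+1)) (Z n)‖^2 :=
      gap_contract_perp hδ0 (hspec (σ (n+1)) hN) (hsa (σ (n+1))) (Z n)
    have hpyth : ‖Z n‖^2 = ‖q (σ (n+1)) (Z n)‖^2 + ‖Z n - q (σ (n+1)) (Z n)‖^2 :=
      proj_pythag (hq_sa (σ (n+1))) (hq_idem _ hN) (Z n)
    have hv : ‖Z (n+1) - q (σ (n+1)) (Z (n+1))‖
        = ‖T (σ (n+1)) (Z n - q (σ (n+1)) (Z n))‖ := by rw [hZsucc, hs.1]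
    have hb1 : b (n+1) = ‖q (σ (n+1)) (Z n)‖^2
        + ‖T (σ (n+1)) (Z n - q (σ (n+1)) (Z n))‖^2 := by
      show ‖Z (n+1)‖^2 = _
      rw [hZsucc]
      exact hs.2
    have hb0 : b n = ‖q (σ (n+1)) (Z n)‖^2 + ‖Z n - q (σ (n+1)) (Z n)‖^2 := hpyth
    rw [hv, hb1, hb0]
    have e1 : (0:ℝ) ≤ 2*δ - δ^2 := by nlinarith
    have hmul := mul_le_mul_of_nonneg_left hgapc e1
    have hUb : (1-δ)^2 * ‖Z n - q (σ (n+1)) (Z n)‖^2 ≤ ‖Z n - q (σ (n+1)) (Z n)‖^2 := by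
      nlinarith [sq_nonneg ‖Z n - q (σ (n+1)) (Z n)‖]
    have hA := mul_le_mul_of_nonneg_left hUb e1
    have hid : ‖Z n - q (σ (n+1)) (Z n)‖^2 - (1-δ)^2 * ‖Z n - q (σ (n+1)) (Z n)‖^2
        = (2*δ-δ^2) * ‖Z n - q (σ (n+1)) (Z n)‖^2 := by ring
    linarith [hgapc, hmul, hA, hid]
  -- the epsilon argument
  rw [Metric.tendsto_atTop]
  intro ε hε
  have hε3 : 0 < ε/3 := by linarith
  obtain ⟨K1, hK1N, hK1⟩ := hqη (ε/3) hε3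
  obtain ⟨K2, hK2⟩ := eventually_atTop.mp (tendsto_atTop.mp hσtop K1)
  obtain ⟨K3', hK3'⟩ := (Metric.tendsto_atTop.mp hdtend) ((2*δ - δ^2) * (ε/3)^2)
    (mul_pos (by nlinarith : (0:ℝ) < 2*δ - δ^2) (by positivity : (0:ℝ) < (ε/3)^2))
  set K3 := max K2 K3' with hK3def
  have hdsmall : ∀ n, K3 ≤ n → b n - b (n+1) ≤ (2*δ-δ^2) * (ε/3)^2 := by
    intro n hn
    have h1 := hK3' n (le_trans (le_max_right _ _) hn)
    rw [Real.dist_eq, sub_zero] at h1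
    exact le_of_lt (lt_of_abs_lt h1)
  have hσK1 : ∀ n, K3 ≤ n → K1 ≤ σ n := fun n hn => hK2 n (le_trans (le_max_left _ _) hn)
  have hMK1 : ∀ n, K3 ≤ n → K1 ≤ M n := fun n hn => le_trans (hσK1 n hn) (hMge n)
  have hMN : ∀ n, K3 ≤ n → N ≤ M n := fun n hn => le_trans hK1N (hMK1 n hn)
  -- a reset time exists beyond K3
  have hreset : ∃ n2, K3 ≤ n2 ∧ M n2 < σ (n2+1) := by
    by_contra hcon
    push_neg at hcon
    have hconst : ∀ n, K3 ≤ n → M n = M K3 := by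
      intro n hn
      induction n, hn using Nat.le_induction with
      | base => rfl
      | succ n hn ih =>
        rw [hMsucc n, ih]
        have h1 := hcon n hn
        rw [ih] at h1
        exact sup_eq_right.mpr h1
    obtain ⟨n, hn1, hn2⟩ := ((tendsto_atTop.mp hMtop (M K3 + 1)).and
      (eventually_ge_atTop K3)).exists
    rw [hconst n hn2] at hn1
    omega
  obtain ⟨n2, hn2K3, hn2r⟩ := hreset
  -- after the reset, the defect stays small
  have hresetbound : ∀ n, K3 ≤ n → M n < σ (n+1) →
      ‖Z (n+1) - q (M (n+1)) (Z (n+1))‖ ≤ ε/3 := by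
    intro n hn hlt
    have hMn1 : M (n+1) = σ (n+1) := by
      rw [hMsucc n]
      exact sup_eq_left.mpr (le_of_lt hlt)
    have hσN : N ≤ σ (n+1) := le_trans hK1N (hσK1 (n+1) (by omega))
    have h2 := hstep2 n hσN
    have h3 := hdsmall n hn
    rw [hMn1]
    have h4 : (2*δ - δ^2) * ‖Z (n+1) - q (σ (n+1)) (Z (n+1))‖^2
        ≤ (2*δ-δ^2) * (ε/3)^2 := le_trans h2 h3
    have h5 : (0:ℝ) < 2*δ - δ^2 := by nlinarith
    have h6 : ‖Z (n+1) - q (σ (n+1)) (Z (n+1))‖^2 ≤ (ε/3)^2 :=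
      le_of_mul_le_mul_left (by linarith [h4]) h5
    nlinarith [norm_nonneg (Z (n+1) - q (σ (n+1)) (Z (n+1)))]
  have hvsmall : ∀ n, n2 + 1 ≤ n → ‖Z n - q (M n) (Z n)‖ ≤ ε/3 := by
    intro n hn
    induction n, hn using Nat.le_induction with
    | base => exact hresetbound n2 hn2K3 hn2r
    | succ n hn ih =>
      have hK3n : K3 ≤ n := by omega
      rcases le_or_gt (σ (n+1)) (M n) with hle | hlt
      · have hMn1 : M (n+1) = M n := by
          rw [hMsucc n]
          exact sup_eq_right.mpr hle
        rw [hMn1]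
        exact le_trans (hstep1 n (hMN n hK3n) hle) ih
      · exact hresetbound n hK3n hlt
  -- conclusion
  refine ⟨n2 + 1, fun n hn => ?_⟩
  have hdist : dist (prodSeq T σ n ξ0) (P ξ0) = ‖Z n‖ := by
    rw [hsplit n, dist_eq_norm]
    simp
  rw [hdist]
  have htri : ‖Z n‖ ≤ ‖q (M n) (Z n)‖ + ‖Z n - q (M n) (Z n)‖ := by
    have h1 : Z n = q (M n) (Z n) + (Z n - q (M n) (Z n)) := by abel
    calc ‖Z n‖ = ‖q (M n) (Z n) + (Z n - q (M n) (Z n))‖ := by rw [← h1]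
    _ ≤ _ := norm_add_le _ _
  have hK3n : K3 ≤ n := by omega
  have hqZ : q (M n) (Z n) = q (M n) η :=
    hkey n (M n) (hMN n hK3n) (fun j hj => hMσ j n hj)
  have hqsmall : ‖q (M n) η‖ ≤ ε/3 := hK1 (M n) (hMK1 n hK3n)
  have hv := hvsmall n hn
  calc ‖Z n‖ ≤ ‖q (M n) (Z n)‖ + ‖Z n - q (M n) (Z n)‖ := htri
  _ = ‖q (M n) η‖ + ‖Z n - q (M n) (Z n)‖ := by rw [hqZ]
  _ ≤ ε/3 + ε/3 := add_le_add hqsmall hv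
  _ < ε := by linarith
end
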